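/- arXiv:1402.2137 — 6 statements merged into one kernel-verified Lean document; each statement's English description precedes it below -/
import Mathlib

section
/- Let D be an Euler directed multigraph and let F be a feedback arc set of D. Then D has a vertex ordering of cutwidth at most 2|F|. -/
lemma exists_cycle_list {V : Type} (r : V → V → Prop) {v : V}
    (h : Relation.TransGen r v v) :
    ∃ cs : List V, (2 ≤ cs.length ∧ cs.Chain' r ∧ cs.head? = cs.getLast?) ∧ cs.dropLast.Nodup := by
  classical
  obtain ⟨w, hvw, hwv⟩ := Relation.TransGen.head'_iff.mp h
  obtain ⟨l, hl, hlast⟩ := List.exists_isChain_cons_of_relationReflTransGen hwv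
  have hex : ∃ n, ∃ cs : List V,
      (2 ≤ cs.length ∧ cs.Chain' r ∧ cs.head? = cs.getLast?) ∧ cs.length = n := by
    refine ⟨_, v :: w :: l, ⟨by simp, List.isChain_cons_cons.mpr ⟨hvw, hl⟩, ?_⟩, rfl⟩
    rw [List.getLast?_eq_getLast (l := v :: w :: l) (by simp), List.getLast_cons_cons, hlast]
    rfl
  obtain ⟨cs, hcs, hlen⟩ := Nat.find_spec hex
  refine ⟨cs, hcs, ?_⟩
  by_contra hnd
  rw [List.nodup_iff_getElem?_ne_getElem?] at hnd
  push_neg at hnd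
  obtain ⟨i, j, hij, hj, hdup⟩ := hnd
  have hdl : cs.dropLast.length = cs.length - 1 := List.length_dropLast (xs := cs)
  have hi' : i < cs.dropLast.length := lt_trans hij hj
  have hjc : j < cs.length := by omega
  have hics : i < cs.length := by omega
  have h1 : (cs[i]'hics) = (cs[j]'hjc) := by
    rw [List.getElem?_eq_getElem hi', List.getElem?_eq_getElem hj] at hdup
    simpa [List.getElem_dropLast] using hdup
  set d : List V := (cs.drop i).take (j - i + 1) with hcs'
  have hlen' : d.length = j - i + 1 := by
    simp only [hcs', List.length_take, List.length_drop]
    omega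
  have hgetc' : ∀ (m : ℕ), m ≤ j - i → d[m]? = cs[i + m]? := by
    intro m hm
    rw [hcs', List.getElem?_take_of_lt (by omega), List.getElem?_drop]
  have hinf : d <:+: cs := (List.take_prefix _ _).isInfix.trans (List.drop_suffix _ _).isInfix
  have hgood : (2 ≤ d.length ∧ d.Chain' r ∧ d.head? = d.getLast?) := by
    refine ⟨by omega, hcs.2.1.infix hinf, ?_⟩
    rw [List.head?_eq_getElem?, List.getLast?_eq_getElem?, hlen']
    have e2 : j - i + 1 - 1 = j - i := by omega
    rw [e2, hgetc' 0 (by omega), hgetc' (j - i) (le_refl _)]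
    have e3 : i + 0 = i := by omega
    have e4 : i + (j - i) = j := by omega
    rw [e3, e4, List.getElem?_eq_getElem hics, List.getElem?_eq_getElem hjc, h1]
  exact Nat.find_min hex (show d.length < Nat.find hex by omega) ⟨d, hgood, rfl⟩


/-!
Statement 1: Let D be an Euler directed multigraph and let F be a feedback arc set of D.
Then D has a vertex ordering of cutwidth at most 2|F|.

A directed multigraph on a finite vertex type `V` is given by its multiplicity function
`μ : V × V → ℕ` (no loops: `μ (v, v) = 0`).  A set of arcs of `D` is a sub-multiset of
its arcs, i.e. a function `F : V × V → ℕ` with `F ≤ μ` pointwise; its size `|F|` is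
`∑ a, F a`.  `F` is a feedback arc set when `D − F` (multiplicity `μ a - F a`) has no
directed cycle.  A vertex ordering is an equivalence `e : V ≃ Fin n`; its cutwidth is the
maximum, over positions `i`, of the number of arcs (counted with multiplicity) with one
endpoint among the first `i` vertices and the other among the remaining ones.
-/

/-- `L` is the arc list of a (possibly empty) closed directed walk in the directed
multigraph with arc multiplicities `μ`. -/
def IsClosedWalkM {V : Type} (μ : V × V → ℕ) (L : List (V × V)) : Prop :=
  (∀ a ∈ L, 0 < μ a) ∧ List.Chain' (fun p q => p.2 = q.1) L ∧
    L.getLast?.map Prod.snd = L.head?.map Prod.fst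

/-- `L` is the arc list of a directed cycle in the directed multigraph with arc
multiplicities `μ`. -/
def IsCycleM {V : Type} (μ : V × V → ℕ) (L : List (V × V)) : Prop :=
  L ≠ [] ∧ IsClosedWalkM μ L ∧ (L.map Prod.fst).Nodup


lemma cycle_of_transGen {V : Type} (g : V × V → ℕ) {v : V}
    (h : Relation.TransGen (fun u w => 0 < g (u, w)) v v) :
    ∃ L : List (V × V), IsCycleM g L := by
  obtain ⟨cs, ⟨hlen2, hchain, hclosed⟩, hnd⟩ := exists_cycle_list _ h
  have hn : 2 ≤ cs.length := hlen2
  have hdl : cs.dropLast.length = cs.length - 1 := by simp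
  have htl : cs.tail.length = cs.length - 1 := by simp
  have hLlen : (cs.dropLast.zip cs.tail).length = cs.length - 1 := by
    rw [List.length_zip, hdl, htl, min_self]
  have hget : ∀ (i : ℕ) (hi : i < (cs.dropLast.zip cs.tail).length),
      (cs.dropLast.zip cs.tail)[i]'hi = (cs[i]'(by omega), cs[i+1]'(by omega)) := by
    intro i hi
    simp only [List.getElem_zip, List.getElem_dropLast, List.getElem_tail]
  have hchain' := List.isChain_iff_getElem.mp hchain
  have hc0 : cs[0]'(by omega) = cs[cs.length-1]'(by omega) := by
    rw [List.head?_eq_getElem?, List.getLast?_eq_getElem?,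
      List.getElem?_eq_getElem (show 0 < cs.length by omega),
      List.getElem?_eq_getElem (show cs.length - 1 < cs.length by omega)] at hclosed
    exact Option.some.inj hclosed
  refine ⟨cs.dropLast.zip cs.tail, ?_, ⟨?_, ?_, ?_⟩, ?_⟩
  · intro hnil
    rw [hnil] at hLlen
    simp at hLlen
    omega
  · intro a ha
    obtain ⟨i, hi, rfl⟩ := List.mem_iff_getElem.mp ha
    rw [hget i hi]
    exact hchain' i (by omega)
  · refine List.isChain_iff_getElem.mpr ?_
    intro i hi
    simp only [List.get_eq_getElem, hget i (by omega), hget (i+1) (by omega)]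
  · have hLlast : (cs.dropLast.zip cs.tail).getLast?
        = some ((cs.dropLast.zip cs.tail)[cs.length-2]'(by omega)) := by
      rw [List.getLast?_eq_getElem?]
      have h2 : (cs.dropLast.zip cs.tail).length - 1 = cs.length - 2 := by omega
      rw [h2, List.getElem?_eq_getElem (by omega)]
    have hLhead : (cs.dropLast.zip cs.tail).head?
        = some ((cs.dropLast.zip cs.tail)[0]'(by omega)) := by
      rw [List.head?_eq_getElem?, List.getElem?_eq_getElem (by omega)]
    rw [hLlast, hLhead, hget (cs.length-2) (by omega), hget 0 (by omega)]
    simp only [Option.map_some]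
    congr 1
    rw [show (cs[cs.length-2+1]'(by omega) : V) = cs[cs.length-1]'(by omega) by congr 1; omega]
    exact hc0.symm
  · rw [List.map_fst_zip (l₁ := cs.dropLast) (l₂ := cs.tail) (by rw [hdl, htl])]
    exact hnd

/-- In-degree of a vertex in a directed multigraph (arcs counted with multiplicity). -/
def minDeg {V : Type} [Fintype V] (μ : V × V → ℕ) (v : V) : ℕ := ∑ u, μ (u, v)

/-- Out-degree of a vertex in a directed multigraph (arcs counted with multiplicity). -/
def moutDeg {V : Type} [Fintype V] (μ : V × V → ℕ) (v : V) : ℕ := ∑ u, μ (v, u)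

/-- A directed multigraph is Euler if it has no loops, its underlying undirected graph is
connected and every vertex is balanced. -/
def IsEulerM {V : Type} [Fintype V] (μ : V × V → ℕ) : Prop :=
  (∀ v, μ (v, v) = 0) ∧ (SimpleGraph.fromRel (fun u v => 0 < μ (u, v))).Connected ∧
    ∀ v, minDeg μ v = moutDeg μ v

theorem stmt1 {V : Type} [Fintype V] [DecidableEq V] (μ : V × V → ℕ)
    (hEuler : IsEulerM μ)
    (F : V × V → ℕ) (hFsub : ∀ a, F a ≤ μ a)
    (hFfeedback : ∀ L : List (V × V), ¬ IsCycleM (fun a => μ a - F a) L) :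
    ∃ e : V ≃ Fin (Fintype.card V), ∀ i : ℕ,
      (∑ a ∈ Finset.univ.filter (fun a : V × V =>
          (((e a.1 : ℕ) < i ∧ i ≤ (e a.2 : ℕ)) ∨ ((e a.2 : ℕ) < i ∧ i ≤ (e a.1 : ℕ)))),
        μ a) ≤ 2 * ∑ a : V × V, F a := by
  classical
  set r : V → V → Prop := fun u w => 0 < μ (u, w) - F (u, w) with hr
  have hnoloop : ∀ v : V, ¬ Relation.TransGen r v v := by
    intro v hv
    obtain ⟨L, hLcyc⟩ := cycle_of_transGen (fun a => μ a - F a) hv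
    exact hFfeedback L hLcyc
  set le : V → V → Prop := fun u w => u = w ∨ Relation.TransGen r u w with hle
  haveI hpo : IsPartialOrder V le := by
    refine { refl := fun a => Or.inl rfl, trans := ?_, antisymm := ?_ }
    · rintro a b c (rfl | hab) (rfl | hbc)
      · exact Or.inl rfl
      · exact Or.inr hbc
      · exact Or.inr hab
      · exact Or.inr (hab.trans hbc)
    · rintro a b (rfl | hab) (h | hba)
      · rfl
      · rfl
      · exact h.symm
      · exact absurd (hab.trans hba) (hnoloop a)
  obtain ⟨s, hs, hles⟩ := extend_partialOrder le
  haveI := hs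
  letI : LinearOrder V :=
    { le := s
      le_refl := fun a => refl_of s a
      le_trans := fun a b c => trans_of s
      le_antisymm := fun a b => antisymm_of s
      le_total := fun a b => total_of s a b
      toDecidableLE := fun a b => Classical.dec _ }
  let e' : V ≃o Fin (Fintype.card V) := (monoEquivOfFin V rfl).symm
  refine ⟨e'.toEquiv, ?_⟩
  have hkey : ∀ a : V × V, 0 < μ a - F a → (e' a.1 : ℕ) < (e' a.2 : ℕ) := by
    intro a ha
    have hra : r a.1 a.2 := by rw [hr]; simpa using ha
    have htg : Relation.TransGen r a.1 a.2 := Relation.TransGen.single hra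
    have hne : a.1 ≠ a.2 := by
      intro hEq
      rw [hEq] at htg
      exact hnoloop a.2 htg
    have hltv : a.1 < a.2 := by
      have hsa : s a.1 a.2 := hles _ _ (Or.inr htg)
      exact lt_of_le_of_ne hsa hne
    exact e'.lt_iff_lt.mpr hltv
  intro i
  set p1 : V × V → Prop := fun a => (e' a.1 : ℕ) < i ∧ i ≤ (e' a.2 : ℕ) with hp1
  set p2 : V × V → Prop := fun a => (e' a.2 : ℕ) < i ∧ i ≤ (e' a.1 : ℕ) with hp2
  have hsplitgoal :
      (∑ a ∈ Finset.univ.filter (fun a : V × V => p1 a ∨ p2 a), μ a)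
        = (∑ a : V × V, if p1 a then μ a else 0) + (∑ a : V × V, if p2 a then μ a else 0) := by
    rw [Finset.sum_filter, ← Finset.sum_add_distrib]
    refine Finset.sum_congr rfl fun a _ => ?_
    simp only [hp1, hp2]
    split_ifs <;> omega
  have hout : (∑ a : V × V, if (e' a.1 : ℕ) < i then μ a else 0)
      = ∑ x : V, if (e' x : ℕ) < i then moutDeg μ x else 0 := by
    rw [Fintype.sum_prod_type]
    refine Finset.sum_congr rfl fun x _ => ?_
    by_cases h : (e' x : ℕ) < i <;> simp [h, moutDeg]
  have hin : (∑ a : V × V, if (e' a.2 : ℕ) < i then μ a else 0)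
      = ∑ y : V, if (e' y : ℕ) < i then minDeg μ y else 0 := by
    rw [Fintype.sum_prod_type_right]
    refine Finset.sum_congr rfl fun y _ => ?_
    by_cases h : (e' y : ℕ) < i <;> simp [h, minDeg]
  have hbal : (∑ a : V × V, if (e' a.1 : ℕ) < i then μ a else 0)
      = ∑ a : V × V, if (e' a.2 : ℕ) < i then μ a else 0 := by
    rw [hout, hin]
    refine Finset.sum_congr rfl fun x _ => ?_
    rw [hEuler.2.2 x]
  have hsplit1 : (∑ a : V × V, if (e' a.1 : ℕ) < i then μ a else 0)
      = (∑ a : V × V, if (e' a.1 : ℕ) < i ∧ (e' a.2 : ℕ) < i then μ a else 0)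
        + (∑ a : V × V, if p1 a then μ a else 0) := by
    rw [← Finset.sum_add_distrib]
    refine Finset.sum_congr rfl fun a _ => ?_
    simp only [hp1]
    split_ifs <;> omega
  have hsplit2 : (∑ a : V × V, if (e' a.2 : ℕ) < i then μ a else 0)
      = (∑ a : V × V, if (e' a.1 : ℕ) < i ∧ (e' a.2 : ℕ) < i then μ a else 0)
        + (∑ a : V × V, if p2 a then μ a else 0) := by
    rw [← Finset.sum_add_distrib]
    refine Finset.sum_congr rfl fun a _ => ?_
    simp only [hp2]
    split_ifs <;> omega
  have heq12 : (∑ a : V × V, if p1 a then μ a else 0) = ∑ a : V × V, if p2 a then μ a else 0 := by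
    have hb := hbal
    rw [hsplit1, hsplit2] at hb
    omega
  have hbwd : (∑ a : V × V, if p2 a then μ a else 0) ≤ ∑ a : V × V, F a := by
    refine Finset.sum_le_sum fun a _ => ?_
    by_cases h2 : p2 a
    · rw [if_pos h2]
      by_contra hgt
      push_neg at hgt
      have hpos : 0 < μ a - F a := by have := hFsub a; omega
      have hk := hkey a hpos
      have h2' : (e' a.2 : ℕ) < i ∧ i ≤ (e' a.1 : ℕ) := by rw [hp2] at h2; exact h2
      omega
    · rw [if_neg h2]
      exact Nat.zero_le _
  calc (∑ a ∈ Finset.univ.filter (fun a : V × V => p1 a ∨ p2 a), μ a)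
      = (∑ a : V × V, if p1 a then μ a else 0) + (∑ a : V × V, if p2 a then μ a else 0) :=
        hsplitgoal
    _ ≤ 2 * ∑ a : V × V, F a := by omega
end

section
/- Let G be a connected digraph with nonnegative integer arc weights, let T be an optimal DCPP solution on G, and suppose that the directed multigraph G_T contains k pairwise arc-disjoint directed cycles. Then there exists a k-DCPP solution on G whose weight equals the weight of T; consequently, the minimum weight of a k-DCPP solution on G equals the minimum weight of a DCPP solution on G. -/
/-!
Statement 5: Let G be a connected digraph with nonnegative integer arc weights, let T be
an optimal DCPP solution on G, and suppose that the directed multigraph G_T (in which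
each arc of G has multiplicity equal to the number of times T traverses it) contains
k ≥ 1 pairwise arc-disjoint directed cycles.  Then there exists a k-DCPP solution on G
whose weight equals the weight of T; consequently, the minimum weight of a k-DCPP
solution equals the minimum weight of a DCPP solution (namely, the weight of T).
-/

/-- `L` is the arc list of a (possibly empty) closed directed walk in the digraph
with arc set `A`. -/
def IsClosedWalk {V : Type} (A : Finset (V × V)) (L : List (V × V)) : Prop :=
  (∀ a ∈ L, a ∈ A) ∧ List.Chain' (fun p q => p.2 = q.1) L ∧
    L.getLast?.map Prod.snd = L.head?.map Prod.fst

/-- The underlying undirected (simple) graph of a digraph. -/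
def UGraph {V : Type} (A : Finset (V × V)) : SimpleGraph V :=
  SimpleGraph.fromRel (fun u v => (u, v) ∈ A)

/-- Weight of a walk: sum of the weights of all traversed arcs, counted with
multiplicity. -/
def walkWeight {V : Type} (ω : V × V → ℕ) (L : List (V × V)) : ℕ := (L.map ω).sum

/-- A DCPP solution: a closed directed walk traversing every arc at least once. -/
def IsDCPP {V : Type} (A : Finset (V × V)) (L : List (V × V)) : Prop :=
  IsClosedWalk A L ∧ ∀ a ∈ A, a ∈ L

/-- A k-DCPP solution: `k` non-empty closed directed walks jointly traversing every
arc at least once. -/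
def IsKDCPP {V : Type} (A : Finset (V × V)) (k : ℕ) (W : Fin k → List (V × V)) : Prop :=
  (∀ i, W i ≠ [] ∧ IsClosedWalk A (W i)) ∧ ∀ a ∈ A, ∃ i, a ∈ W i

/-- Total weight of a k-tuple of walks. -/
def kWalkWeight {V : Type} (ω : V × V → ℕ) {k : ℕ} (W : Fin k → List (V × V)) : ℕ :=
  ∑ i, walkWeight ω (W i)


section Helpers
set_option linter.unusedSectionVars false
set_option maxHeartbeats 1000000
variable {V : Type} [DecidableEq V]


def CChain (L : List (V × V)) : Prop :=
  List.Chain' (fun p q => p.2 = q.1) L ∧ L.getLast?.map Prod.snd = L.head?.map Prod.fst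

lemma cchain_last_head {L : List (V × V)} (hc : CChain L) (h : L ≠ []) :
    (L.getLast h).2 = (L.head h).1 := by
  have := hc.2
  rw [List.getLast?_eq_getLast h, List.head?_eq_head h] at this
  simpa using this

lemma flow_count (v : V) : ∀ (L : List (V × V)) (h : L ≠ []),
    List.Chain' (fun p q : V × V => p.2 = q.1) L →
    Multiset.countP (fun a : V × V => a.1 = v) (↑L) + (if (L.getLast h).2 = v then 1 else 0)
      = Multiset.countP (fun a : V × V => a.2 = v) (↑L) + (if (L.head h).1 = v then 1 else 0)
  | [], h, _ => absurd rfl h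
  | [a], _, _ => by
      simp only [List.getLast, List.head]
      rw [show ((↑[a] : Multiset (V × V))) = a ::ₘ 0 from rfl]
      simp only [Multiset.countP_cons, Multiset.countP_zero]
      split_ifs <;> simp_all
  | a :: b :: l, _, hch => by
      have hne : (b :: l) ≠ [] := by simp
      have ih := flow_count v (b :: l) hne hch.tail
      have hab : a.2 = b.1 := List.isChain_cons_cons.mp hch |>.1
      have hcoe : ((↑(a :: b :: l) : Multiset (V × V))) = a ::ₘ ↑(b :: l) := rfl
      rw [hcoe, Multiset.countP_cons, Multiset.countP_cons]
      have hlast : (a :: b :: l).getLast (by simp) = (b :: l).getLast hne :=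
        List.getLast_cons hne
      rw [show (a :: b :: l).head (by simp) = a from rfl, hlast]
      have hh : (b :: l).head hne = b := rfl
      rw [hh] at ih
      by_cases h1 : b.1 = v
      · have h2 : a.2 = v := hab ▸ h1
        simp only [h1, h2, if_pos] at ih ⊢
        omega
      · have h2 : ¬ a.2 = v := fun hx => h1 (hab ▸ hx)
        simp only [h1, h2, if_neg, not_false_iff] at ih ⊢
        omega

def Bal (M : Multiset (V × V)) : Prop :=
  ∀ v : V, Multiset.countP (fun a : V × V => a.1 = v) M
    = Multiset.countP (fun a : V × V => a.2 = v) M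

lemma cchain_balanced {L : List (V × V)} (hc : CChain L) : Bal (↑L : Multiset (V × V)) := by
  intro v
  rcases eq_or_ne L [] with rfl | h
  · rfl
  · have := flow_count v L h hc.1
    rw [cchain_last_head hc h] at this
    omega

lemma countP_sub (p : V × V → Prop) [DecidablePred p] {M N : Multiset (V × V)} (h : N ≤ M) :
    Multiset.countP p (M - N) = Multiset.countP p M - Multiset.countP p N := by
  obtain ⟨R, rfl⟩ := Multiset.le_iff_exists_add.mp h
  rw [add_tsub_cancel_left, Multiset.countP_add]
  omega

lemma bal_sub {M N : Multiset (V × V)} (hM : Bal M) (hN : Bal N) (h : N ≤ M) :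
    Bal (M - N) := by
  intro v
  rw [countP_sub _ h, countP_sub _ h, hM v, hN v]

lemma bal_add {M N : Multiset (V × V)} (hM : Bal M) (hN : Bal N) : Bal (M + N) := by
  intro v; rw [Multiset.countP_add, Multiset.countP_add, hM v, hN v]

lemma bal_zero : Bal (0 : Multiset (V × V)) := fun _ => rfl

lemma extract_closed (M : Multiset (V × V)) (hbal : Bal M) (hne : M ≠ 0) :
    ∃ L : List (V × V), L ≠ [] ∧ CChain L ∧ (↑L : Multiset (V × V)) ≤ M := by
  obtain ⟨a, ha⟩ := Multiset.exists_mem_of_ne_zero hne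
  suffices h : ∀ n (P : List (V × V)) (hP : P ≠ []),
      List.Chain' (fun p q : V × V => p.2 = q.1) P → (↑P : Multiset (V × V)) ≤ M →
      Multiset.card M - P.length ≤ n →
      ∃ L : List (V × V), L ≠ [] ∧ CChain L ∧ (↑L : Multiset (V × V)) ≤ M by
    refine h (Multiset.card M) [a] (by simp) (List.isChain_singleton a) ?_ (by omega)
    simpa using Multiset.singleton_le.mpr ha
  intro n
  induction n with
  | zero =>
    intro P hP hch hle hcard
    by_cases hcl : (P.getLast hP).2 = (P.head hP).1
    · exact ⟨P, hP, ⟨hch, by rw [List.getLast?_eq_getLast hP, List.head?_eq_head hP]; simp [hcl]⟩, hle⟩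
    · exfalso
      have h1 : 0 < Multiset.countP (fun a : V × V => a.1 = (P.getLast hP).2) (M - ↑P) := by
        have hf := flow_count ((P.getLast hP).2) P hP hch
        have hc2 : ¬ (P.head hP).1 = (P.getLast hP).2 := fun h => hcl h.symm
        rw [if_pos rfl, if_neg hc2, Nat.add_zero] at hf
        have h2 := Multiset.countP_le_of_le (fun a : V × V => a.2 = (P.getLast hP).2) hle
        have h3 := hbal ((P.getLast hP).2)
        rw [countP_sub _ hle]
        
        omega
      obtain ⟨b, hbmem, _⟩ := Multiset.countP_pos.mp h1
      have : (↑P : Multiset (V × V)) + {b} ≤ M := by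
        have h4 : (↑P : Multiset (V × V)) + {b} ≤ ↑P + (M - ↑P) :=
          add_le_add_right (Multiset.singleton_le.mpr hbmem) _
        rwa [add_tsub_cancel_of_le hle] at h4
      have := Multiset.card_le_card this
      simp at this
      omega
  | succ n ih =>
    intro P hP hch hle hcard
    by_cases hcl : (P.getLast hP).2 = (P.head hP).1
    · exact ⟨P, hP, ⟨hch, by rw [List.getLast?_eq_getLast hP, List.head?_eq_head hP]; simp [hcl]⟩, hle⟩
    · have h1 : 0 < Multiset.countP (fun a : V × V => a.1 = (P.getLast hP).2) (M - ↑P) := by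
        have hf := flow_count ((P.getLast hP).2) P hP hch
        have hc2 : ¬ (P.head hP).1 = (P.getLast hP).2 := fun h => hcl h.symm
        rw [if_pos rfl, if_neg hc2, Nat.add_zero] at hf
        have h2 := Multiset.countP_le_of_le (fun a : V × V => a.2 = (P.getLast hP).2) hle
        have h3 := hbal ((P.getLast hP).2)
        rw [countP_sub _ hle]
        omega
      obtain ⟨b, hbmem, hb1⟩ := Multiset.countP_pos.mp h1
      have hble : (↑(P ++ [b]) : Multiset (V × V)) ≤ M := by
        have h4 : (↑P : Multiset (V × V)) + {b} ≤ ↑P + (M - ↑P) :=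
          add_le_add_right (Multiset.singleton_le.mpr hbmem) _
        rw [add_tsub_cancel_of_le hle] at h4
        rw [← Multiset.coe_add, Multiset.coe_singleton]
        exact h4
      have hchb : List.Chain' (fun p q : V × V => p.2 = q.1) (P ++ [b]) := by
        rw [List.Chain', List.isChain_append]
        refine ⟨hch, List.isChain_singleton b, ?_⟩
        intro x hx y hy
        rw [List.getLast?_eq_getLast hP] at hx
        simp at hx hy
        subst hx; subst hy
        exact hb1.symm
      refine ih (P ++ [b]) (by simp) hchb hble ?_
      have hlt := Multiset.card_le_card hble
      simp at hlt
      simp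
      omega

/-- decomposition of a balanced multiset into nonempty closed chains -/
lemma decomp : ∀ (n : ℕ) (M : Multiset (V × V)), Multiset.card M ≤ n → Bal M →
    ∃ Ls : Multiset (List (V × V)), (∀ L ∈ Ls, L ≠ [] ∧ CChain L) ∧
      (Ls.map Multiset.ofList).sum = M := by
  intro n
  induction n with
  | zero =>
    intro M hM _
    have : M = 0 := Multiset.card_eq_zero.mp (Nat.le_zero.mp hM)
    exact ⟨0, by simp, by simp [this]⟩
  | succ n ih =>
    intro M hM hbal
    rcases eq_or_ne M 0 with rfl | hne
    · exact ⟨0, by simp, by simp⟩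
    · obtain ⟨L, hLne, hLcc, hLle⟩ := extract_closed M hbal hne
      have hbal' : Bal (M - (↑L : Multiset (V × V))) := bal_sub hbal (cchain_balanced hLcc) hLle
      have hcard : Multiset.card (M - (↑L : Multiset (V × V))) ≤ n := by
        have h1 := Multiset.card_le_card hLle
        have h2 : Multiset.card (M - (↑L : Multiset (V × V))) = Multiset.card M - L.length := by
          obtain ⟨R, rfl⟩ := Multiset.le_iff_exists_add.mp hLle
          rw [add_tsub_cancel_left]
          simp only [Multiset.card_add, Multiset.coe_card]
          omega
        have h3 : 0 < L.length := List.length_pos_iff.mpr hLne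
        simp at h1
        omega
      obtain ⟨Ls, hLs1, hLs2⟩ := ih (M - (↑L : Multiset (V × V))) hcard hbal'
      refine ⟨L ::ₘ Ls, ?_, ?_⟩
      · intro P hP
        rcases Multiset.mem_cons.mp hP with rfl | hP
        · exact ⟨hLne, hLcc⟩
        · exact hLs1 P hP
      · rw [Multiset.map_cons, Multiset.sum_cons, hLs2, add_tsub_cancel_of_le hLle]
/-- rotation of a closed chain is a closed chain -/
lemma cchain_rotate {l1 l2 : List (V × V)} (h : CChain (l1 ++ l2)) : CChain (l2 ++ l1) := by
  rcases eq_or_ne l2 [] with rfl | h2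
  · simpa using h
  rcases eq_or_ne l1 [] with rfl | h1
  · simpa using h
  obtain ⟨hch, hwrap⟩ := h
  rw [List.Chain', List.isChain_append] at hch
  obtain ⟨hc1, hc2, hj⟩ := hch
  have hlast12 : (l1 ++ l2).getLast? = l2.getLast? := by
    rw [List.getLast?_append, List.getLast?_eq_getLast h2]; rfl
  have hhead12 : (l1 ++ l2).head? = l1.head? := by
    rw [List.head?_append, List.head?_eq_head h1]; rfl
  rw [hlast12, hhead12, List.getLast?_eq_getLast h2, List.head?_eq_head h1] at hwrap
  have hwrap' : (l2.getLast h2).2 = (l1.head h1).1 := Option.some.inj hwrap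
  constructor
  · rw [List.Chain', List.isChain_append]
    refine ⟨hc2, hc1, ?_⟩
    intro x hx y hy
    rw [List.getLast?_eq_getLast h2] at hx
    rw [List.head?_eq_head h1] at hy
    simp at hx hy
    subst hx; subst hy
    exact hwrap'
  · have hlast21 : (l2 ++ l1).getLast? = l1.getLast? := by
      rw [List.getLast?_append, List.getLast?_eq_getLast h1]; rfl
    have hhead21 : (l2 ++ l1).head? = l2.head? := by
      rw [List.head?_append, List.head?_eq_head h2]; rfl
    rw [hlast21, hhead21, List.getLast?_eq_getLast h1, List.head?_eq_head h2]
    have := hj (l1.getLast h1) (by rw [List.getLast?_eq_getLast h1]; rfl)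
      (l2.head h2) (by rw [List.head?_eq_head h2]; rfl)
    show some (l1.getLast h1).2 = some (l2.head h2).1
    rw [this]

/-- rotate a closed chain to start at a given vertex -/
lemma cchain_rotate_to {L : List (V × V)} (h : CChain L) {v : V}
    (hv : v ∈ L.map Prod.fst) :
    ∃ (a : V × V) (r : List (V × V)), a.1 = v ∧ CChain (a :: r) ∧
      (↑(a :: r) : Multiset (V × V)) = (↑L : Multiset (V × V)) := by
  obtain ⟨a, haL, hav⟩ := List.mem_map.mp hv
  obtain ⟨s, t, rfl⟩ := List.append_of_mem haL
  refine ⟨a, t ++ s, hav, ?_, ?_⟩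
  · have := cchain_rotate (l1 := s) (l2 := a :: t) h
    simpa using this
  · have p1 : List.Perm (s ++ a :: t) (a :: (s ++ t)) := List.perm_middle
    have p2 : List.Perm (a :: (t ++ s)) (a :: (s ++ t)) :=
      List.Perm.cons a List.perm_append_comm
    exact Multiset.coe_eq_coe.mpr (p2.trans p1.symm)

/-- splice two closed chains sharing a vertex -/
lemma cchain_splice {P Q : List (V × V)} (hP : CChain P) (hQ : CChain Q)
    (hPne : P ≠ []) (hQne : Q ≠ []) {v : V}
    (hvP : v ∈ P.map Prod.fst) (hvQ : v ∈ Q.map Prod.fst) :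
    ∃ L : List (V × V), L ≠ [] ∧ CChain L ∧
      (↑L : Multiset (V × V)) = (↑P : Multiset (V × V)) + (↑Q : Multiset (V × V)) := by
  obtain ⟨a, p, hav, hPcc, hPms⟩ := cchain_rotate_to hP hvP
  obtain ⟨b, q, hbv, hQcc, hQms⟩ := cchain_rotate_to hQ hvQ
  refine ⟨(a :: p) ++ (b :: q), by simp, ?_, ?_⟩
  · constructor
    · rw [List.Chain', List.isChain_append]
      refine ⟨hPcc.1, hQcc.1, ?_⟩
      intro x hx y hy
      have hlast : ((a :: p).getLast (by simp)).2 = a.1 := by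
        have := hPcc.2
        rw [List.getLast?_eq_getLast (by simp : (a :: p) ≠ []),
          List.head?_eq_head (by simp : (a :: p) ≠ [])] at this
        exact Option.some.inj this
      rw [List.getLast?_eq_getLast (by simp : (a :: p) ≠ [])] at hx
      simp only [List.head?_cons] at hy
      simp at hx hy
      subst hx; subst hy
      rw [hlast, hav, hbv]
    · have h1 : ((a :: p) ++ (b :: q)).getLast? = (b :: q).getLast? := by
        rw [List.getLast?_append, List.getLast?_eq_getLast (l := b :: q) (by simp)]; rfl
      have h2 : ((a :: p) ++ (b :: q)).head? = some a := by
        rw [List.head?_append]; rfl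
      rw [h1, h2, List.getLast?_eq_getLast (l := b :: q) (by simp)]
      have hlastQ : ((b :: q).getLast (by simp)).2 = b.1 := by
        have := hQcc.2
        rw [List.getLast?_eq_getLast (by simp : (b :: q) ≠ []),
          List.head?_eq_head (by simp : (b :: q) ≠ [])] at this
        exact Option.some.inj this
      show some ((b :: q).getLast (by simp)).2 = some a.1
      rw [hlastQ, hbv, hav]
  · have : (↑((a :: p) ++ (b :: q)) : Multiset (V × V)) = ↑(a :: p) + ↑(b :: q) := by
      simp
    rw [this, hPms, hQms]

/-- in a closed chain, every arc's second endpoint is a first endpoint of some arc -/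
lemma cchain_snd_mem_fst {L : List (V × V)} (hc : CChain L) {a : V × V} (ha : a ∈ L) :
    a.2 ∈ L.map Prod.fst := by
  obtain ⟨s, t, rfl⟩ := List.append_of_mem ha
  rcases t with _ | ⟨b, t'⟩
  · -- a is last
    have hne : (s ++ [a] : List (V × V)) ≠ [] := by simp
    have hlast : (s ++ [a]).getLast hne = a := by
      simp [List.getLast_append]
    have := cchain_last_head hc hne
    rw [hlast] at this
    rw [this]
    exact List.mem_map_of_mem (f := Prod.fst) (List.head_mem hne)
  · -- next arc b
    have hch := hc.1
    rw [List.Chain', List.isChain_append] at hch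
    have hab : a.2 = b.1 := by
      have := hch.2.2 -- junction? no: chain' (a :: b :: t')
      have h2 : List.Chain' (fun p q : V × V => p.2 = q.1) (a :: b :: t') := hch.2.1
      exact (List.isChain_cons_cons.mp h2).1
    rw [hab]
    exact List.mem_map_of_mem (f := Prod.fst) (by simp : b ∈ s ++ a :: b :: t')

/-- crossing edge of a walk leaving a set -/
lemma walk_crossing (G : SimpleGraph V) (S : V → Prop) :
    ∀ {u w : V} (_ : G.Walk u w), S u → ¬ S w →
    ∃ x y : V, S x ∧ ¬ S y ∧ G.Adj x y := by
  intro u w p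
  induction p with
  | nil => intro h1 h2; exact absurd h1 h2
  | @cons u' v' w' h p ih =>
    intro h1 h2
    by_cases hS : S v'
    · exact ih hS h2
    · exact ⟨u', v', h1, hS, h⟩

lemma mem_msum {Ms : Multiset (List (V × V))} {a : V × V} :
    a ∈ (Ms.map Multiset.ofList).sum ↔ ∃ P ∈ Ms, a ∈ P := by
  induction Ms using Multiset.induction with
  | empty => simp
  | cons P Ms ih =>
    simp only [Multiset.map_cons, Multiset.sum_cons, Multiset.mem_add, ih,
      Multiset.mem_cons]
    constructor
    · rintro (h | ⟨Q, hQ, hQa⟩)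
      · exact ⟨P, Or.inl rfl, by simpa using h⟩
      · exact ⟨Q, Or.inr hQ, hQa⟩
    · rintro ⟨Q, (rfl | hQ), hQa⟩
      · exact Or.inl (by simpa using hQa)
      · exact Or.inr ⟨Q, hQ, hQa⟩


/-- two pieces of the collection share a vertex -/
lemma share_lemma [Fintype V] {A : Finset (V × V)} (hconn : (UGraph A).Connected)
    {Ms : Multiset (List (V × V))} (h2 : 2 ≤ Multiset.card Ms)
    (hp : ∀ P ∈ Ms, P ≠ [] ∧ CChain P)
    (hcov : ∀ a ∈ A, a ∈ (Ms.map Multiset.ofList).sum)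
    (harcs : ∀ a ∈ (Ms.map Multiset.ofList).sum, a ∈ A) :
    ∃ P ∈ Ms, ∃ Q ∈ Ms.erase P, ∃ v : V, v ∈ P.map Prod.fst ∧ v ∈ Q.map Prod.fst := by
  have hMs0 : Ms ≠ 0 := by
    intro h; rw [h] at h2; simp at h2
  obtain ⟨P, hP⟩ := Multiset.exists_mem_of_ne_zero hMs0
  obtain ⟨hPne, hPcc⟩ := hp P hP
  by_cases hall : ∀ w : V, w ∈ P.map Prod.fst
  · -- P touches every vertex
    have hE : Ms.erase P ≠ 0 := by
      intro h
      have := Multiset.card_erase_of_mem hP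
      rw [h] at this
      simp at this
      omega
    obtain ⟨Q, hQ⟩ := Multiset.exists_mem_of_ne_zero hE
    have hQmem : Q ∈ Ms := Multiset.mem_of_mem_erase hQ
    obtain ⟨hQne, _⟩ := hp Q hQmem
    refine ⟨P, hP, Q, hQ, (Q.head hQne).1, hall _, ?_⟩
    exact List.mem_map_of_mem (f := Prod.fst) (List.head_mem hQne)
  · push_neg at hall
    obtain ⟨w, hw⟩ := hall
    have hu : (P.head hPne).1 ∈ P.map Prod.fst :=
      List.mem_map_of_mem (f := Prod.fst) (List.head_mem hPne)
    obtain ⟨wk⟩ := hconn.preconnected ((P.head hPne).1) w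
    obtain ⟨x, y, hxS, hyS, hadj⟩ :=
      walk_crossing (UGraph A) (fun v => v ∈ P.map Prod.fst) wk hu hw
    rw [UGraph, SimpleGraph.fromRel_adj] at hadj
    obtain ⟨hxy, harc⟩ := hadj
    -- the crossing arc
    have key : ∃ (b : V × V), b ∈ A ∧ (b.1 = x ∨ b.2 = x) ∧ (b.1 = y ∨ b.2 = y) := by
      rcases harc with h | h
      · exact ⟨(x, y), h, Or.inl rfl, Or.inr rfl⟩
      · exact ⟨(y, x), h, Or.inr rfl, Or.inl rfl⟩
    obtain ⟨b, hbA, hbx, hby⟩ := key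
    obtain ⟨Q, hQ, hbQ⟩ := mem_msum.mp (hcov b hbA)
    obtain ⟨hQne, hQcc⟩ := hp Q hQ
    -- b ∉ P since y would be a vertex of P
    have hbP : b ∉ P := by
      intro hbP
      apply hyS
      rcases hby with h | h
      · rw [← h]; exact List.mem_map_of_mem (f := Prod.fst) hbP
      · rw [← h]; exact cchain_snd_mem_fst hPcc hbP
    have hQP : Q ≠ P := fun h => hbP (h ▸ hbQ)
    have hxQ : x ∈ Q.map Prod.fst := by
      rcases hbx with h | h
      · rw [← h]; exact List.mem_map_of_mem (f := Prod.fst) hbQ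
      · rw [← h]; exact cchain_snd_mem_fst hQcc hbQ
    exact ⟨P, hP, Q, (Multiset.mem_erase_of_ne hQP).mpr hQ, x, hxS, hxQ⟩

/-- merging lemma -/
lemma merge_lemma [Fintype V] {A : Finset (V × V)} (hconn : (UGraph A).Connected) :
    ∀ (m : ℕ) (Ms : Multiset (List (V × V))) (n : ℕ), Multiset.card Ms ≤ n + m →
    1 ≤ n → n ≤ Multiset.card Ms →
    (∀ P ∈ Ms, P ≠ [] ∧ CChain P) →
    (∀ a ∈ A, a ∈ (Ms.map Multiset.ofList).sum) →
    (∀ a ∈ (Ms.map Multiset.ofList).sum, a ∈ A) →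
    ∃ Qs : Multiset (List (V × V)), Multiset.card Qs = n ∧
      (∀ Q ∈ Qs, Q ≠ [] ∧ CChain Q) ∧
      (Qs.map Multiset.ofList).sum = (Ms.map Multiset.ofList).sum := by
  intro m
  induction m with
  | zero =>
    intro Ms n hle h1 hn hp _ _
    exact ⟨Ms, by omega, hp, rfl⟩
  | succ m ih =>
    intro Ms n hle h1 hn hp hcov harcs
    rcases eq_or_lt_of_le hn with heq | hlt
    · exact ⟨Ms, heq.symm, hp, rfl⟩
    · -- card Ms ≥ n+1 ≥ 2 : merge two pieces
      have h2 : 2 ≤ Multiset.card Ms := by omega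
      obtain ⟨P, hP, Q, hQ, v, hvP, hvQ⟩ := share_lemma hconn h2 hp hcov harcs
      obtain ⟨hPne, hPcc⟩ := hp P hP
      obtain ⟨hQne, hQcc⟩ := hp Q (Multiset.mem_of_mem_erase hQ)
      obtain ⟨L, hLne, hLcc, hLms⟩ := cchain_splice hPcc hQcc hPne hQne hvP hvQ
      have e1 : Ms = P ::ₘ Ms.erase P := (Multiset.cons_erase hP).symm
      have e2 : Ms.erase P = Q ::ₘ (Ms.erase P).erase Q := (Multiset.cons_erase hQ).symm
      have hsum : (((L ::ₘ ((Ms.erase P).erase Q))).map Multiset.ofList).sum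
          = (Ms.map Multiset.ofList).sum := by
        rw [Multiset.map_cons, Multiset.sum_cons]
        conv_rhs => rw [e1, Multiset.map_cons, Multiset.sum_cons]
        conv_rhs => rw [e2, Multiset.map_cons, Multiset.sum_cons]
        rw [hLms, add_assoc]
      have hcard' : Multiset.card (L ::ₘ ((Ms.erase P).erase Q)) = Multiset.card Ms - 1 := by
        rw [Multiset.card_cons, Multiset.card_erase_of_mem hQ, Multiset.card_erase_of_mem hP]
        simp only [Nat.pred_eq_sub_one]
        omega
      have hpieces : ∀ R ∈ (L ::ₘ ((Ms.erase P).erase Q)), R ≠ [] ∧ CChain R := by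
        intro R hR
        rcases Multiset.mem_cons.mp hR with rfl | hR'
        · exact ⟨hLne, hLcc⟩
        · exact hp R (Multiset.mem_of_mem_erase (Multiset.mem_of_mem_erase hR'))
      obtain ⟨Qs, hq1, hq2, hq3⟩ := ih (L ::ₘ ((Ms.erase P).erase Q)) n (by omega) h1
        (by omega) hpieces (fun a ha => hsum ▸ hcov a ha) (fun a ha => harcs a (hsum ▸ ha))
      exact ⟨Qs, hq1, hq2, hq3.trans hsum⟩

lemma ofFn_msum {k : ℕ} (C : Fin k → List (V × V)) :
    (((↑(List.ofFn C) : Multiset (List (V × V)))).map Multiset.ofList).sum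
      = ∑ i : Fin k, (↑(C i) : Multiset (V × V)) := by
  rw [Multiset.map_coe, Multiset.sum_coe, List.map_ofFn, List.sum_ofFn]
  rfl

end Helpers
theorem stmt5 {V : Type} [Fintype V] [DecidableEq V] (A : Finset (V × V))
    (ω : V × V → ℕ) (hloop : ∀ v : V, (v, v) ∉ A) (hconn : (UGraph A).Connected)
    (k : ℕ) (hk : 1 ≤ k)
    (T : List (V × V)) (hT : IsDCPP A T)
    (hTopt : ∀ T' : List (V × V), IsDCPP A T' → walkWeight ω T ≤ walkWeight ω T')
    -- k pairwise arc-disjoint directed cycles in the multigraph G_T :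
    (C : Fin k → List (V × V)) (hC : ∀ i, IsCycleM (fun a => T.count a) (C i))
    (hdisj : ∀ a : V × V, (∑ i, (C i).count a) ≤ T.count a) :
    ∃ W : Fin k → List (V × V), IsKDCPP A k W ∧
      kWalkWeight ω W = walkWeight ω T ∧
      ∀ W' : Fin k → List (V × V), IsKDCPP A k W' →
        walkWeight ω T ≤ kWalkWeight ω W' := by
  classical
  -- T is a closed chain
  have hTcc : CChain T := ⟨hT.1.2.1, hT.1.2.2⟩
  -- the weight homomorphism
  let φ : Multiset (V × V) →+ ℕ :=
    { toFun := fun M => (M.map ω).sum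
      map_zero' := by simp
      map_add' := by intro M N; simp }
  have hφ : ∀ L : List (V × V), φ (↑L : Multiset (V × V)) = walkWeight ω L := by
    intro L
    show ((Multiset.map ω ↑L)).sum = _
    rw [Multiset.map_coe, Multiset.sum_coe]
    rfl
  have hφQs : ∀ Qs : Multiset (List (V × V)),
      φ ((Qs.map Multiset.ofList).sum) = (Qs.map (walkWeight ω)).sum := by
    intro Qs
    rw [map_multiset_sum, Multiset.map_map]
    refine congrArg Multiset.sum (Multiset.map_congr rfl ?_)
    intro L _
    exact hφ L
  have hcount : ∀ (a : V × V) (L : List (V × V)),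
      Multiset.count a (↑L : Multiset (V × V)) = L.count a := by
    intro a L
    induction L with
    | nil => simp
    | cons b L ih =>
      rw [show ((↑(b :: L) : Multiset (V × V))) = b ::ₘ ↑L from rfl,
        Multiset.count_cons, List.count_cons, ih]
      by_cases h : a = b
      · subst h; simp
      · have hb : ¬ (b = a) := fun hh => h hh.symm
        simp [h, hb]
  -- the multiset of the k cycles
  set SC : Multiset (V × V) := ∑ i : Fin k, (↑(C i) : Multiset (V × V)) with hSC
  have hSCle : SC ≤ (↑T : Multiset (V × V)) := by
    rw [Multiset.le_iff_count]
    intro a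
    rw [hSC, Multiset.count_sum']
    simp only [hcount]
    exact hdisj a
  have hCcc : ∀ i, CChain (C i) := fun i => ⟨(hC i).2.1.2.1, (hC i).2.1.2.2⟩
  have hCne : ∀ i, C i ≠ [] := fun i => (hC i).1
  have hCarcs : ∀ i, ∀ a ∈ C i, a ∈ A := by
    intro i a ha
    have := (hC i).2.1.1 a ha
    exact hT.1.1 a (List.count_pos_iff.mp this)
  have hbalSC : Bal SC := by
    rw [hSC]
    exact Finset.sum_induction _ Bal (fun _ _ => bal_add) bal_zero
      (fun i _ => cchain_balanced (hCcc i))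
  -- the remainder and its decomposition
  obtain ⟨Rs, hRs1, hRs2⟩ := decomp (Multiset.card ((↑T : Multiset (V × V)) - SC))
    ((↑T : Multiset (V × V)) - SC) le_rfl
    (bal_sub (cchain_balanced hTcc) hbalSC hSCle)
  -- the initial collection of pieces
  set Ms : Multiset (List (V × V)) := (↑(List.ofFn C) : Multiset (List (V × V))) + Rs
    with hMs
  have hMsSum : (Ms.map Multiset.ofList).sum = (↑T : Multiset (V × V)) := by
    rw [hMs, Multiset.map_add, Multiset.sum_add, hRs2, ofFn_msum, ← hSC,
      add_tsub_cancel_of_le hSCle]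
  have hMspieces : ∀ P ∈ Ms, P ≠ [] ∧ CChain P := by
    intro P hP
    rw [hMs, Multiset.mem_add] at hP
    rcases hP with hP | hP
    · rw [Multiset.mem_coe, List.mem_ofFn] at hP
      obtain ⟨i, rfl⟩ := hP
      exact ⟨hCne i, hCcc i⟩
    · exact hRs1 P hP
  have hMscov : ∀ a ∈ A, a ∈ (Ms.map Multiset.ofList).sum := by
    intro a ha
    rw [hMsSum]
    exact Multiset.mem_coe.mpr (hT.2 a ha)
  have hMsarcs : ∀ a ∈ (Ms.map Multiset.ofList).sum, a ∈ A := by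
    intro a ha
    rw [hMsSum] at ha
    exact hT.1.1 a (Multiset.mem_coe.mp ha)
  have hMscard : Multiset.card Ms = k + Multiset.card Rs := by
    rw [hMs, Multiset.card_add, Multiset.coe_card, List.length_ofFn]
  -- merge into exactly k walks
  obtain ⟨Qs, hQcard, hQp, hQsum⟩ := merge_lemma hconn (Multiset.card Ms) Ms k
    (by omega) hk (by omega) hMspieces hMscov hMsarcs
  have hQsumT : (Qs.map Multiset.ofList).sum = (↑T : Multiset (V × V)) :=
    hQsum.trans hMsSum
  -- convert to a function
  set l : List (List (V × V)) := Qs.toList with hl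
  have hlen : l.length = k := by rw [hl, Multiset.length_toList, hQcard]
  refine ⟨fun i => l.get (finCongr hlen.symm i), ⟨?_, ?_⟩, ?_, ?_⟩
  · -- each walk nonempty and closed in A
    intro i
    have hmem : l.get (finCongr hlen.symm i) ∈ Qs := by
      rw [← Multiset.mem_toList]
      exact List.get_mem _ _
    obtain ⟨hne, hcc⟩ := hQp _ hmem
    refine ⟨hne, ?_, hcc.1, hcc.2⟩
    intro a ha
    apply hMsarcs
    rw [← hQsum] at *
    exact mem_msum.mpr ⟨_, hmem, ha⟩
  · -- coverage
    intro a ha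
    have : a ∈ (Qs.map Multiset.ofList).sum := by
      rw [hQsumT]
      exact Multiset.mem_coe.mpr (hT.2 a ha)
    obtain ⟨Q, hQ, haQ⟩ := mem_msum.mp this
    rw [← Multiset.mem_toList, ← hl] at hQ
    obtain ⟨j, hj⟩ := List.mem_iff_get.mp hQ
    refine ⟨finCongr hlen j, ?_⟩
    show a ∈ l.get (finCongr hlen.symm (finCongr hlen j))
    have hjj : finCongr hlen.symm (finCongr hlen j) = j := by
      simp [Fin.ext_iff]
    rw [hjj, hj]
    exact haQ
  · -- weight equality
    have h1 : kWalkWeight ω (fun i => l.get (finCongr hlen.symm i))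
        = ∑ j : Fin l.length, walkWeight ω (l.get j) :=
      Equiv.sum_comp (finCongr hlen.symm) (fun j => walkWeight ω (l.get j))
    have h2 : (∑ j : Fin l.length, walkWeight ω (l.get j))
        = (l.map (walkWeight ω)).sum := by
      have : l.map (walkWeight ω) = List.ofFn (fun j => walkWeight ω (l.get j)) := by
        conv_lhs => rw [← List.ofFn_get l]
        rw [List.map_ofFn]
        rfl
      rw [this, List.sum_ofFn]
    have h3 : (l.map (walkWeight ω)).sum = (Qs.map (walkWeight ω)).sum := by
      rw [hl, ← Multiset.coe_toList Qs, Multiset.map_coe, Multiset.sum_coe,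
        Multiset.coe_toList]
    rw [h1, h2, h3, ← hφQs, hQsumT, hφ]
  · -- optimality
    intro W' hW'
    set Ms' : Multiset (List (V × V)) := (↑(List.ofFn W') : Multiset (List (V × V)))
      with hMs'
    have hMs'card : Multiset.card Ms' = k := by
      rw [hMs', Multiset.coe_card, List.length_ofFn]
    have hMs'pieces : ∀ P ∈ Ms', P ≠ [] ∧ CChain P := by
      intro P hP
      rw [hMs', Multiset.mem_coe, List.mem_ofFn] at hP
      obtain ⟨i, rfl⟩ := hP
      exact ⟨(hW'.1 i).1, (hW'.1 i).2.2.1, (hW'.1 i).2.2.2⟩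
    have hMs'arcs : ∀ a ∈ (Ms'.map Multiset.ofList).sum, a ∈ A := by
      intro a ha
      obtain ⟨P, hP, haP⟩ := mem_msum.mp ha
      rw [hMs', Multiset.mem_coe, List.mem_ofFn] at hP
      obtain ⟨i, rfl⟩ := hP
      exact (hW'.1 i).2.1 a haP
    have hMs'cov : ∀ a ∈ A, a ∈ (Ms'.map Multiset.ofList).sum := by
      intro a ha
      obtain ⟨i, hi⟩ := hW'.2 a ha
      refine mem_msum.mpr ⟨W' i, ?_, hi⟩
      rw [hMs', Multiset.mem_coe, List.mem_ofFn]
      exact ⟨i, rfl⟩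
    obtain ⟨Qs', hQ'card, hQ'p, hQ'sum⟩ := merge_lemma hconn (Multiset.card Ms') Ms' 1
      (by omega) le_rfl (by omega) hMs'pieces hMs'cov hMs'arcs
    obtain ⟨L, rfl⟩ := Multiset.card_eq_one.mp hQ'card
    obtain ⟨hLne, hLcc⟩ := hQ'p L (Multiset.mem_singleton_self L)
    have hLsum : (↑L : Multiset (V × V)) = (Ms'.map Multiset.ofList).sum := by
      have : (({L} : Multiset (List (V × V))).map Multiset.ofList).sum
          = (↑L : Multiset (V × V)) := by simp
      rw [← this, hQ'sum]
    have hLdcpp : IsDCPP A L := by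
      refine ⟨⟨?_, hLcc.1, hLcc.2⟩, ?_⟩
      · intro a ha
        exact hMs'arcs a (hLsum ▸ Multiset.mem_coe.mpr ha)
      · intro a ha
        exact Multiset.mem_coe.mp (hLsum ▸ hMs'cov a ha)
    have hwL : walkWeight ω L = kWalkWeight ω W' := by
      have e1 : walkWeight ω L = φ (↑L : Multiset (V × V)) := (hφ L).symm
      have e2 : φ ((Ms'.map Multiset.ofList).sum)
          = ∑ i : Fin k, walkWeight ω (W' i) := by
        rw [hMs', ofFn_msum, map_sum]
        exact Finset.sum_congr rfl (fun i _ => hφ (W' i))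
      rw [e1, hLsum, e2]
      rfl
    calc walkWeight ω T ≤ walkWeight ω L := hTopt L hLdcpp
      _ = kWalkWeight ω W' := hwL
end

section
/- Let k ≥ 1 and let D be an Euler directed multigraph containing k pairwise arc-disjoint directed cycles. Then the arcs of D can be partitioned into k non-empty closed directed walks; that is, there exist k non-empty closed directed walks in D such that every arc occurrence of D is traversed exactly once by exactly one of the walks. -/
section Aux
variable {V : Type}

lemma chain_snd_eq : ∀ (a : V × V) (t : List (V × V)),
    List.Chain' (fun p q => p.2 = q.1) (a :: t) →
    (a :: t).map Prod.snd
      = ((a :: t).map Prod.fst).tail ++ [((a :: t).getLast (by simp)).2] := by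
  intro a t
  induction t generalizing a with
  | nil => intro _; simp
  | cons b t' ih =>
    intro h
    have hab : a.2 = b.1 := (List.isChain_cons_cons.mp h).1
    have ih' := ih b (List.isChain_cons_cons.mp h).2
    simp only [List.map_cons, List.tail_cons] at ih' ⊢
    rw [List.getLast_cons_cons]
    rw [ih']
    simp [hab]

/-- For a closed walk, the list of second coordinates is a rotation of the firsts. -/
lemma closed_snd_perm (L : List (V × V))
    (hch : List.Chain' (fun p q => p.2 = q.1) L)
    (hcl : L.getLast?.map Prod.snd = L.head?.map Prod.fst) :
    (L.map Prod.snd).Perm (L.map Prod.fst) := by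
  cases L with
  | nil => simp
  | cons a t =>
    have heq := chain_snd_eq a t hch
    have hl : ((a :: t).getLast (by simp)).2 = a.1 := by
      have := hcl
      rw [List.getLast?_eq_getLast (by simp)] at this
      simpa using this
    rw [heq, hl]
    simp only [List.map_cons, List.tail_cons]
    exact List.perm_append_singleton a.1 (t.map Prod.fst)

lemma closed_swap {A B : List (V × V)} (h : IsClosedWalkM μ (A ++ B)) :
    IsClosedWalkM μ (B ++ A) := by
  rcases h with ⟨hpos, hch, hcl⟩
  rcases eq_or_ne B [] with rfl | hB
  · exact ⟨fun a ha => hpos a (by simpa using ha), by simpa using hch, by simpa using hcl⟩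
  rcases eq_or_ne A [] with rfl | hA
  · exact ⟨fun a ha => hpos a (by simpa using ha), by simpa using hch, by simpa using hcl⟩
  rw [show @List.Chain' = @List.IsChain from rfl, List.isChain_append] at hch
  obtain ⟨hcA, hcB, hlink⟩ := hch
  have hlastAB : (A ++ B).getLast? = B.getLast? := List.getLast?_append_of_ne_nil _ hB
  have hheadAB : (A ++ B).head? = A.head? := by
    cases A with
    | nil => exact absurd rfl hA
    | cons a t => simp
  rw [hlastAB, hheadAB, List.getLast?_eq_getLast hB, List.head?_eq_head hA] at hcl
  simp only [Option.map_some, Option.some.injEq] at hcl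
  have hlink' : (A.getLast hA).2 = (B.head hB).1 := by
    apply hlink
    · rw [List.getLast?_eq_getLast hA]; simp
    · rw [List.head?_eq_head hB]; simp
  refine ⟨fun a ha => hpos a (by simp only [List.mem_append] at ha ⊢; tauto), ?_, ?_⟩
  · rw [show @List.Chain' = @List.IsChain from rfl, List.isChain_append]
    refine ⟨hcB, hcA, fun x hx y hy => ?_⟩
    rw [List.getLast?_eq_getLast hB] at hx
    rw [List.head?_eq_head hA] at hy
    simp at hx hy
    rw [← hx, ← hy]; exact hcl
  · have h1 : (B ++ A).getLast? = A.getLast? := List.getLast?_append_of_ne_nil _ hA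
    have h2 : (B ++ A).head? = B.head? := by
      cases B with
      | nil => exact absurd rfl hB
      | cons a t => simp
    rw [h1, h2, List.getLast?_eq_getLast hA, List.head?_eq_head hB]
    simp [hlink']

lemma closed_concat {L M : List (V × V)} (hL : IsClosedWalkM μ L) (hM : IsClosedWalkM μ M)
    (hLn : L ≠ []) (hMn : M ≠ [])
    (hsame : (L.head hLn).1 = (M.head hMn).1) : IsClosedWalkM μ (L ++ M) := by
  obtain ⟨pL, cL, clL⟩ := hL
  obtain ⟨pM, cM, clM⟩ := hM
  rw [List.getLast?_eq_getLast hLn, List.head?_eq_head hLn] at clL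
  rw [List.getLast?_eq_getLast hMn, List.head?_eq_head hMn] at clM
  simp only [Option.map_some, Option.some.injEq] at clL clM
  refine ⟨fun a ha => (List.mem_append.mp ha).elim (pL a) (pM a), ?_, ?_⟩
  · rw [show @List.Chain' = @List.IsChain from rfl, List.isChain_append]
    refine ⟨cL, cM, fun x hx y hy => ?_⟩
    rw [List.getLast?_eq_getLast hLn] at hx
    rw [List.head?_eq_head hMn] at hy
    simp at hx hy
    rw [← hx, ← hy, clL, hsame]
  · have h1 : (L ++ M).getLast? = M.getLast? := List.getLast?_append_of_ne_nil _ hMn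
    have h2 : (L ++ M).head? = L.head? := by
      cases L with
      | nil => exact absurd rfl hLn
      | cons a t => simp
    rw [h1, h2, List.getLast?_eq_getLast hMn, List.head?_eq_head hLn]
    simp [clM, hsame]

lemma closed_rotate_to [DecidableEq V] {L : List (V × V)} (hL : IsClosedWalkM μ L) {v : V}
    (hv : v ∈ L.map Prod.fst) :
    ∃ L', IsClosedWalkM μ L' ∧ ∃ hne : L' ≠ [], (L'.head hne).1 = v ∧
      ∀ a, L'.count a = L.count a := by
  obtain ⟨a, haL, hav⟩ := List.mem_map.mp hv
  obtain ⟨s, t, rfl⟩ := List.append_of_mem haL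
  refine ⟨(a :: t) ++ s, closed_swap hL, by simp, by simpa using hav, fun b => ?_⟩
  simp [List.count_append, List.count_cons]
  ring

lemma closed_merge [DecidableEq V] {L M : List (V × V)} (hL : IsClosedWalkM μ L) (hM : IsClosedWalkM μ M)
    {v : V} (hvL : v ∈ L.map Prod.fst) (hvM : v ∈ M.map Prod.fst) :
    ∃ W, IsClosedWalkM μ W ∧ W ≠ [] ∧ ∀ a, W.count a = L.count a + M.count a := by
  obtain ⟨L', hL', hLn, hLh, hLc⟩ := closed_rotate_to hL hvL
  obtain ⟨M', hM', hMn, hMh, hMc⟩ := closed_rotate_to hM hvM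
  refine ⟨L' ++ M', closed_concat hL' hM' hLn hMn (by rw [hLh, hMh]), ?_, fun a => ?_⟩
  · simp [hLn]
  · simp [List.count_append, hLc, hMc]

section WithFintype
variable [Fintype V] [DecidableEq V]

lemma sum_ite_pair (a : V × V) (v : V) :
    (∑ u, if ((u, v) : V × V) = a then (1:ℕ) else 0) = if v = a.2 then 1 else 0 := by
  have h : ∀ u : V, (if ((u, v) : V × V) = a then (1:ℕ) else 0)
      = (if v = a.2 then 1 else 0) * (if u = a.1 then 1 else 0) := by
    intro u
    by_cases h1 : u = a.1 <;> by_cases h2 : v = a.2 <;> simp [Prod.ext_iff, h1, h2]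
  simp only [h, ← Finset.mul_sum]
  rw [Finset.sum_ite_eq' Finset.univ a.1 (fun _ => (1:ℕ))]
  simp

lemma sum_count_snd (L : List (V × V)) (v : V) :
    ∑ u, L.count (u, v) = (L.map Prod.snd).count v := by
  induction L with
  | nil => simp
  | cons a t ih =>
    have h1 : ∀ u, ((a :: t).count (u, v)) = t.count (u, v) + if ((u,v) : V × V) = a then 1 else 0 := by
      intro u; simp only [List.count_cons, beq_iff_eq]
      congr 1
      exact if_congr eq_comm rfl rfl
    have h2 : ((a :: t).map Prod.snd).count v = (t.map Prod.snd).count v + if v = a.2 then 1 else 0 := by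
      simp only [List.map_cons, List.count_cons, beq_iff_eq]
      congr 1
      exact if_congr eq_comm rfl rfl
    simp only [h1, h2, Finset.sum_add_distrib, ih, sum_ite_pair]

lemma sum_ite_pair' (a : V × V) (v : V) :
    (∑ u, if ((v, u) : V × V) = a then (1:ℕ) else 0) = if v = a.1 then 1 else 0 := by
  have h : ∀ u : V, (if ((v, u) : V × V) = a then (1:ℕ) else 0)
      = (if v = a.1 then 1 else 0) * (if u = a.2 then 1 else 0) := by
    intro u
    by_cases h1 : u = a.2 <;> by_cases h2 : v = a.1 <;> simp [Prod.ext_iff, h1, h2]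
  simp only [h, ← Finset.mul_sum]
  rw [Finset.sum_ite_eq' Finset.univ a.2 (fun _ => (1:ℕ))]
  simp

lemma sum_count_fst (L : List (V × V)) (v : V) :
    ∑ u, L.count (v, u) = (L.map Prod.fst).count v := by
  induction L with
  | nil => simp
  | cons a t ih =>
    have h1 : ∀ u, ((a :: t).count (v, u)) = t.count (v, u) + if ((v,u) : V × V) = a then 1 else 0 := by
      intro u; simp only [List.count_cons, beq_iff_eq]
      congr 1
      exact if_congr eq_comm rfl rfl
    have h2 : ((a :: t).map Prod.fst).count v = (t.map Prod.fst).count v + if v = a.1 then 1 else 0 := by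
      simp only [List.map_cons, List.count_cons, beq_iff_eq]
      congr 1
      exact if_congr eq_comm rfl rfl
    simp only [h1, h2, Finset.sum_add_distrib, ih, sum_ite_pair']

lemma closed_count_balanced {L : List (V × V)}
    (hperm : (L.map Prod.snd).Perm (L.map Prod.fst)) (v : V) :
    ∑ u, L.count (u, v) = ∑ u, L.count (v, u) := by
  rw [sum_count_snd, sum_count_fst, hperm.count_eq]

lemma mem_fst_of_closed {μ : V × V → ℕ} {L : List (V × V)}
    (h : IsClosedWalkM μ L) {a : V × V} (ha : a ∈ L) : a.2 ∈ L.map Prod.fst :=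
  (closed_snd_perm L h.2.1 h.2.2).mem_iff.mp (List.mem_map_of_mem (f := Prod.snd) ha)

lemma count_le_one_of_nodup {α : Type} [BEq α] [LawfulBEq α] {l : List α} (h : l.Nodup)
    (a : α) : l.count a ≤ 1 := by
  induction l with
  | nil => simp
  | cons b t ih =>
    rw [List.count_cons]
    rcases List.nodup_cons.mp h with ⟨hb, ht⟩
    by_cases hab : a = b
    · subst hab
      rw [List.count_eq_zero_of_not_mem hb]
      simp
    · have hba : (b == a) = false := by simp [beq_iff_eq]; exact fun h => hab h.symm
      simpa [hba] using ih ht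

lemma exists_cycle (ν : V × V → ℕ) (hbal : ∀ v, minDeg ν v = moutDeg ν v)
    {a0 : V × V} (ha0 : 0 < ν a0) :
    ∃ L : List (V × V), L ≠ [] ∧ (∀ a ∈ L, 0 < ν a) ∧
      List.Chain' (fun p q => p.2 = q.1) L ∧
      L.getLast?.map Prod.snd = L.head?.map Prod.fst ∧ (∀ a, L.count a ≤ 1) := by
  classical
  have hstep : ∀ v, 0 < moutDeg ν v → ∃ u, 0 < ν (v, u) := by
    intro v hv
    by_contra h
    push_neg at h
    simp only [Nat.le_zero] at h
    have : moutDeg ν v = 0 := Finset.sum_eq_zero fun u _ => h u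
    omega
  set f : V → V := fun v => if h : 0 < moutDeg ν v then (hstep v h).choose else v with hf
  have hf1 : ∀ v, 0 < moutDeg ν v → 0 < ν (v, f v) := by
    intro v hv
    simp only [hf, dif_pos hv]
    exact (hstep v hv).choose_spec
  have hf2 : ∀ v, 0 < moutDeg ν v → 0 < moutDeg ν (f v) := by
    intro v hv
    rw [← hbal]
    have : ν (v, f v) ≤ minDeg ν (f v) :=
      Finset.single_le_sum (f := fun u => ν (u, f v)) (fun u _ => Nat.zero_le _)
        (Finset.mem_univ v)
    have := hf1 v hv
    unfold minDeg at *
    omega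
  set g : ℕ → V := fun n => f^[n] a0.1 with hg
  have hgood : ∀ n, 0 < moutDeg ν (g n) := by
    intro n
    induction n with
    | zero =>
      have : ν (a0.1, a0.2) ≤ moutDeg ν a0.1 :=
        Finset.single_le_sum (f := fun u => ν (a0.1, u)) (fun u _ => Nat.zero_le _)
          (Finset.mem_univ a0.2)
      have he : (a0.1, a0.2) = a0 := rfl
      simp only [hg, Function.iterate_zero, id]
      rw [he] at this
      omega
    | succ m ih =>
      have : g (m+1) = f (g m) := Function.iterate_succ_apply' f m a0.1
      rw [this]
      exact hf2 _ ih
  have hgs : ∀ n, g (n+1) = f (g n) := fun n => Function.iterate_succ_apply' f n a0.1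
  have harc : ∀ n, 0 < ν (g n, g (n+1)) := fun n => by rw [hgs]; exact hf1 _ (hgood n)
  -- pigeonhole
  have hcard : Fintype.card V < Fintype.card (Fin (Fintype.card V + 1)) := by simp
  obtain ⟨i, j, hne, hgij⟩ :=
    Fintype.exists_ne_map_eq_of_card_lt (fun i : Fin (Fintype.card V + 1) => g i) hcard
  have hP : ∃ n, ∃ m, m < n ∧ g m = g n := by
    rcases lt_or_gt_of_ne (fun h : (i:ℕ) = j => hne (Fin.ext h)) with h | h
    · exact ⟨j, i, h, hgij⟩
    · exact ⟨i, j, h, hgij.symm⟩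
  set j0 := Nat.find hP with hj0
  obtain ⟨i0, hi0, hgi0⟩ := Nat.find_spec hP
  have hmin : ∀ m, m < j0 → ¬∃ l, l < m ∧ g l = g m := fun m hm => Nat.find_min hP hm
  set n := j0 - i0 with hn
  have hn1 : 1 ≤ n := by omega
  refine ⟨(List.range n).map (fun t => (g (i0 + t), g (i0 + t + 1))), ?_, ?_, ?_, ?_, ?_⟩
  · simp only [ne_eq, List.map_eq_nil_iff, List.range_eq_nil]
    omega
  · intro a ha
    obtain ⟨t, _, rfl⟩ := List.mem_map.mp ha
    exact harc _
  · rw [show @List.Chain' = @List.IsChain from rfl, List.isChain_map]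
    obtain ⟨n', hn'⟩ : ∃ n', n = n' + 1 := ⟨n - 1, by omega⟩
    rw [hn', List.isChain_range_succ]
    intro m _
    show g (i0 + m + 1) = g (i0 + (m + 1))
    rfl
  · obtain ⟨n', hn'⟩ : ∃ n', n = n' + 1 := ⟨n - 1, by omega⟩
    have hlast : ((List.range n).map (fun t => (g (i0 + t), g (i0 + t + 1)))).getLast?
        = some (g (i0 + n'), g (i0 + n' + 1)) := by
      rw [hn', List.range_succ, List.map_append]
      simp only [List.map_cons, List.map_nil]
      exact List.getLast?_concat
    have hhead : ((List.range n).map (fun t => (g (i0 + t), g (i0 + t + 1)))).head?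
        = some (g (i0 + 0), g (i0 + 0 + 1)) := by
      rw [List.head?_map, hn', List.range_succ_eq_map]
      rfl
    rw [hlast, hhead]
    simp only [Option.map_some, Nat.add_zero]
    have e1 : i0 + n' + 1 = j0 := by omega
    rw [e1, ← hgi0]
  · intro a
    have hnd : ((List.range n).map (fun t => (g (i0 + t), g (i0 + t + 1)))).Nodup := by
      apply List.Nodup.map_on ?_ List.nodup_range
      intro t ht s hs he
      simp only [List.mem_range] at ht hs
      have hfst : g (i0 + t) = g (i0 + s) := congrArg Prod.fst he
      rcases lt_trichotomy t s with h | h | h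
      · exact absurd ⟨i0 + t, by omega, hfst⟩ (hmin (i0 + s) (by omega))
      · exact h
      · exact absurd ⟨i0 + s, by omega, hfst.symm⟩ (hmin (i0 + t) (by omega))
    exact count_le_one_of_nodup hnd a

lemma decomp_s6 : ∀ (N : ℕ) (ν : V × V → ℕ), (∑ a, ν a) ≤ N →
    (∀ v, minDeg ν v = moutDeg ν v) →
    ∃ Ds : List (List (V × V)), (∀ L ∈ Ds, L ≠ [] ∧ (∀ a ∈ L, 0 < ν a) ∧
      List.Chain' (fun p q => p.2 = q.1) L ∧
      L.getLast?.map Prod.snd = L.head?.map Prod.fst) ∧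
      ∀ a, (Ds.map (List.count a)).sum = ν a := by
  intro N
  induction N with
  | zero =>
    intro ν hN _
    have hz : ∀ a, ν a = 0 := by
      intro a
      have := Finset.sum_eq_zero_iff.mp (Nat.le_zero.mp hN) a (Finset.mem_univ a)
      exact this
    exact ⟨[], by simp, fun a => by simp [hz a]⟩
  | succ N ih =>
    intro ν hN hbal
    by_cases h0 : ∑ a, ν a = 0
    · have hz : ∀ a, ν a = 0 := fun a => Finset.sum_eq_zero_iff.mp h0 a (Finset.mem_univ a)
      exact ⟨[], by simp, fun a => by simp [hz a]⟩
    · obtain ⟨a0, -, ha0⟩ := Finset.exists_ne_zero_of_sum_ne_zero h0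
      obtain ⟨L, hLne, hLpos, hLch, hLcl, hLcnt⟩ :=
        exists_cycle ν hbal (Nat.pos_of_ne_zero ha0)
      set ν' : V × V → ℕ := fun a => ν a - L.count a with hν'
      have hle : ∀ a, L.count a ≤ ν a := by
        intro a
        by_cases ha : a ∈ L
        · exact le_trans (hLcnt a) (hLpos a ha)
        · simp [List.count_eq_zero_of_not_mem ha]
      have hperm := closed_snd_perm L hLch hLcl
      have hbal' : ∀ v, minDeg ν' v = moutDeg ν' v := by
        intro v
        have h1 : minDeg ν' v = minDeg ν v - ∑ u, L.count (u, v) := by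
          unfold minDeg
          rw [eq_tsub_iff_add_eq_of_le]
          · rw [← Finset.sum_add_distrib]
            apply Finset.sum_congr rfl
            intro u _
            simp only [hν']
            have := hle (u, v)
            omega
          · exact Finset.sum_le_sum fun u _ => hle (u, v)
        have h2 : moutDeg ν' v = moutDeg ν v - ∑ u, L.count (v, u) := by
          unfold moutDeg
          rw [eq_tsub_iff_add_eq_of_le]
          · rw [← Finset.sum_add_distrib]
            apply Finset.sum_congr rfl
            intro u _
            simp only [hν']
            have := hle (v, u)
            omega
          · exact Finset.sum_le_sum fun u _ => hle (v, u)
        rw [h1, h2, hbal v, closed_count_balanced hperm v]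
      have hsum' : ∑ a, ν' a ≤ N := by
        have hlt : ∑ a, ν' a < ∑ a, ν a := by
          apply Finset.sum_lt_sum (fun a _ => Nat.sub_le _ _)
          obtain ⟨b, hb⟩ : ∃ b, b ∈ L := List.exists_mem_of_ne_nil L hLne
          refine ⟨b, Finset.mem_univ b, ?_⟩
          have h1 := hLpos b hb
          have h2 : 0 < L.count b := List.count_pos_iff.mpr hb
          omega
        omega
      obtain ⟨Ds', hDs', hcnt'⟩ := ih ν' hsum' hbal'
      refine ⟨L :: Ds', ?_, ?_⟩
      · intro M hM
        rcases List.mem_cons.mp hM with rfl | hM'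
        · exact ⟨hLne, hLpos, hLch, hLcl⟩
        · obtain ⟨h1, h2, h3, h4⟩ := hDs' M hM'
          exact ⟨h1, fun a ha => lt_of_lt_of_le (h2 a ha) (Nat.sub_le _ _), h3, h4⟩
      · intro a
        simp only [List.map_cons, List.sum_cons, hcnt' a, hν']
        have := hle a
        omega

lemma walk_cross {G : SimpleGraph V} {X : Set V} :
    ∀ {x y : V}, G.Walk x y → x ∈ X → y ∉ X → ∃ a b, G.Adj a b ∧ a ∈ X ∧ b ∉ X := by
  intro x y w
  induction w with
  | nil => intro hx hy; exact absurd hx hy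
  | @cons u v w h p ih =>
    intro hx hy
    by_cases hb : v ∈ X
    · exact ih hb hy
    · exact ⟨u, v, h, hx, hb⟩

lemma mergeAll (μ : V × V → ℕ)
    (hconn : (SimpleGraph.fromRel (fun u v => 0 < μ (u, v))).Connected) :
    ∀ (n : ℕ) (P : List (List (V × V))), P.length = n →
    (∀ L ∈ P, L ≠ [] ∧ IsClosedWalkM μ L) →
    (∀ a, (P.map (List.count a)).sum = μ a) →
    ∀ k, 1 ≤ k → k ≤ n →
    ∃ Q : List (List (V × V)), Q.length = k ∧ (∀ L ∈ Q, L ≠ [] ∧ IsClosedWalkM μ L) ∧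
      (∀ a, (Q.map (List.count a)).sum = μ a) := by
  intro n
  induction n with
  | zero => intro P _ _ _ k hk1 hk2; omega
  | succ n ih =>
    intro P hlen hgood hcount k hk1 hk2
    rcases eq_or_lt_of_le hk2 with heq | hlt
    · exact ⟨P, by omega, hgood, hcount⟩
    have hkn : k ≤ n := by omega
    have hn1 : 1 ≤ n := le_trans hk1 hkn
    -- P is nonempty with nonempty tail
    obtain ⟨L1, rest, rfl⟩ : ∃ L1 rest, P = L1 :: rest := by
      cases P with
      | nil => simp at hlen
      | cons a t => exact ⟨a, t, rfl⟩
    have hrest : rest ≠ [] := by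
      intro h; rw [h] at hlen; simp at hlen; omega
    have hL1 := hgood L1 (List.mem_cons_self)
    -- find a piece in rest sharing a vertex with L1
    have claim : ∃ L' ∈ rest, ∃ v, v ∈ L1.map Prod.fst ∧ v ∈ L'.map Prod.fst := by
      by_contra hnot
      push_neg at hnot
      set X : Set V := {v | v ∈ L1.map Prod.fst} with hX
      have hx0 : (L1.head hL1.1).1 ∈ X :=
        List.mem_map_of_mem (f := Prod.fst) (List.head_mem hL1.1)
      have hL2mem : rest.head hrest ∈ rest := List.head_mem hrest
      have hL2 := hgood _ (List.mem_cons_of_mem _ hL2mem)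
      have hy0 : ((rest.head hrest).head hL2.1).1 ∉ X := by
        intro hmem
        exact hnot _ hL2mem _ hmem
          (List.mem_map_of_mem (f := Prod.fst) (List.head_mem hL2.1))
      obtain ⟨w⟩ := hconn.preconnected _ _
      obtain ⟨a, b, hadj, haX, hbX⟩ := walk_cross w hx0 hy0
      rw [SimpleGraph.fromRel_adj] at hadj
      obtain ⟨-, hor⟩ := hadj
      -- find the arc e with positive multiplicity
      obtain ⟨e, hepos, he1, he2⟩ : ∃ e : V × V, 0 < μ e ∧
          (e.1 = a ∧ e.2 = b ∨ e.1 = b ∧ e.2 = a) ∧ True := by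
        rcases hor with h | h
        · exact ⟨(a, b), h, Or.inl ⟨rfl, rfl⟩, trivial⟩
        · exact ⟨(b, a), h, Or.inr ⟨rfl, rfl⟩, trivial⟩
      have hex : ∃ M ∈ L1 :: rest, e ∈ M := by
        by_contra hno
        push_neg at hno
        have : ((L1 :: rest).map (List.count e)).sum = 0 := by
          apply List.sum_eq_zero
          intro x hx
          obtain ⟨M, hM, rfl⟩ := List.mem_map.mp hx
          exact List.count_eq_zero_of_not_mem (hno M hM)
        rw [hcount e] at this
        omega
      obtain ⟨M, hMmem, heM⟩ := hex
      have hMclosed : IsClosedWalkM μ M := (hgood M hMmem).2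
      have hfstM : e.1 ∈ M.map Prod.fst := List.mem_map_of_mem (f := Prod.fst) heM
      have hsndM : e.2 ∈ M.map Prod.fst := mem_fst_of_closed hMclosed heM
      have haM : a ∈ M.map Prod.fst := by rcases he1 with ⟨h1, h2⟩ | ⟨h1, h2⟩
                                          · rwa [h1] at hfstM
                                          · rwa [h2] at hsndM
      have hbM : b ∈ M.map Prod.fst := by rcases he1 with ⟨h1, h2⟩ | ⟨h1, h2⟩
                                          · rwa [h2] at hsndM
                                          · rwa [h1] at hfstM
      rcases List.mem_cons.mp hMmem with rfl | hMrest
      · exact hbX hbM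
      · exact hnot M hMrest a haX haM
    obtain ⟨L', hL'mem, v, hv1, hv2⟩ := claim
    obtain ⟨s, t, rfl⟩ := List.append_of_mem hL'mem
    have hL' := hgood L' (List.mem_cons_of_mem _ (by simp))
    obtain ⟨M, hMclosed, hMne, hMcnt⟩ := closed_merge hL1.2 hL'.2 hv1 hv2
    have hlen' : (M :: (s ++ t)).length = n := by
      simp at hlen ⊢
      omega
    apply ih (M :: (s ++ t)) hlen' ?_ ?_ k hk1 hkn
    · intro L hL
      rcases List.mem_cons.mp hL with rfl | hL'
      · exact ⟨hMne, hMclosed⟩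
      · apply hgood
        simp only [List.mem_append, List.mem_cons] at hL' ⊢
        tauto
    · intro a
      have := hcount a
      simp only [List.map_cons, List.map_append, List.sum_cons, List.sum_append] at this ⊢
      rw [hMcnt a]
      omega

lemma list_sum_fin {α : Type} (Q : List α) (f : α → ℕ) :
    ∑ i : Fin Q.length, f (Q.get i) = (Q.map f).sum := by
  induction Q with
  | nil => simp
  | cons a t ih => simp [List.length_cons, Fin.sum_univ_succ, ih]


end WithFintype
end Aux

theorem stmt6 {V : Type} [Fintype V] [DecidableEq V] (μ : V × V → ℕ)
    (hEuler : IsEulerM μ) (k : ℕ) (hk : 1 ≤ k)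
    -- k pairwise arc-disjoint directed cycles in D :
    (C : Fin k → List (V × V)) (hC : ∀ i, IsCycleM μ (C i))
    (hdisj : ∀ a : V × V, (∑ i, (C i).count a) ≤ μ a) :
    ∃ W : Fin k → List (V × V), (∀ i, W i ≠ [] ∧ IsClosedWalkM μ (W i)) ∧
      ∀ a : V × V, (∑ i, (W i).count a) = μ a := by

  classical
  obtain ⟨hloop, hconn, hbal⟩ := hEuler
  set s : V × V → ℕ := fun a => ∑ i, (C i).count a with hs
  set ν : V × V → ℕ := fun a => μ a - s a with hν
  have hCperm : ∀ i, ((C i).map Prod.snd).Perm ((C i).map Prod.fst) := fun i =>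
    closed_snd_perm _ (hC i).2.1.2.1 (hC i).2.1.2.2
  have hsbal : ∀ v, (∑ u, s (u, v)) = ∑ u, s (v, u) := by
    intro v
    simp only [hs]
    rw [Finset.sum_comm, Finset.sum_comm (s := Finset.univ) (t := Finset.univ)
      (f := fun u i => (C i).count (v, u))]
    exact Finset.sum_congr rfl fun i _ => closed_count_balanced (hCperm i) v
  have hbalν : ∀ v, minDeg ν v = moutDeg ν v := by
    intro v
    have h1 : minDeg ν v = minDeg μ v - ∑ u, s (u, v) := by
      unfold minDeg
      rw [eq_tsub_iff_add_eq_of_le]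
      · rw [← Finset.sum_add_distrib]
        exact Finset.sum_congr rfl fun u _ => by
          simp only [hν, hs]; have := hdisj (u, v); omega
      · exact Finset.sum_le_sum fun u _ => hdisj (u, v)
    have h2 : moutDeg ν v = moutDeg μ v - ∑ u, s (v, u) := by
      unfold moutDeg
      rw [eq_tsub_iff_add_eq_of_le]
      · rw [← Finset.sum_add_distrib]
        exact Finset.sum_congr rfl fun u _ => by
          simp only [hν, hs]; have := hdisj (v, u); omega
      · exact Finset.sum_le_sum fun u _ => hdisj (v, u)
    rw [h1, h2, hbal v, hsbal v]
  obtain ⟨Ds, hDs, hDcnt⟩ := decomp_s6 (∑ a, ν a) ν le_rfl hbalν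
  set P : List (List (V × V)) := (List.ofFn C) ++ Ds with hP
  have hgood : ∀ L ∈ P, L ≠ [] ∧ IsClosedWalkM μ L := by
    intro L hL
    rcases List.mem_append.mp hL with h | h
    · obtain ⟨i, rfl⟩ := (List.mem_ofFn).mp h
      exact ⟨(hC i).1, (hC i).2.1⟩
    · obtain ⟨h1, h2, h3, h4⟩ := hDs L h
      refine ⟨h1, fun a ha => ?_, h3, h4⟩
      have := h2 a ha
      simp only [hν] at this
      omega
  have hcountP : ∀ a, (P.map (List.count a)).sum = μ a := by
    intro a
    simp only [hP, List.map_append, List.sum_append, List.map_ofFn]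
    rw [List.sum_ofFn, hDcnt a]
    have h1 : ∑ i, (List.count a ∘ C) i = s a := rfl
    rw [h1]
    simp only [hν]
    have := hdisj a
    simp only [hs] at this ⊢
    omega
  have hklen : k ≤ P.length := by
    simp only [hP, List.length_append, List.length_ofFn]
    omega
  obtain ⟨Q, hQlen, hQgood, hQcnt⟩ :=
    mergeAll μ hconn P.length P rfl hgood hcountP k hk hklen
  refine ⟨fun i => Q.get (Fin.cast hQlen.symm i), fun i => hQgood _ (Q.get_mem _), ?_⟩
  intro a
  have hre : ∑ i : Fin k, (Q.get (Fin.cast hQlen.symm i)).count a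
      = ∑ j : Fin Q.length, (Q.get j).count a := by
    apply Fintype.sum_equiv (finCongr hQlen.symm)
    intro i
    rfl
  rw [hre, list_sum_fin Q (fun L => L.count a), hQcnt a]
end

section
/- Let G be a connected digraph with nonnegative integer arc weights ω, let T be an optimal DCPP solution on G and let W be any DCPP solution on G. For each arc a of G let ρ(a) = μ_{G_W}(a) − μ_{G_T}(a), where μ_{G_T}(a) and μ_{G_W}(a) denote the multiplicities of a in G_T and G_W. Let H be the directed multigraph on V(G) that contains, for each arc uv of G with ρ(uv) > 0, ρ(uv) copies of the arc uv (called positive arcs, each of weight ω(uv)), and, for each arc uv of G with ρ(uv) < 0, |ρ(uv)| copies of the reversed arc vu (called negative arcs, each of weight ω(uv)). Define the weight of a directed cycle C in H as the sum of the weights of its positive arcs minus the sum of the weights of its negative arcs. Then every directed cycle in H has nonnegative weight. -/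
private lemma bal_walk {V : Type} [DecidableEq V] :
    ∀ (l : List (V × V)) (a : V × V) (y : V),
      List.Chain' (fun p q => p.2 = q.1) (a :: l) →
      (a :: l).getLast?.map Prod.snd = some y →
      ∀ v : V, (a :: l).countP (fun p => decide (p.1 = v)) + (if y = v then 1 else 0)
        = (a :: l).countP (fun p => decide (p.2 = v)) + (if a.1 = v then 1 else 0) := by
  intro l
  induction l with
  | nil =>
    intro a y hc hy v
    simp only [List.getLast?_singleton, Option.map_some, Option.some.injEq] at hy
    subst hy
    simp only [List.countP_cons, List.countP_nil]
    by_cases h1 : a.1 = v <;> by_cases h2 : a.2 = v <;> simp [h1, h2]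
  | cons b l ih =>
    intro a y hc hy v
    change List.IsChain _ _ at hc; rw [List.isChain_cons_cons] at hc
    have hab : a.2 = b.1 := hc.1
    have hy' : (b :: l).getLast?.map Prod.snd = some y := by
      rwa [List.getLast?_cons_cons] at hy
    have H := ih b y hc.2 hy' v
    rw [List.countP_cons (p := fun p => decide (p.1 = v)) (a := a) (l := b :: l),
      List.countP_cons (p := fun p => decide (p.2 = v)) (a := a) (l := b :: l)]
    rw [← hab] at H
    have e1 : (if (fun p => decide ((p : V × V).1 = v)) a = true then 1 else 0)
        = (if a.1 = v then 1 else 0) := by simp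
    have e2 : (if (fun p => decide ((p : V × V).2 = v)) a = true then 1 else 0)
        = (if a.2 = v then 1 else 0) := by simp
    rw [e1, e2]
    omega

private lemma bal_closed {V : Type} [DecidableEq V] (L : List (V × V)) (h : L ≠ [])
    (hc : List.Chain' (fun p q => p.2 = q.1) L)
    (hcl : L.getLast?.map Prod.snd = L.head?.map Prod.fst) :
    ∀ v : V, L.countP (fun p => decide (p.1 = v)) = L.countP (fun p => decide (p.2 = v)) := by
  intro v
  obtain ⟨a, l, rfl⟩ := List.exists_cons_of_ne_nil h
  rw [List.head?_cons] at hcl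
  have := bal_walk l a a.1 hc hcl v
  omega

private lemma snd_mem_fst_of_closed {V : Type} [DecidableEq V] (L : List (V × V)) (h : L ≠ [])
    (hc : List.Chain' (fun p q => p.2 = q.1) L)
    (hcl : L.getLast?.map Prod.snd = L.head?.map Prod.fst)
    (p : V × V) (hp : p ∈ L) : p.2 ∈ L.map Prod.fst := by
  have h1 : 0 < L.countP (fun q => decide (q.2 = p.2)) :=
    List.countP_pos_iff.mpr ⟨p, hp, by simp⟩
  have h2 := bal_closed L h hc hcl p.2
  have h3 : 0 < L.countP (fun q => decide (q.1 = p.2)) := by omega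
  obtain ⟨q, hq, hq2⟩ := List.countP_pos_iff.mp h3
  simp only [decide_eq_true_eq] at hq2
  exact List.mem_map.mpr ⟨q, hq, hq2⟩

private lemma consTrail {V : Type} [DecidableEq V] (a : V × V) (v : V) (Lt : List (V × V))
    (hch : List.Chain' (fun p q => p.2 = q.1) Lt)
    (hends : (Lt = [] ∧ a.2 = v) ∨
      (Lt.head?.map Prod.fst = some a.2 ∧ Lt.getLast?.map Prod.snd = some v)) :
    List.Chain' (fun p q => p.2 = q.1) (a :: Lt) ∧
      (a :: Lt).head?.map Prod.fst = some a.1 ∧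
      (a :: Lt).getLast?.map Prod.snd = some v := by
  rcases hends with ⟨rfl, h2⟩ | ⟨hh, hl⟩
  · exact ⟨List.isChain_singleton a, by simp, by simp [h2]⟩
  · have hne : Lt ≠ [] := by rintro rfl; simp at hh
    refine ⟨List.isChain_cons.mpr ⟨?_, hch⟩, by simp, ?_⟩
    · intro y hy
      rw [show y ∈ Lt.head? ↔ Lt.head? = some y from Iff.rfl] at hy
      rw [hy] at hh
      simp only [Option.map_some, Option.some.injEq] at hh
      exact hh.symm
    · rw [show a :: Lt = [a] ++ Lt from rfl, List.getLast?_append]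
      obtain ⟨z, hz, hz2⟩ := Option.map_eq_some_iff.mp hl
      rw [hz]; simpa [hz2] using hl

private lemma trail_lemma {V : Type} [DecidableEq V] :
    ∀ (n : ℕ) (M : Multiset (V × V)) (w v : V), Multiset.card M = n →
      (∀ u : V, Multiset.countP (fun p => p.1 = u) M + (if v = u then 1 else 0)
         = Multiset.countP (fun p => p.2 = u) M + (if w = u then 1 else 0)) →
      ∃ Lt : List (V × V), (↑Lt : Multiset (V × V)) ≤ M ∧
        List.Chain' (fun p q => p.2 = q.1) Lt ∧
        ((Lt = [] ∧ w = v) ∨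
          (Lt.head?.map Prod.fst = some w ∧ Lt.getLast?.map Prod.snd = some v)) := by
  intro n
  induction n with
  | zero =>
    intro M w v hcard hbal
    rw [Multiset.card_eq_zero] at hcard; subst hcard
    by_cases hwv : w = v
    · exact ⟨[], by simp, List.isChain_nil, Or.inl ⟨rfl, hwv⟩⟩
    · exfalso
      have hb := hbal w
      have h1 : (if v = w then 1 else 0) = 0 := if_neg (fun h : v = w => hwv h.symm)
      simp only [Multiset.countP_zero, h1, eq_self_iff_true, if_true] at hb
      omega
  | succ n ih =>
    intro M w v hcard hbal
    by_cases hwv : w = v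
    · exact ⟨[], by simp, List.isChain_nil, Or.inl ⟨rfl, hwv⟩⟩
    · have h0 : 0 < Multiset.countP (fun p => p.1 = w) M := by
        have hb := hbal w
        have h1 : (if v = w then 1 else 0) = 0 := if_neg (fun h : v = w => hwv h.symm)
        simp only [h1, eq_self_iff_true, if_true] at hb
        omega
      obtain ⟨a, haM, ha1⟩ := Multiset.countP_pos.mp h0
      have hcons : a ::ₘ M.erase a = M := Multiset.cons_erase haM
      have hcard' : Multiset.card (M.erase a) = n := by
        have h2 := congrArg Multiset.card hcons
        rw [Multiset.card_cons] at h2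
        omega
      have hbal' : ∀ u, Multiset.countP (fun p => p.1 = u) (M.erase a) + (if v = u then 1 else 0)
          = Multiset.countP (fun p => p.2 = u) (M.erase a) + (if a.2 = u then 1 else 0) := by
        intro u
        have hb := hbal u
        rw [← hcons, Multiset.countP_cons, Multiset.countP_cons] at hb
        have e1 : (if a.1 = u then 1 else 0) = (if w = u then 1 else 0) := by rw [ha1]
        rw [e1] at hb
        omega
      obtain ⟨Lt, hle, hch, hends⟩ := ih (M.erase a) a.2 v hcard' hbal'
      obtain ⟨hch2, hh2, hl2⟩ := consTrail a v Lt hch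
        (by rcases hends with ⟨h1, h2⟩ | h; exacts [Or.inl ⟨h1, h2⟩, Or.inr h])
      refine ⟨a :: Lt, ?_, hch2, Or.inr ⟨by rw [hh2, ha1], hl2⟩⟩
      rw [← hcons, ← Multiset.cons_coe]
      exact Multiset.cons_le_cons a hle

private lemma extract_closed_s9 {V : Type} [DecidableEq V] (M : Multiset (V × V))
    (hbal : ∀ u : V, Multiset.countP (fun p => p.1 = u) M
      = Multiset.countP (fun p => p.2 = u) M)
    (a : V × V) (ha : a ∈ M) :
    ∃ C : List (V × V), C ≠ [] ∧ List.Chain' (fun p q => p.2 = q.1) C ∧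
      C.head?.map Prod.fst = some a.1 ∧ C.getLast?.map Prod.snd = some a.1 ∧
      (↑C : Multiset (V × V)) ≤ M := by
  have hcons : a ::ₘ M.erase a = M := Multiset.cons_erase ha
  have hbal' : ∀ u, Multiset.countP (fun p => p.1 = u) (M.erase a) + (if a.1 = u then 1 else 0)
      = Multiset.countP (fun p => p.2 = u) (M.erase a) + (if a.2 = u then 1 else 0) := by
    intro u
    have hb := hbal u
    rw [← hcons, Multiset.countP_cons, Multiset.countP_cons] at hb
    omega
  obtain ⟨Lt, hle, hch, hends⟩ := trail_lemma (Multiset.card (M.erase a)) (M.erase a) a.2 a.1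
    rfl hbal'
  obtain ⟨hch2, hh2, hl2⟩ := consTrail a a.1 Lt hch
    (by rcases hends with ⟨h1, h2⟩ | h; exacts [Or.inl ⟨h1, h2⟩, Or.inr h])
  refine ⟨a :: Lt, by simp, hch2, hh2, hl2, ?_⟩
  rw [← hcons, ← Multiset.cons_coe]
  exact Multiset.cons_le_cons a hle

private lemma closed_reach {V : Type} {G : SimpleGraph V} {S : Set V}
    (hS : ∀ a b, a ∈ S → G.Adj a b → b ∈ S) :
    ∀ {u w : V}, G.Walk u w → u ∈ S → w ∈ S := by
  intro u w p
  induction p with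
  | nil => exact id
  | cons hadj _ ih => exact fun hu => ih (hS _ _ hu hadj)

private lemma euler_main {V : Type} [Fintype V] [DecidableEq V] (N : Multiset (V × V))
    (hconn : (UGraph N.toFinset).Connected) :
    ∀ (n : ℕ) (M : Multiset (V × V)) (L : List (V × V)), Multiset.card M = n →
      (∀ u : V, Multiset.countP (fun p => p.1 = u) M = Multiset.countP (fun p => p.2 = u) M) →
      L ≠ [] → List.Chain' (fun p q => p.2 = q.1) L →
      L.getLast?.map Prod.snd = L.head?.map Prod.fst →
      ↑L + M = N →
      ∃ L' : List (V × V), L' ≠ [] ∧ List.Chain' (fun p q => p.2 = q.1) L' ∧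
        L'.getLast?.map Prod.snd = L'.head?.map Prod.fst ∧ (↑L' : Multiset (V × V)) = N := by
  intro n
  induction n using Nat.strong_induction_on with
  | _ n ih =>
  intro M L hcard hbal hne hch hcl hLM
  by_cases hM : M = 0
  · subst hM
    exact ⟨L, hne, hch, hcl, by simpa using hLM⟩
  have hex : ∃ v ∈ L.map Prod.fst, 0 < Multiset.countP (fun p => p.1 = v) M := by
    by_contra hcon
    push_neg at hcon
    set S : Set V := {x | x ∈ L.map Prod.fst} with hSdef
    have hzero : ∀ x ∈ S, Multiset.countP (fun p => p.1 = x) M = 0 := fun x hx =>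
      Nat.le_zero.mp (hcon x hx)
    have hclosedS : ∀ a b, a ∈ S → (UGraph N.toFinset).Adj a b → b ∈ S := by
      intro a b ha hadj
      rw [UGraph, SimpleGraph.fromRel_adj] at hadj
      have key : ∀ c : V × V, c ∈ N → (c.1 = a ∧ c.2 = b) ∨ (c.1 = b ∧ c.2 = a) → b ∈ S := by
        intro c hc hcd
        rw [← hLM, Multiset.mem_add] at hc
        rcases hc with hc | hc
        · have hcL : c ∈ L := by exact_mod_cast hc
          rcases hcd with ⟨h1, h2⟩ | ⟨h1, h2⟩
          · rw [hSdef, ← h2]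
            exact snd_mem_fst_of_closed L hne hch hcl c hcL
          · rw [hSdef, ← h1]
            exact List.mem_map.mpr ⟨c, hcL, rfl⟩
        · exfalso
          rcases hcd with ⟨h1, _⟩ | ⟨_, h2⟩
          · have hpos : 0 < Multiset.countP (fun p => p.1 = a) M :=
              Multiset.countP_pos.mpr ⟨c, hc, h1⟩
            rw [hzero a ha] at hpos; omega
          · have hpos : 0 < Multiset.countP (fun p => p.2 = a) M :=
              Multiset.countP_pos.mpr ⟨c, hc, h2⟩
            rw [← hbal a, hzero a ha] at hpos; omega
      rcases hadj.2 with hab | hab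
      · exact key (a, b) (Multiset.mem_toFinset.mp hab) (Or.inl ⟨rfl, rfl⟩)
      · exact key (b, a) (Multiset.mem_toFinset.mp hab) (Or.inr ⟨rfl, rfl⟩)
    obtain ⟨c, hc⟩ := Multiset.exists_mem_of_ne_zero hM
    obtain ⟨a0, l0, hL0⟩ := List.exists_cons_of_ne_nil hne
    have huS : a0.1 ∈ S := by rw [hSdef]; simp [hL0]
    obtain ⟨p⟩ := hconn.preconnected a0.1 c.1
    have hc1S : c.1 ∈ S := closed_reach hclosedS p huS
    have hpos : 0 < Multiset.countP (fun p => p.1 = c.1) M :=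
      Multiset.countP_pos.mpr ⟨c, hc, rfl⟩
    rw [hzero _ hc1S] at hpos; omega
  obtain ⟨v, hvL, hvM⟩ := hex
  obtain ⟨a, haM, ha1⟩ := Multiset.countP_pos.mp hvM
  obtain ⟨C, hCne, hCch, hCh, hCl, hCle⟩ := extract_closed_s9 M hbal a haM
  rw [ha1] at hCh hCl
  obtain ⟨b, hbL, hb1⟩ := List.mem_map.mp hvL
  obtain ⟨s, t, rfl⟩ := List.append_of_mem hbL
  obtain ⟨hchs, hchbt, hlink⟩ := List.isChain_append.mp hch
  have hgl : (s ++ b :: t).getLast? = (b :: t).getLast? := by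
    rw [List.getLast?_append]
    have : (b :: t).getLast?.isSome := List.getLast?_isSome.mpr (by simp)
    obtain ⟨g, hg⟩ := Option.isSome_iff_exists.mp this
    rw [hg]; rfl
  set M2 := M - ↑C with hM2def
  have hM2 : ↑C + M2 = M := by
    rw [hM2def, add_comm]; exact tsub_add_cancel_of_le hCle
  -- chain' of the new walk
  have hch2 : List.Chain' (fun p q => p.2 = q.1) (C ++ ((b :: t) ++ s)) := by
    change List.IsChain _ _; rw [List.isChain_append]
    refine ⟨hCch, ?_, ?_⟩
    · rw [List.isChain_append]
      refine ⟨hchbt, hchs, ?_⟩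
      intro x hx y hy
      rcases List.eq_nil_or_concat s with rfl | _
      · simp at hy
      · have hhs : s.head? = some y := hy
        have := hcl
        rw [hgl] at this
        have hhead : (s ++ b :: t).head? = some y := by
          rcases s with _ | ⟨s0, s'⟩
          · simp at hy
          · simpa using hy
        rw [hhead, hx] at this
        simpa using this
    · intro x hx y hy
      have : ((b :: t) ++ s).head? = some b := by simp
      rw [this] at hy
      cases hy
      obtain ⟨z, hz, hz2⟩ := Option.map_eq_some_iff.mp hCl
      rw [hz] at hx; cases hx
      rw [hz2, hb1]
  -- closedness of the new walk
  have hcl2 : (C ++ ((b :: t) ++ s)).getLast?.map Prod.snd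
      = (C ++ ((b :: t) ++ s)).head?.map Prod.fst := by
    have hhead : (C ++ ((b :: t) ++ s)).head? = C.head? := by
      rcases List.exists_cons_of_ne_nil hCne with ⟨c0, C', rfl⟩
      simp
    rw [hhead]
    have hCh' : C.head?.map Prod.fst = some v := hCh
    rcases s with _ | ⟨s0, s'⟩
    · have : (C ++ ((b :: t) ++ [])).getLast? = (b :: t).getLast? := by
        rw [List.getLast?_append]
        have : ((b :: t) ++ []).getLast? = (b :: t).getLast? := by simp
        rw [this]
        obtain ⟨g, hg⟩ := Option.isSome_iff_exists.mp
          (List.getLast?_isSome.mpr (show (b :: t) ≠ [] by simp))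
        rw [hg]; rfl
      rw [this, ← hgl]
      have := hcl
      rw [this]
      simp [hb1, hCh']
    · have hgl2 : (C ++ ((b :: t) ++ s0 :: s')).getLast? = (s0 :: s').getLast? := by
        rw [List.getLast?_append, List.getLast?_append]
        obtain ⟨g, hg⟩ := Option.isSome_iff_exists.mp
          (List.getLast?_isSome.mpr (show (s0 :: s') ≠ [] by simp))
        rw [hg]; rfl
      rw [hgl2, hCh']
      obtain ⟨g, hg⟩ := Option.isSome_iff_exists.mp
        (List.getLast?_isSome.mpr (show (s0 :: s') ≠ [] by simp))
      have := hlink g hg b (by simp)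
      rw [hg]
      simp [this, hb1]
  -- multiset bookkeeping
  have hsum : (↑(C ++ ((b :: t) ++ s)) : Multiset (V × V)) + M2 = N := by
    rw [← hLM, ← hM2]
    have e1 : (↑(C ++ ((b :: t) ++ s)) : Multiset (V × V)) = ↑C + (↑(b :: t) + ↑s) := rfl
    have e2 : (↑(s ++ b :: t) : Multiset (V × V)) = ↑s + ↑(b :: t) := rfl
    rw [e1, e2]
    abel
  have hbal2 : ∀ u : V, Multiset.countP (fun p => p.1 = u) M2
      = Multiset.countP (fun p => p.2 = u) M2 := by
    intro u
    have h1 := congrArg (Multiset.countP (fun p : V × V => p.1 = u)) hM2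
    have h2 := congrArg (Multiset.countP (fun p : V × V => p.2 = u)) hM2
    rw [Multiset.countP_add] at h1 h2
    have hCb := bal_closed C hCne hCch (by rw [hCl, hCh]) u
    rw [Multiset.coe_countP] at h1 h2
    have hb := hbal u
    omega
  have hcard2 : Multiset.card M2 < n := by
    have h1 := congrArg Multiset.card hM2
    rw [Multiset.card_add, Multiset.coe_card] at h1
    have h2 : 0 < C.length := List.length_pos_iff.mpr hCne
    omega
  exact ih (Multiset.card M2) (by omega) M2 (C ++ ((b :: t) ++ s)) rfl hbal2
    (by simp [hCne]) hch2 hcl2 hsum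

private lemma count_bridge' {α : Type} (i1 i2 : BEq α)
    (h : ∀ a b : α, (@BEq.beq _ i1 a b) = (@BEq.beq _ i2 a b)) (a : α) (l : List α) :
    @List.count _ i1 a l = @List.count _ i2 a l := by
  induction l with
  | nil => rfl
  | cons b l ih => rw [@List.count_cons _ i1, @List.count_cons _ i2, ih, h]

private lemma count_bridge {V : Type} [DecidableEq V] (a : V × V) (l : List (V × V)) :
    @List.count _ instBEqProd a l = @List.count _ instBEqOfDecidableEq a l := by
  apply count_bridge'
  intro x y
  show (x.1 == y.1 && x.2 == y.2) = decide (x = y)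
  by_cases h1 : x.1 = y.1 <;> by_cases h2 : x.2 = y.2 <;>
    simp [h1, h2, Prod.ext_iff, beq_iff_eq]

private lemma countP_partition {α : Type} (l : List α) (p q : α → Bool) :
    l.countP p = (l.countP fun a => p a && q a) + (l.countP fun a => p a && !q a) := by
  induction l with
  | nil => rfl
  | cons a l ih =>
    cases hq : q a <;> cases hp : p a <;>
      simp [List.countP_cons, hq, hp, ih] <;> omega

private lemma sum_split {V : Type} (ω : V × V → ℕ) (l : List ((V × V) × Bool)) :
    (l.map (fun p => if p.2 = true then (ω p.1 : ℤ) else -(ω (p.1.2, p.1.1) : ℤ))).sum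
      = (((((l.filter (fun p => p.2)).map Prod.fst).map ω).sum : ℕ) : ℤ)
        - (((((l.filter (fun p => !p.2)).map (fun p => (p.1.2, p.1.1))).map ω).sum : ℕ) : ℤ) := by
  induction l with
  | nil => simp
  | cons a l ih =>
    cases ha : a.2 with
    | false =>
      simp only [List.map_cons, List.sum_cons, List.filter_cons, ha, ih]
      simp [ha]
      push_cast
      ring
    | true =>
      simp only [List.map_cons, List.sum_cons, List.filter_cons, ha, ih]
      simp [ha]
      push_cast
      ring

theorem stmt9 {V : Type} [Fintype V] [DecidableEq V] (A : Finset (V × V))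
    (ω : V × V → ℕ) (hloop : ∀ v : V, (v, v) ∉ A) (hconn : (UGraph A).Connected)
    (T : List (V × V)) (hT : IsDCPP A T)
    (hTopt : ∀ T' : List (V × V), IsDCPP A T' → walkWeight ω T ≤ walkWeight ω T')
    (W : List (V × V)) (hW : IsDCPP A W)
    -- a directed cycle in H :
    (L : List ((V × V) × Bool)) (hne : L ≠ [])
    (harcs : ∀ p ∈ L,
      (p.2 = true → p.1 ∈ A ∧ T.count p.1 < W.count p.1) ∧
      (p.2 = false → (p.1.2, p.1.1) ∈ A ∧ W.count (p.1.2, p.1.1) < T.count (p.1.2, p.1.1)))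
    (hchain : List.Chain' (fun p q => p.2 = q.1) (L.map Prod.fst))
    (hclosed : (L.map Prod.fst).getLast?.map Prod.snd = (L.map Prod.fst).head?.map Prod.fst)
    (hnodup : ((L.map Prod.fst).map Prod.fst).Nodup) :
    0 ≤ (L.map (fun p => if p.2 = true then (ω p.1 : ℤ) else -(ω (p.1.2, p.1.1) : ℤ))).sum := by
  classical
  obtain ⟨p0, hp0⟩ := List.exists_mem_of_ne_nil L hne
  have hAex : ∃ a : V × V, a ∈ A := by
    cases h : p0.2 with
    | false => exact ⟨(p0.1.2, p0.1.1), ((harcs p0 hp0).2 h).1⟩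
    | true => exact ⟨p0.1, ((harcs p0 hp0).1 h).1⟩
  obtain ⟨⟨hTA, hTch, hTcl⟩, hTcov⟩ := hT
  have hTne : T ≠ [] := by
    obtain ⟨a, ha⟩ := hAex; exact List.ne_nil_of_mem (hTcov a ha)
  set Pl : List (V × V) := (L.filter (fun p => p.2)).map Prod.fst with hPl
  set Nl : List (V × V) := (L.filter (fun p => !p.2)).map (fun p => (p.1.2, p.1.1)) with hNl
  have hLnodup : (L.map (fun p => p.1.1)).Nodup := by
    simpa [List.map_map, Function.comp_def] using hnodup
  have hNlnodup : Nl.Nodup := by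
    have h1 : ((L.filter (fun p => !p.2)).map (fun p => p.1.1)).Nodup :=
      hLnodup.sublist ((List.filter_sublist (l := L)).map _)
    have h2 : Nl.map Prod.snd = (L.filter (fun p => !p.2)).map (fun p => p.1.1) := by
      rw [hNl, List.map_map]; rfl
    exact List.Nodup.of_map Prod.snd (by rw [h2]; exact h1)
  have hNmem : ∀ a ∈ Nl, a ∈ A ∧ 2 ≤ T.count a := by
    intro a ha
    obtain ⟨p, hpf, rfl⟩ := List.mem_map.mp ha
    have hpL : p ∈ L := (List.mem_filter.mp hpf).1
    have hpfalse : p.2 = false := by simpa using (List.mem_filter.mp hpf).2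
    obtain ⟨hA, hlt⟩ := (harcs p hpL).2 hpfalse
    have hWc : 0 < W.count (p.1.2, p.1.1) := List.count_pos_iff.mpr (hW.2 _ hA)
    exact ⟨hA, by omega⟩
  have hPmem : ∀ a ∈ Pl, a ∈ A := by
    intro a ha
    obtain ⟨p, hpf, rfl⟩ := List.mem_map.mp ha
    have hpL : p ∈ L := (List.mem_filter.mp hpf).1
    have htrue : p.2 = true := by simpa using (List.mem_filter.mp hpf).2
    exact ((harcs p hpL).1 htrue).1
  have hNle : (↑Nl : Multiset (V × V)) ≤ ↑T := by
    rw [Multiset.le_iff_count]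
    intro a
    by_cases ha : a ∈ Nl
    · have h1m : Multiset.count a (↑Nl : Multiset (V × V)) ≤ 1 := by
        rw [Multiset.coe_count]; exact ((@List.nodup_iff_count_le_one _ instBEqOfDecidableEq _ _).mp hNlnodup) a
      have h2m : 2 ≤ Multiset.count a (↑T : Multiset (V × V)) := by
        rw [Multiset.coe_count, ← count_bridge]; exact (hNmem a ha).2
      omega
    · have h1m : Multiset.count a (↑Nl : Multiset (V × V)) = 0 :=
        Multiset.count_eq_zero.mpr (by simpa using ha)
      omega
  set N : Multiset (V × V) := ↑T + ↑Pl - ↑Nl with hN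
  have hNsum : N + ↑Nl = ↑T + ↑Pl :=
    tsub_add_cancel_of_le (hNle.trans (Multiset.le_add_right _ _))
  have hNA : ∀ a : V × V, a ∈ N ↔ a ∈ A := by
    intro a
    constructor
    · intro haN
      have h1 : a ∈ (↑T + ↑Pl : Multiset (V × V)) :=
        Multiset.mem_of_le tsub_le_self haN
      rcases Multiset.mem_add.mp h1 with h | h
      · exact hTA a (by exact_mod_cast h)
      · exact hPmem a (by exact_mod_cast h)
    · intro haA
      have hc := congrArg (Multiset.count a) hNsum
      rw [Multiset.count_add, Multiset.count_add] at hc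
      have hTc : 0 < Multiset.count a (↑T : Multiset (V × V)) := by
        rw [Multiset.coe_count, ← count_bridge]
        exact List.count_pos_iff.mpr (hTcov a haA)
      rw [← Multiset.count_pos]
      by_cases haNl : a ∈ Nl
      · have h1m : Multiset.count a (↑Nl : Multiset (V × V)) ≤ 1 := by
          rw [Multiset.coe_count]; exact ((@List.nodup_iff_count_le_one _ instBEqOfDecidableEq _ _).mp hNlnodup) a
        have h2m : 2 ≤ Multiset.count a (↑T : Multiset (V × V)) := by
          rw [Multiset.coe_count, ← count_bridge]; exact (hNmem a haNl).2
        omega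
      · have h1m : Multiset.count a (↑Nl : Multiset (V × V)) = 0 :=
          Multiset.count_eq_zero.mpr (by simpa using haNl)
        omega
  have hTbal := bal_closed T hTne hTch hTcl
  have hbalN : ∀ u : V, Multiset.countP (fun p => p.1 = u) N
      = Multiset.countP (fun p => p.2 = u) N := by
    intro u
    have h1 := congrArg (Multiset.countP (fun p : V × V => p.1 = u)) hNsum
    have h2 := congrArg (Multiset.countP (fun p : V × V => p.2 = u)) hNsum
    simp only [Multiset.countP_add, Multiset.coe_countP] at h1 h2
    have h3 := hTbal u
    have h4 := bal_closed (L.map Prod.fst) (by simpa using hne) hchain hclosed u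
    simp only [hPl, hNl, List.countP_map, List.countP_filter, Function.comp_def] at h1 h2 h4
    have h5 := countP_partition L (fun x => decide (x.1.1 = u)) (fun x => x.2)
    have h6 := countP_partition L (fun x => decide (x.1.2 = u)) (fun x => x.2)
    omega
  obtain ⟨a0, ha0A⟩ := hAex
  have ha0N : a0 ∈ N := (hNA a0).mpr ha0A
  have hNtoFin : N.toFinset = A := Finset.ext fun a => by
    rw [Multiset.mem_toFinset]; exact hNA a
  have hconnN : (UGraph N.toFinset).Connected := by rw [hNtoFin]; exact hconn
  obtain ⟨C, hCne, hCch, hCh, hCl, hCle⟩ := extract_closed_s9 N hbalN a0 ha0N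
  have hCcl : C.getLast?.map Prod.snd = C.head?.map Prod.fst := by rw [hCl, hCh]
  set M0 : Multiset (V × V) := N - ↑C with hM0
  have hM0sum : (↑C : Multiset (V × V)) + M0 = N := by
    rw [hM0, add_comm]; exact tsub_add_cancel_of_le hCle
  have hbalM0 : ∀ u : V, Multiset.countP (fun p => p.1 = u) M0
      = Multiset.countP (fun p => p.2 = u) M0 := by
    intro u
    have h1 := congrArg (Multiset.countP (fun p : V × V => p.1 = u)) hM0sum
    have h2 := congrArg (Multiset.countP (fun p : V × V => p.2 = u)) hM0sum
    simp only [Multiset.countP_add, Multiset.coe_countP] at h1 h2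
    have hCb := bal_closed C hCne hCch hCcl u
    have h3 := hbalN u
    omega
  obtain ⟨L', hL'ne, hL'ch, hL'cl, hL'N⟩ := euler_main N hconnN (Multiset.card M0) M0 C rfl
    hbalM0 hCne hCch hCcl hM0sum
  have hL'mem : ∀ a ∈ L', a ∈ A := fun a ha =>
    (hNA a).mp (by rw [← hL'N]; exact_mod_cast ha)
  have hL'cov : ∀ a ∈ A, a ∈ L' := fun a ha => by
    have h := (hNA a).mpr ha
    rw [← hL'N] at h; exact_mod_cast h
  have hle := hTopt L' ⟨⟨hL'mem, hL'ch, hL'cl⟩, hL'cov⟩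
  have hWsum : walkWeight ω L' + (Nl.map ω).sum = walkWeight ω T + (Pl.map ω).sum := by
    have h := congrArg (fun M : Multiset (V × V) => (M.map ω).sum) hNsum
    rw [← hL'N] at h
    simpa [walkWeight] using h
  rw [sum_split ω L, ← hPl, ← hNl]
  omega
end

section
/- Let G=(V,A) be a connected digraph with nonnegative integer arc weights ω, let 0 ≤ b ≤ c and k ≥ 1 be integers, and let ρ ≥ 0 be an integer. There is a k[b,c]-DWCP solution on G of weight ρ and no k[b,c]-DWCP solution of smaller weight, if and only if ρ is the minimum value of Σ_{j=1}^k Σ_{a ∈ G_j} ω(a) (arcs counted with multiplicity) over all tuples (G_1,...,G_k) of non-empty directed multigraphs satisfying: every arc of each G_j is an arc of G; every vertex of G_1 is balanced; for each 2 ≤ j ≤ k, G_j has no parallel arcs and every vertex of G_j is balanced; and every arc of G occurs, in total, between b and c times in the multiset union G_1 ∪ ... ∪ G_k. In particular, a k[b,c]-DWCP solution on G exists if and only if such a tuple exists. -/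
/-- A k[b,c]-DWCP solution: `k` non-empty closed directed walks such that every arc of
the digraph is traversed, in total, at least `b` and at most `c` times. -/
def IsDWCP {V : Type} [Fintype V] [DecidableEq V] (A : Finset (V × V)) (b c k : ℕ)
    (W : Fin k → List (V × V)) : Prop :=
  (∀ i, W i ≠ [] ∧ IsClosedWalk A (W i)) ∧
    ∀ a ∈ A, b ≤ (∑ i, (W i).count a) ∧ (∑ i, (W i).count a) ≤ c

/-- The tuples of multigraphs appearing in the statement: each `Gs j` is non-empty, uses
only arcs of `G`, and is balanced; `Gs j` for `j ≠ 0` has no parallel arcs; and every arc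
of `G` occurs between `b` and `c` times in the multiset union of the `Gs j`. -/
def GoodTuple {V : Type} [Fintype V] (A : Finset (V × V)) (b c k : ℕ)
    (Gs : Fin k → V × V → ℕ) : Prop :=
  (∀ j, ∃ a, Gs j a ≠ 0) ∧
  (∀ j a, Gs j a ≠ 0 → a ∈ A) ∧
  (∀ j (v : V), (∑ u, Gs j (u, v)) = ∑ u, Gs j (v, u)) ∧
  (∀ j : Fin k, (j : ℕ) ≠ 0 → ∀ a, Gs j a ≤ 1) ∧
  (∀ a ∈ A, b ≤ (∑ j, Gs j a) ∧ (∑ j, Gs j a) ≤ c)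


/-- Shape of a closed walk (chain + wrap-around), without the arc-set condition. -/
def CW {V : Type} (L : List (V × V)) : Prop :=
  List.Chain' (fun p q => p.2 = q.1) L ∧ L.getLast?.map Prod.snd = L.head?.map Prod.fst

namespace CWaux
variable {V : Type}

theorem mod_lt_of_lt {i n : ℕ} (h : i < n) : (i + 1) % n < n := Nat.mod_lt _ (by omega)

theorem cw_iff (L : List (V × V)) :
    CW L ↔ ∀ i (h : i < L.length),
      (L.get ⟨i, h⟩).2 = (L.get ⟨(i+1) % L.length, mod_lt_of_lt h⟩).1 := by
  rcases eq_or_ne L [] with rfl | hne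
  · simp [CW, List.Chain']
  · have hlen : 0 < L.length := List.length_pos_iff.2 hne
    have hlast : L.getLast hne = L.get ⟨L.length - 1, by omega⟩ := by
      rw [List.getLast_eq_getElem]; simp [List.get_eq_getElem]
    have hhead : L.head hne = L.get ⟨0, hlen⟩ := (List.get_mk_zero hlen).symm
    constructor
    · rintro ⟨hch, hcl⟩ i h
      rcases lt_or_ge (i+1) L.length with h1 | h1
      · have := List.isChain_iff_getElem.1 hch i (by omega)
        simpa [Nat.mod_eq_of_lt h1] using this
      · have hi : i = L.length - 1 := by omega
        have hmod : (i+1) % L.length = 0 := by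
          have : i + 1 = L.length := by omega
          simp [this]
        subst hi
        rw [List.getLast?_eq_getLast hne, List.head?_eq_head hne] at hcl
        simp only [Option.map_some] at hcl
        rw [hlast, hhead] at hcl
        have hcl' := Option.some.inj hcl
        simp only [hmod]
        exact hcl'
    · intro hidx
      constructor
      · show List.IsChain _ L
        rw [List.isChain_iff_getElem]
        intro i h
        have := hidx i (by omega)
        have hm : (i+1) % L.length = i+1 := Nat.mod_eq_of_lt (by omega)
        simpa [hm] using this
      · have := hidx (L.length - 1) (by omega)
        have hm : (L.length - 1 + 1) % L.length = 0 := by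
          have : L.length - 1 + 1 = L.length := by omega
          simp [this]
        rw [List.getLast?_eq_getLast hne, List.head?_eq_head hne]
        simp only [Option.map_some]
        rw [hlast, hhead]
        exact congrArg some (by simpa [hm] using this)

theorem cw_rotate {L : List (V × V)} (h : CW L) (n : ℕ) : CW (L.rotate n) := by
  rcases eq_or_ne L [] with rfl | hne
  · simpa using h
  have hlen : 0 < L.length := List.length_pos_iff.2 hne
  rw [cw_iff] at h ⊢
  intro i hi
  have hlr : (L.rotate n).length = L.length := List.length_rotate L n
  rw [List.get_rotate, List.get_rotate]
  have key := h ((i + n) % L.length) (Nat.mod_lt _ hlen)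
  convert key using 3
  apply Fin.ext
  simp only [Fin.val_mk, hlr]
  rw [Nat.mod_add_mod, Nat.mod_add_mod]
  congr 1
  omega

theorem cw_head_fst {L : List (V × V)} (hne : L ≠ []) (h : CW L) :
    (L.getLast hne).2 = (L.head hne).1 := by
  have := h.2
  rw [List.getLast?_eq_getLast hne, List.head?_eq_head hne] at this
  simpa using this

/-- For a closed walk, the list of heads is a rotation of the list of tails. -/
theorem map_snd_eq_rotate {L : List (V × V)} (h : CW L) :
    L.map Prod.snd = (L.map Prod.fst).rotate 1 := by
  rcases eq_or_ne L [] with rfl | hne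
  · simp
  have hlen : 0 < L.length := List.length_pos_iff.2 hne
  apply List.ext_get
  · simp [List.length_rotate]
  intro i h1 h2
  have h1' : i < L.length := by simpa using h1
  rw [List.get_rotate]
  simp only [List.get_eq_getElem, List.getElem_map]
  have := (cw_iff L).1 h i h1'
  simp only [List.get_eq_getElem] at this
  simp only [List.length_map]
  convert this using 3

theorem count_snd (L : List (V × V)) (v : V) [DecidableEq V] [Fintype V] :
    ∑ u, L.count (u, v) = (L.map Prod.snd).count v := by
  induction L with
  | nil => simp
  | cons a L ih =>
    simp only [List.count_cons, List.map_cons]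
    rw [Finset.sum_add_distrib, ih]
    congr 1
    rcases eq_or_ne a.2 v with hv | hv
    · rw [Finset.sum_eq_single a.1]
      · simp [Prod.ext_iff, hv.symm]
      · intro u _ hu; simp [Prod.ext_iff]; intro h; exact absurd h.symm hu
      · simp
    · rw [Finset.sum_eq_zero]
      · simp [hv]
      · intro u _; simp [Prod.ext_iff]; intro _ h; exact absurd h hv

theorem count_fst (L : List (V × V)) (v : V) [DecidableEq V] [Fintype V] :
    ∑ u, L.count (v, u) = (L.map Prod.fst).count v := by
  induction L with
  | nil => simp
  | cons a L ih =>
    simp only [List.count_cons, List.map_cons]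
    rw [Finset.sum_add_distrib, ih]
    congr 1
    rcases eq_or_ne a.1 v with hv | hv
    · rw [Finset.sum_eq_single a.2]
      · simp [Prod.ext_iff, hv.symm]
      · intro u _ hu; simp [Prod.ext_iff]; intro _ h; exact absurd h.symm hu
      · simp
    · rw [Finset.sum_eq_zero]
      · simp [hv]
      · intro u _; simp [Prod.ext_iff]; intro h; exact absurd h hv

theorem cw_balanced {L : List (V × V)} (h : CW L) (v : V) [DecidableEq V] [Fintype V] :
    ∑ u, L.count (u, v) = ∑ u, L.count (v, u) := by
  rw [count_snd, count_fst, map_snd_eq_rotate h]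
  exact (List.rotate_perm _ _).count_eq v

theorem mem_snd {L : List (V × V)} (h : CW L) {a : V × V} (ha : a ∈ L) :
    a.2 ∈ L.map Prod.fst := by
  have : a.2 ∈ L.map Prod.snd := List.mem_map_of_mem ha
  rw [map_snd_eq_rotate h] at this
  exact (List.rotate_perm _ _).mem_iff.1 this

theorem mem_fst {L : List (V × V)} {a : V × V} (ha : a ∈ L) :
    a.1 ∈ L.map Prod.fst := List.mem_map_of_mem ha

end CWaux

namespace CWaux
variable {V : Type} [DecidableEq V]

theorem perm_count {α : Type*} [BEq α] {l1 l2 : List α} (h : l1.Perm l2) (a : α) :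
    l1.count a = l2.count a := by
  unfold List.count; exact h.countP_eq _

theorem ne_nil_rotate {L : List (V × V)} (h : L ≠ []) (n : ℕ) : L.rotate n ≠ [] := by
  intro hc
  have := congrArg List.length hc
  rw [List.length_rotate] at this
  exact h (List.length_eq_zero_iff.1 (by simpa using this))

/-- Rotate a closed walk so that it starts (and ends) at `v`. -/
theorem rot_to {L : List (V × V)} (h : CW L) (hne : L ≠ []) {v : V}
    (hv : v ∈ L.map Prod.fst) :
    ∃ L' : List (V × V), CW L' ∧ (∃ hne' : L' ≠ [],
      (L'.head hne').1 = v ∧ (L'.getLast hne').2 = v) ∧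
      (∀ a, L'.count a = L.count a) ∧ (∀ a, a ∈ L' ↔ a ∈ L) := by
  rw [List.mem_map] at hv
  obtain ⟨a, haL, hafst⟩ := hv
  obtain ⟨i, hia⟩ := List.mem_iff_get.1 haL
  refine ⟨L.rotate i, cw_rotate h i, ?_, ?_, ?_⟩
  · have hne' : L.rotate i ≠ [] := ne_nil_rotate hne i
    refine ⟨hne', ?_, ?_⟩
    · have h0 : 0 < (L.rotate i).length := List.length_pos_iff.2 hne'
      have : (L.rotate i).head hne' = (L.rotate i).get ⟨0, h0⟩ := (List.get_mk_zero h0).symm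
      rw [this, List.get_rotate]
      have : (⟨(↑(⟨0, h0⟩ : Fin (L.rotate i).length) + i) % L.length,
          Nat.mod_lt _ (List.length_pos_iff.2 hne)⟩ : Fin L.length) = i := by
        apply Fin.ext
        simp [Nat.mod_eq_of_lt i.isLt]
      rw [this, hia, hafst]
    · have hh := cw_head_fst hne' (cw_rotate h i)
      rw [hh]
      have h0 : 0 < (L.rotate i).length := List.length_pos_iff.2 hne'
      have : (L.rotate i).head hne' = (L.rotate i).get ⟨0, h0⟩ := (List.get_mk_zero h0).symm
      rw [this, List.get_rotate]
      have : (⟨(↑(⟨0, h0⟩ : Fin (L.rotate i).length) + i) % L.length,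
          Nat.mod_lt _ (List.length_pos_iff.2 hne)⟩ : Fin L.length) = i := by
        apply Fin.ext
        simp [Nat.mod_eq_of_lt i.isLt]
      rw [this, hia, hafst]
  · exact fun a => perm_count (List.rotate_perm L _) a
  · exact fun a => (List.rotate_perm L i).mem_iff

/-- Merge two closed walks sharing the vertex `v`. -/
theorem cw_merge {L1 L2 : List (V × V)} (h1 : CW L1) (h2 : CW L2)
    (hne1 : L1 ≠ []) (hne2 : L2 ≠ []) {v : V}
    (hv1 : v ∈ L1.map Prod.fst) (hv2 : v ∈ L2.map Prod.fst) :
    ∃ L : List (V × V), CW L ∧ L ≠ [] ∧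
      (∀ a, L.count a = L1.count a + L2.count a) ∧
      (∀ a, a ∈ L ↔ a ∈ L1 ∨ a ∈ L2) := by
  obtain ⟨M1, hM1, ⟨hM1ne, hM1h, hM1l⟩, hM1c, hM1m⟩ := rot_to h1 hne1 hv1
  obtain ⟨M2, hM2, ⟨hM2ne, hM2h, hM2l⟩, hM2c, hM2m⟩ := rot_to h2 hne2 hv2
  refine ⟨M1 ++ M2, ⟨?_, ?_⟩, by simp [hM1ne], ?_, ?_⟩
  · refine hM1.1.append hM2.1 ?_
    intro x hx y hy
    rw [List.getLast?_eq_getLast hM1ne] at hx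
    rw [List.head?_eq_head hM2ne] at hy
    simp only [Option.mem_def, Option.some.injEq] at hx hy
    subst hx; subst hy
    rw [hM1l, hM2h]
  · rw [List.getLast?_append, List.getLast?_eq_getLast hM2ne,
      List.head?_append_of_ne_nil _ hM1ne, List.head?_eq_head hM1ne]
    simp only [Option.some_or, Option.map_some]
    rw [hM2l, hM1h]
  · intro a
    rw [List.count_append, hM1c, hM2c]
  · intro a
    rw [List.mem_append, hM1m, hM2m]

end CWaux

namespace CWaux
variable {V : Type} [Fintype V] [DecidableEq V]

noncomputable def nxt (N : V × V → ℕ) (v : V) : V :=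
  if h : ∃ u, N (v, u) ≠ 0 then h.choose else v

theorem nxt_spec {N : V × V → ℕ} (hbal : ∀ v, ∑ u, N (u, v) = ∑ u, N (v, u))
    {v : V} (h : ∃ u, N (u, v) ≠ 0) : N (v, nxt N v) ≠ 0 := by
  have hex : ∃ u, N (v, u) ≠ 0 := by
    by_contra hc
    push_neg at hc
    obtain ⟨u, hu⟩ := h
    have h1 : ∑ u, N (v, u) = 0 := Finset.sum_eq_zero (fun u _ => hc u)
    have h2 : ∑ u, N (u, v) = 0 := by rw [hbal]; exact h1
    exact hu (Finset.sum_eq_zero_iff.1 h2 u (Finset.mem_univ u))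
  rw [nxt, dif_pos hex]
  exact hex.choose_spec

theorem cycle_extract (N : V × V → ℕ) (hbal : ∀ v, ∑ u, N (u, v) = ∑ u, N (v, u))
    (hne : ∃ a, N a ≠ 0) :
    ∃ L : List (V × V), L ≠ [] ∧ CW L ∧ (L.map Prod.fst).Nodup ∧ ∀ a ∈ L, N a ≠ 0 := by
  classical
  obtain ⟨a0, ha0⟩ := hne
  set g : ℕ → V := fun n => (nxt N)^[n] a0.2 with hg
  have hin : ∀ n, ∃ u, N (u, g n) ≠ 0 := by
    intro n
    induction n with
    | zero => exact ⟨a0.1, by simpa [hg] using ha0⟩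
    | succ n ih =>
      refine ⟨g n, ?_⟩
      have he : g (n+1) = nxt N (g n) := Function.iterate_succ_apply' _ _ _
      rw [he]
      exact nxt_spec hbal ih
  have harc : ∀ n, N (g n, g (n+1)) ≠ 0 := by
    intro n
    have he : g (n+1) = nxt N (g n) := Function.iterate_succ_apply' _ _ _
    rw [he]
    exact nxt_spec hbal (hin n)
  have hpig : ∃ d, 0 < d ∧ ∃ m, g m = g (m + d) := by
    obtain ⟨x, y, hxy, hgxy⟩ := Fintype.exists_ne_map_eq_of_card_lt
      (fun i : Fin (Fintype.card V + 1) => g i) (by simp)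
    rcases lt_or_gt_of_ne (show (x:ℕ) ≠ y from fun h => hxy (Fin.ext h)) with h | h
    · exact ⟨y - x, by omega, x, by rw [hgxy]; congr 1; omega⟩
    · exact ⟨x - y, by omega, y, by rw [← hgxy]; congr 1; omega⟩
  obtain ⟨hDpos, m, hm⟩ := Nat.find_spec hpig
  set D := Nat.find hpig with hD
  have hinj : ∀ i j, i < j → j < D → g (m + i) ≠ g (m + j) := by
    intro i j hij hjD hc
    exact Nat.find_min hpig (show j - i < D by omega)
      ⟨by omega, m + i, by rw [hc]; congr 1; omega⟩
  set L : List (V × V) := (List.range D).map (fun i => (g (m + i), g (m + i + 1))) with hL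
  have hlen : L.length = D := by simp [hL]
  have hget : ∀ i (h : i < D), L.get ⟨i, by omega⟩ = (g (m + i), g (m + i + 1)) := by
    intro i h
    simp [hL, List.get_eq_getElem]
  have hneL : L ≠ [] := by
    intro hc
    rw [← List.length_eq_zero_iff, hlen] at hc
    omega
  refine ⟨L, hneL, ?_, ?_, ?_⟩
  · rw [cw_iff]
    intro i h
    have hiD : i < D := by omega
    rw [hget i hiD]
    rcases lt_or_ge (i + 1) D with h1 | h1
    · have hmod : (i + 1) % L.length = i + 1 := Nat.mod_eq_of_lt (by omega)
      simp only [hmod]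
      rw [hget (i + 1) h1]
      simp [Nat.add_assoc]
    · have hi1 : i + 1 = D := by omega
      have hmod : (i + 1) % L.length = 0 := by rw [hlen, hi1]; simp
      simp only [hmod]
      rw [hget 0 (by omega)]
      simp only
      rw [show m + i + 1 = m + D by omega, ← hm]
      norm_num
  · rw [hL, List.map_map]
    refine List.Nodup.map_on ?_ List.nodup_range
    intro i hi j hj hij
    simp only [List.mem_range] at hi hj
    by_contra hc
    rcases lt_or_gt_of_ne hc with h | h
    · exact hinj i j h hj hij
    · exact hinj j i h hi hij.symm
  · intro a ha
    rw [hL, List.mem_map] at ha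
    obtain ⟨i, _, rfl⟩ := ha
    have := harc (m + i)
    simpa [Nat.add_assoc] using this

end CWaux

namespace CWaux
variable {V : Type} [Fintype V] [DecidableEq V]

theorem count_le_one_of_nodup' {α : Type*} [BEq α] [LawfulBEq α] {l : List α}
    (h : l.Nodup) (a : α) : l.count a ≤ 1 := by
  induction l with
  | nil => simp
  | cons x l ih =>
    rw [List.nodup_cons] at h
    rw [List.count_cons]
    by_cases hax : x = a
    · subst hax
      have : l.count x = 0 := List.count_eq_zero_of_not_mem h.1
      simp [this]
    · simp only [beq_iff_eq, hax, if_false]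
      simpa using ih h.2

theorem sum_map_eq_sum_count (ω : V × V → ℕ) (L : List (V × V)) :
    (L.map ω).sum = ∑ a, L.count a * ω a := by
  induction L with
  | nil => simp
  | cons x L ih =>
    simp only [List.map_cons, List.sum_cons, List.count_cons, ih]
    have h2 : ∑ a : V × V, (if x = a then 1 else 0) * ω a = ω x := by
      rw [Finset.sum_eq_single x]
      · simp
      · intro b _ hb; simp [Ne.symm hb]
      · simp
    calc ω x + ∑ a, L.count a * ω a
        = ∑ a, L.count a * ω a + ∑ a : V × V, (if x = a then 1 else 0) * ω a := by
          rw [h2]; ring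
      _ = ∑ a : V × V, (L.count a + if x = a then 1 else 0) * ω a := by
          rw [← Finset.sum_add_distrib]
          exact Finset.sum_congr rfl (fun a _ => by ring)
      _ = ∑ a : V × V, (L.count a + if (x == a) then 1 else 0) * ω a := by
          exact Finset.sum_congr rfl (fun a _ => by simp [beq_iff_eq])

theorem count_pos_of_ne_nil {L : List (V × V)} (h : L ≠ []) :
    0 < ∑ a, L.count a := by
  obtain ⟨x, hx⟩ := List.exists_mem_of_ne_nil L h
  have : 0 < L.count x := List.count_pos_iff.2 hx
  calc 0 < L.count x := this
    _ ≤ ∑ a, L.count a := Finset.single_le_sum (f := fun a => L.count a) (fun a _ => Nat.zero_le _) (Finset.mem_univ x)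

theorem decompose : ∀ (n : ℕ) (N : V × V → ℕ), (∑ a, N a) = n →
    (∀ v, ∑ u, N (u, v) = ∑ u, N (v, u)) →
    ∃ ℓ : List (List (V × V)), (∀ L ∈ ℓ, L ≠ [] ∧ CW L ∧ ∀ a ∈ L, N a ≠ 0) ∧
      (∀ a, (ℓ.map (fun L => L.count a)).sum = N a) := by
  intro n
  induction n using Nat.strong_induction_on with
  | _ n ih =>
    intro N hn hbal
    by_cases hN : ∀ a, N a = 0
    · exact ⟨[], by simp, fun a => by simp [hN a]⟩
    · push_neg at hN
      obtain ⟨L, hLne, hLcw, hLnd, hLmem⟩ := cycle_extract N hbal hN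
      have hcle : ∀ a, L.count a ≤ N a := by
        intro a
        by_cases ha : a ∈ L
        · have h1 : L.count a ≤ 1 := count_le_one_of_nodup' (hLnd.of_map _) a
          have h2 : 1 ≤ N a := Nat.one_le_iff_ne_zero.2 (hLmem a ha)
          omega
        · rw [List.count_eq_zero_of_not_mem ha]; omega
      set N' : V × V → ℕ := fun a => N a - L.count a with hN'
      have hbal' : ∀ v, ∑ u, N' (u, v) = ∑ u, N' (v, u) := by
        intro v
        have e1 : ∑ u, N' (u, v) = ∑ u, N (u, v) - ∑ u, L.count (u, v) :=
          Finset.sum_tsub_distrib _ (fun u _ => hcle (u, v))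
        have e2 : ∑ u, N' (v, u) = ∑ u, N (v, u) - ∑ u, L.count (v, u) :=
          Finset.sum_tsub_distrib _ (fun u _ => hcle (v, u))
        rw [e1, e2, hbal v, cw_balanced hLcw v]
      have hsum' : ∑ a, N' a = n - ∑ a, L.count a := by
        rw [hN']
        rw [Finset.sum_tsub_distrib _ (fun a _ => hcle a), hn]
      have hlt : ∑ a, N' a < n := by
        have h1 : 0 < ∑ a, L.count a := count_pos_of_ne_nil hLne
        have h2 : ∑ a, L.count a ≤ n := by
          rw [← hn]; exact Finset.sum_le_sum (fun a _ => hcle a)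
        omega
      obtain ⟨ℓ', hℓ'1, hℓ'2⟩ := ih _ hlt N' rfl hbal'
      refine ⟨L :: ℓ', ?_, ?_⟩
      · intro M hM
        rcases List.mem_cons.1 hM with rfl | hM'
        · exact ⟨hLne, hLcw, hLmem⟩
        · obtain ⟨h1, h2, h3⟩ := hℓ'1 M hM'
          refine ⟨h1, h2, fun a ha => ?_⟩
          have := h3 a ha
          have := hcle a
          simp only [hN'] at *
          omega
      · intro a
        simp only [List.map_cons, List.sum_cons, hℓ'2 a, hN']
        have := hcle a
        omega

end CWaux

namespace CWaux
variable {V : Type} [Fintype V] [DecidableEq V]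

theorem perm_cons_erase' {α : Type*} [BEq α] [LawfulBEq α] {a : α} {l : List α}
    (h : a ∈ l) : l.Perm (a :: l.erase a) := by
  induction l with
  | nil => cases h
  | cons b l ih =>
    by_cases hb : b = a
    · subst hb; rw [List.erase_cons_head]
    · have hba : ¬((b == a) = true) := by simp [hb]
      rw [List.erase_cons_tail hba]
      have h' : a ∈ l := by
        rcases List.mem_cons.1 h with h1 | h1
        · exact absurd h1.symm hb
        · exact h1
      exact ((ih h').cons b).trans (List.Perm.swap a b _)

theorem walk_pres {A : Finset (V × V)} (S : Set V)
    (hpres : ∀ u w, (UGraph A).Adj u w → (u ∈ S ↔ w ∈ S)) :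
    ∀ x y, (UGraph A).Walk x y → (x ∈ S ↔ y ∈ S) := by
  intro x y p
  induction p with
  | nil => rfl
  | cons h q ihq => exact (hpres _ _ h).trans ihq

theorem pool_merge (A : Finset (V × V)) (hconn : (UGraph A).Connected)
    {k : ℕ} (hk : 1 ≤ k) :
    ∀ (n : ℕ) (pool : List (List (V × V))) (W : Fin k → List (V × V)),
    pool.length = n →
    (∀ j, W j ≠ [] ∧ CW (W j) ∧ ∀ a ∈ W j, a ∈ A) →
    (∀ L ∈ pool, L ≠ [] ∧ CW L ∧ ∀ a ∈ L, a ∈ A) →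
    (∀ a ∈ A, (∃ j, a ∈ W j) ∨ (∃ L ∈ pool, a ∈ L)) →
    ∃ W' : Fin k → List (V × V),
      (∀ j, W' j ≠ [] ∧ CW (W' j) ∧ ∀ a ∈ W' j, a ∈ A) ∧
      (∀ a, ∑ j, (W' j).count a
        = (∑ j, (W j).count a) + (pool.map (fun L => L.count a)).sum) := by
  intro n
  induction n with
  | zero =>
    intro pool W hlen hW hpool hcov
    have : pool = [] := List.length_eq_zero_iff.1 hlen
    subst this
    exact ⟨W, hW, fun a => by simp⟩
  | succ n ihn =>
    intro pool W hlen hW hpool hcov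
    have hpoolne : pool ≠ [] := by intro hc; rw [hc] at hlen; simp at hlen
    by_cases hshare : ∃ L ∈ pool, ∃ j : Fin k, ∃ v,
        v ∈ L.map Prod.fst ∧ v ∈ (W j).map Prod.fst
    · obtain ⟨L, hLp, j, v, hv1, hv2⟩ := hshare
      obtain ⟨hLne, hLcw, hLA⟩ := hpool L hLp
      obtain ⟨hWne, hWcw, hWA⟩ := hW j
      obtain ⟨M, hMcw, hMne, hMcnt, hMmem⟩ := cw_merge hWcw hLcw hWne hLne hv2 hv1
      set W' := Function.update W j M with hW'
      set pool' := pool.erase L with hpool'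
      have hlen' : pool'.length = n := by
        rw [hpool', List.length_erase_of_mem hLp, hlen]
        omega
      have hWprop : ∀ j', W' j' ≠ [] ∧ CW (W' j') ∧ ∀ a ∈ W' j', a ∈ A := by
        intro j'
        rcases eq_or_ne j' j with rfl | hne
        · rw [hW', Function.update_self]
          exact ⟨hMne, hMcw, fun a ha => ((hMmem a).1 ha).elim (hWA a) (hLA a)⟩
        · rw [hW', Function.update_of_ne hne]
          exact hW j'
      have hpoolprop : ∀ L' ∈ pool', L' ≠ [] ∧ CW L' ∧ ∀ a ∈ L', a ∈ A :=
        fun L' hL' => hpool L' (List.mem_of_mem_erase hL')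
      have hcov' : ∀ a ∈ A, (∃ j', a ∈ W' j') ∨ (∃ L' ∈ pool', a ∈ L') := by
        intro a ha
        rcases hcov a ha with ⟨j', hj'⟩ | ⟨L', hL'p, hL'a⟩
        · left
          rcases eq_or_ne j' j with rfl | hne
          · exact ⟨j', by rw [hW', Function.update_self]; exact (hMmem a).2 (Or.inl hj')⟩
          · exact ⟨j', by rw [hW', Function.update_of_ne hne]; exact hj'⟩
        · rcases eq_or_ne L' L with rfl | hne
          · left
            exact ⟨j, by rw [hW', Function.update_self]; exact (hMmem a).2 (Or.inr hL'a)⟩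
          · right
            exact ⟨L', (List.mem_erase_of_ne hne).2 hL'p, hL'a⟩
      obtain ⟨W'', hW''prop, hW''cnt⟩ := ihn pool' W' hlen' hWprop hpoolprop hcov'
      refine ⟨W'', hW''prop, fun a => ?_⟩
      rw [hW''cnt a]
      have e1 : ∑ j', (W' j').count a = (∑ j', (W j').count a) + L.count a := by
        have h1 : ∀ (f : Fin k → ℕ), ∑ j', f j'
            = (∑ j' ∈ Finset.univ.erase j, f j') + f j :=
          fun f => (Finset.sum_erase_add _ _ (Finset.mem_univ j)).symm
        rw [h1 (fun j' => (W' j').count a), h1 (fun j' => (W j').count a)]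
        have h2 : ∑ j' ∈ Finset.univ.erase j, (W' j').count a
            = ∑ j' ∈ Finset.univ.erase j, (W j').count a :=
          Finset.sum_congr rfl (fun x hx => by
            rw [hW', Function.update_of_ne (Finset.ne_of_mem_erase hx)])
        rw [h2, hW', Function.update_self, hMcnt a]
        ring
      have e2 : (pool.map (fun L => L.count a)).sum
          = L.count a + ((pool'.map (fun L => L.count a)).sum) := by
        rw [hpool']
        have hperm : pool.Perm (L :: pool.erase L) := perm_cons_erase' hLp
        rw [(hperm.map (fun L => L.count a)).sum_eq, List.map_cons, List.sum_cons]
      rw [e1, e2]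
      ring
    · exfalso
      push_neg at hshare
      obtain ⟨L0, hL0p⟩ := List.exists_mem_of_ne_nil pool hpoolne
      obtain ⟨hL0ne, hL0cw, hL0A⟩ := hpool L0 hL0p
      set S : Set V := {v | ∃ j, v ∈ (W j).map Prod.fst} with hS
      have hpres : ∀ u w, (UGraph A).Adj u w → (u ∈ S ↔ w ∈ S) := by
        intro u w hadj
        rw [UGraph, SimpleGraph.fromRel_adj] at hadj
        obtain ⟨hne, harc⟩ := hadj
        have key : ∀ p q : V, (p, q) ∈ A → (p ∈ S ↔ q ∈ S) := by
          intro p q hpq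
          rcases hcov (p, q) hpq with ⟨j', hj'⟩ | ⟨L', hL'p, hL'a⟩
          · constructor
            · intro _; exact ⟨j', mem_snd (hW j').2.1 hj'⟩
            · intro _; exact ⟨j', mem_fst hj'⟩
          · constructor
            · rintro ⟨j', hj'⟩
              exact absurd hj' (by
                have := hshare L' hL'p j' p (mem_fst hL'a)
                exact this)
            · rintro ⟨j', hj'⟩
              exact absurd hj' (by
                have := hshare L' hL'p j' q (mem_snd (hpool L' hL'p).2.1 hL'a)
                exact this)
        rcases harc with h | h
        · exact key u w h
        · exact (key w u h).symm
      have hs : ((W ⟨0, hk⟩).head (hW ⟨0, hk⟩).1).1 ∈ S := by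
        refine ⟨⟨0, hk⟩, ?_⟩
        exact List.mem_map_of_mem (List.head_mem _)
      have ht : ((L0.head hL0ne).1 : V) ∉ S := by
        rintro ⟨j', hj'⟩
        exact hshare L0 hL0p j' (L0.head hL0ne).1
          (List.mem_map_of_mem (List.head_mem _)) hj'
      have hreach := (hconn.preconnected ((W ⟨0, hk⟩).head (hW ⟨0, hk⟩).1).1
        (L0.head hL0ne).1).some
      exact ht ((walk_pres S hpres _ _ hreach).1 hs)

end CWaux

namespace CWaux
variable {V : Type} [Fintype V] [DecidableEq V]

theorem cnt_le_of_cycle {L : List (V × V)} (hnd : (L.map Prod.fst).Nodup)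
    {N : V × V → ℕ} (hpos : ∀ a ∈ L, N a ≠ 0) (a : V × V) : L.count a ≤ N a := by
  by_cases ha : a ∈ L
  · have h1 : L.count a ≤ 1 := count_le_one_of_nodup' (hnd.of_map _) a
    have h2 : 1 ≤ N a := Nat.one_le_iff_ne_zero.2 (hpos a ha)
    omega
  · rw [List.count_eq_zero_of_not_mem ha]; omega

theorem dwcp_to_tuple {A : Finset (V × V)} {b c k : ℕ} (hk : 1 ≤ k)
    {W : Fin k → List (V × V)} (h : IsDWCP A b c k W) :
    ∃ Gs : Fin k → V × V → ℕ, GoodTuple A b c k Gs ∧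
      ∀ a, (∑ j, Gs j a) = ∑ j, (W j).count a := by
  classical
  set z : Fin k := ⟨0, hk⟩ with hz
  have hne : ∀ j, W j ≠ [] := fun j => (h.1 j).1
  have hcw : ∀ j, CW (W j) := fun j => ⟨(h.1 j).2.2.1, (h.1 j).2.2.2⟩
  have hmemA : ∀ j, ∀ a ∈ W j, a ∈ A := fun j => (h.1 j).2.1
  have hbal : ∀ j v, ∑ u, (W j).count (u, v) = ∑ u, (W j).count (v, u) :=
    fun j v => cw_balanced (hcw j) v
  have hNE : ∀ j, ∃ a, (W j).count a ≠ 0 := by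
    intro j
    obtain ⟨x, hx⟩ := List.exists_mem_of_ne_nil _ (hne j)
    exact ⟨x, (List.count_pos_iff.2 hx).ne'⟩
  choose K hKne hKcw hKnd hKpos using
    fun j => cycle_extract (fun a => (W j).count a) (hbal j) (hNE j)
  have hCle : ∀ j a, (K j).count a ≤ (W j).count a :=
    fun j => cnt_le_of_cycle (hKnd j) (hKpos j)
  set T : V × V → ℕ := fun a => ∑ i, (W i).count a with hT
  set S : V × V → ℕ := fun a => ∑ i ∈ Finset.univ.erase z, (K i).count a with hS
  have hScnt : ∀ a, S a + (W z).count a ≤ T a := by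
    intro a
    have h1 : S a ≤ ∑ i ∈ Finset.univ.erase z, (W i).count a :=
      Finset.sum_le_sum (fun i _ => hCle i a)
    have h2 : (∑ i ∈ Finset.univ.erase z, (W i).count a) + (W z).count a = T a :=
      Finset.sum_erase_add _ _ (Finset.mem_univ z)
    omega
  have hST : ∀ a, S a ≤ T a := fun a => by have := hScnt a; omega
  set Gs : Fin k → V × V → ℕ :=
    fun j => if j = z then (fun a => T a - S a) else fun a => (K j).count a with hGs
  have hsumG : ∀ a, (∑ j, Gs j a) = T a := by
    intro a
    rw [← Finset.sum_erase_add _ _ (Finset.mem_univ z)]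
    have h1 : ∑ j ∈ Finset.univ.erase z, Gs j a = S a := by
      refine Finset.sum_congr rfl (fun j hj => ?_)
      rw [hGs]
      simp only [Finset.ne_of_mem_erase hj, if_false]
    rw [h1, hGs]
    simp only [eq_self_iff_true, if_true]
    have := hST a
    omega
  have hGz : ∀ a, Gs z a = T a - S a := fun a => by rw [hGs]; simp
  have hGnz : ∀ j, j ≠ z → ∀ a, Gs j a = (K j).count a := fun j hj a => by
    rw [hGs]; simp only [hj, if_false]
  refine ⟨Gs, ⟨?_, ?_, ?_, ?_, ?_⟩, fun a => hsumG a⟩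
  · -- nonempty
    intro j
    rcases eq_or_ne j z with hjz | hjz
    · obtain ⟨x, hx⟩ := List.exists_mem_of_ne_nil _ (hne z)
      refine ⟨x, ?_⟩
      rw [hjz, hGz x]
      have h1 : 1 ≤ (W z).count x := List.count_pos_iff.2 hx
      have := hScnt x
      omega
    · obtain ⟨x, hx⟩ := List.exists_mem_of_ne_nil _ (hKne j)
      refine ⟨x, ?_⟩
      rw [hGnz j hjz x]
      exact (List.count_pos_iff.2 hx).ne'
  · -- arcs in A
    intro j a ha
    rcases eq_or_ne j z with hjz | hjz
    · rw [hjz, hGz a] at ha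
      have hTa : T a ≠ 0 := fun hc => ha (by omega)
      rw [hT] at hTa
      obtain ⟨i, _, hia⟩ := Finset.exists_ne_zero_of_sum_ne_zero hTa
      exact hmemA i a (List.count_pos_iff.1 (Nat.pos_of_ne_zero hia))
    · rw [hGnz j hjz a] at ha
      have hax : a ∈ K j := List.count_pos_iff.1 (Nat.pos_of_ne_zero ha)
      exact hmemA j a (List.count_pos_iff.1
        (Nat.pos_of_ne_zero (hKpos j a hax)))
  · -- balanced
    intro j v
    rcases eq_or_ne j z with hjz | hjz
    · have hTbal : ∀ w, ∑ u, T (u, w) = ∑ u, T (w, u) := by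
        intro w
        rw [hT]
        simp only
        rw [Finset.sum_comm, Finset.sum_comm (s := Finset.univ) (t := Finset.univ)
          (f := fun u i => (W i).count (w, u))]
        exact Finset.sum_congr rfl (fun i _ => hbal i w)
      have hSbal : ∀ w, ∑ u, S (u, w) = ∑ u, S (w, u) := by
        intro w
        rw [hS]
        simp only
        rw [Finset.sum_comm, Finset.sum_comm (s := Finset.univ)
          (f := fun u i => (K i).count (w, u))]
        exact Finset.sum_congr rfl (fun i _ => cw_balanced (hKcw i) w)
      rw [hjz]
      rw [Finset.sum_congr rfl (fun u _ => hGz (u, v)), Finset.sum_congr rfl (fun u _ => hGz (v, u)),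
        Finset.sum_tsub_distrib _ (fun u _ => hST (u, v)),
        Finset.sum_tsub_distrib _ (fun u _ => hST (v, u)),
        hTbal v, hSbal v]
    · rw [Finset.sum_congr rfl (fun u _ => hGnz j hjz (u, v)),
        Finset.sum_congr rfl (fun u _ => hGnz j hjz (v, u))]
      exact cw_balanced (hKcw j) v
  · -- simple
    intro j hj a
    have hjz : j ≠ z := by
      intro hc
      rw [hc, hz] at hj
      exact hj rfl
    rw [hGnz j hjz a]
    exact count_le_one_of_nodup' ((hKnd j).of_map _) a
  · -- bounds
    intro a ha
    rw [hsumG a]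
    exact h.2 a ha

end CWaux

namespace CWaux
variable {V : Type} [Fintype V] [DecidableEq V]

theorem tuple_to_dwcp {A : Finset (V × V)} (hconn : (UGraph A).Connected)
    {b c k : ℕ} (hk : 1 ≤ k) {Gs : Fin k → V × V → ℕ} (hg : GoodTuple A b c k Gs) :
    ∃ W : Fin k → List (V × V), IsDWCP A b c k W ∧
      ∀ a, (∑ j, (W j).count a) ≤ ∑ j, Gs j a := by
  classical
  obtain ⟨hg1, hg2, hg3, hg4, hg5⟩ := hg
  rcases Nat.eq_zero_or_pos b with hb | hb
  · -- b = 0 : one cycle per multigraph suffices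
    choose K hKne hKcw hKnd hKpos using fun j => cycle_extract (Gs j) (hg3 j) (hg1 j)
    have hCle : ∀ j a, (K j).count a ≤ Gs j a := fun j => cnt_le_of_cycle (hKnd j) (hKpos j)
    have hsum : ∀ a, (∑ j, (K j).count a) ≤ ∑ j, Gs j a :=
      fun a => Finset.sum_le_sum (fun j _ => hCle j a)
    refine ⟨K, ⟨fun i => ⟨hKne i, ?_, (hKcw i).1, (hKcw i).2⟩, ?_⟩, hsum⟩
    · exact fun a ha => hg2 i a (hKpos i a ha)
    · intro a ha
      subst hb
      exact ⟨Nat.zero_le _, le_trans (hsum a) (hg5 a ha).2⟩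
  · -- b ≥ 1 : decompose, then merge into exactly k walks using connectivity
    choose ℓ hℓ1 hℓ2 using fun j => decompose (∑ a, Gs j a) (Gs j) rfl (hg3 j)
    have hℓne : ∀ j, ℓ j ≠ [] := by
      intro j hc
      obtain ⟨a, ha⟩ := hg1 j
      have := hℓ2 j a
      rw [hc] at this
      simp at this
      exact ha this.symm
    set W0 : Fin k → List (V × V) := fun j => (ℓ j).head (hℓne j) with hW0def
    set pool : List (List (V × V)) := (List.ofFn (fun j => (ℓ j).tail)).flatten with hpool
    have hWprop : ∀ j, W0 j ≠ [] ∧ CW (W0 j) ∧ ∀ a ∈ W0 j, a ∈ A := by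
      intro j
      obtain ⟨h1, h2, h3⟩ := hℓ1 j (W0 j) (by rw [hW0def]; exact List.head_mem _)
      exact ⟨h1, h2, fun a ha => hg2 j a (h3 a ha)⟩
    have hpoolmem : ∀ L ∈ pool, ∃ j, L ∈ (ℓ j).tail := by
      intro L hL
      rw [hpool] at hL
      obtain ⟨l, hl, hLl⟩ := List.mem_flatten.1 hL
      obtain ⟨j, hj⟩ := List.mem_ofFn.1 hl
      exact ⟨j, by simpa [← hj] using hLl⟩
    have hpoolprop : ∀ L ∈ pool, L ≠ [] ∧ CW L ∧ ∀ a ∈ L, a ∈ A := by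
      intro L hL
      obtain ⟨j, hj⟩ := hpoolmem L hL
      obtain ⟨h1, h2, h3⟩ := hℓ1 j L (List.mem_of_mem_tail hj)
      exact ⟨h1, h2, fun a ha => hg2 j a (h3 a ha)⟩
    have hpoolsum : ∀ a, (pool.map (fun L => L.count a)).sum
        = ∑ j, (((ℓ j).tail).map (fun L => L.count a)).sum := by
      intro a
      rw [hpool, List.map_flatten, List.map_ofFn, ← List.sum_ofFn
        (f := fun j => (((ℓ j).tail).map (fun L => L.count a)).sum), List.sum_flatten]
      congr 1
      rw [List.map_ofFn]
      rfl
    have hkey : ∀ a, (∑ j, (W0 j).count a) + (pool.map (fun L => L.count a)).sum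
        = ∑ j, Gs j a := by
      intro a
      rw [hpoolsum a, ← Finset.sum_add_distrib]
      refine Finset.sum_congr rfl (fun j _ => ?_)
      have hsplit : (ℓ j).head (hℓne j) :: (ℓ j).tail = ℓ j := List.cons_head_tail _
      have := hℓ2 j a
      rw [← hsplit, List.map_cons, List.sum_cons] at this
      rw [hW0def, ← this]
    have hcov : ∀ a ∈ A, (∃ j, a ∈ W0 j) ∨ (∃ L ∈ pool, a ∈ L) := by
      intro a ha
      have hba : 1 ≤ ∑ j, Gs j a := le_trans hb (hg5 a ha).1
      rw [← hkey a] at hba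
      by_cases hw : ∃ j, a ∈ W0 j
      · exact Or.inl hw
      · right
        push_neg at hw
        have hz : ∑ j, (W0 j).count a = 0 :=
          Finset.sum_eq_zero (fun j _ => List.count_eq_zero_of_not_mem (hw j))
        rw [hz, zero_add] at hba
        by_contra hc
        push_neg at hc
        have : (pool.map (fun L => L.count a)).sum = 0 := by
          apply List.sum_eq_zero
          intro x hx
          obtain ⟨L, hL, rfl⟩ := List.mem_map.1 hx
          exact List.count_eq_zero_of_not_mem (hc L hL)
        omega
    obtain ⟨W', hW'prop, hW'cnt⟩ :=
      pool_merge A hconn hk pool.length pool W0 rfl hWprop hpoolprop hcov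
    have hcnt : ∀ a, ∑ j, (W' j).count a = ∑ j, Gs j a := by
      intro a
      rw [hW'cnt a, hkey a]
    refine ⟨W', ⟨fun i => ⟨(hW'prop i).1, (hW'prop i).2.2,
      (hW'prop i).2.1.1, (hW'prop i).2.1.2⟩, ?_⟩, fun a => le_of_eq (hcnt a)⟩
    intro a ha
    rw [hcnt a]
    exact hg5 a ha

theorem kWalkWeight_eq (ω : V × V → ℕ) {k : ℕ} (W : Fin k → List (V × V)) :
    kWalkWeight ω W = ∑ a, (∑ j, (W j).count a) * ω a := by
  unfold kWalkWeight walkWeight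
  rw [Finset.sum_congr rfl (fun j _ => sum_map_eq_sum_count ω (W j)), Finset.sum_comm]
  exact Finset.sum_congr rfl (fun a _ => by rw [Finset.sum_mul])

theorem tupleWeight_eq (ω : V × V → ℕ) {k : ℕ} (Gs : Fin k → V × V → ℕ) :
    (∑ j, ∑ a, Gs j a * ω a) = ∑ a, (∑ j, Gs j a) * ω a := by
  rw [Finset.sum_comm]
  exact Finset.sum_congr rfl (fun a _ => by rw [Finset.sum_mul])

end CWaux

theorem stmt10 {V : Type} [Fintype V] [DecidableEq V] (A : Finset (V × V))
    (ω : V × V → ℕ) (hloop : ∀ v : V, (v, v) ∉ A) (hconn : (UGraph A).Connected)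
    (b c k : ℕ) (hbc : b ≤ c) (hk : 1 ≤ k) (ρ : ℕ) :
    (IsLeast {w : ℕ | ∃ W : Fin k → List (V × V),
        IsDWCP A b c k W ∧ kWalkWeight ω W = w} ρ ↔
      IsLeast {w : ℕ | ∃ Gs : Fin k → V × V → ℕ,
        GoodTuple A b c k Gs ∧ (∑ j, ∑ a, Gs j a * ω a) = w} ρ) ∧
    ((∃ W : Fin k → List (V × V), IsDWCP A b c k W) ↔
      ∃ Gs : Fin k → V × V → ℕ, GoodTuple A b c k Gs) := by
  classical
  have hWt : ∀ (W : Fin k → List (V × V)) (Gs : Fin k → V × V → ℕ),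
      (∀ a, (∑ j, (W j).count a) = ∑ j, Gs j a) →
      kWalkWeight ω W = ∑ j, ∑ a, Gs j a * ω a := by
    intro W Gs h
    rw [CWaux.kWalkWeight_eq, CWaux.tupleWeight_eq]
    exact Finset.sum_congr rfl (fun a _ => by rw [h a])
  have hWle : ∀ (W : Fin k → List (V × V)) (Gs : Fin k → V × V → ℕ),
      (∀ a, (∑ j, (W j).count a) ≤ ∑ j, Gs j a) →
      kWalkWeight ω W ≤ ∑ j, ∑ a, Gs j a * ω a := by
    intro W Gs h
    rw [CWaux.kWalkWeight_eq, CWaux.tupleWeight_eq]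
    exact Finset.sum_le_sum (fun a _ => Nat.mul_le_mul_right _ (h a))
  constructor
  · constructor
    · rintro ⟨⟨W, hW, hwt⟩, hlb⟩
      obtain ⟨Gs, hGs, hcnt⟩ := CWaux.dwcp_to_tuple hk hW
      constructor
      · exact ⟨Gs, hGs, by rw [← hWt W Gs (fun a => (hcnt a).symm), hwt]⟩
      · rintro w ⟨Gs', hGs', rfl⟩
        obtain ⟨W', hW', hle⟩ := CWaux.tuple_to_dwcp hconn hk hGs'
        exact le_trans (hlb ⟨W', hW', rfl⟩) (hWle W' Gs' hle)
    · rintro ⟨⟨Gs, hGs, hwt⟩, hlb⟩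
      obtain ⟨W, hW, hle⟩ := CWaux.tuple_to_dwcp hconn hk hGs
      have h1 : kWalkWeight ω W ≤ ρ := by rw [← hwt]; exact hWle W Gs hle
      have h2 : ρ ≤ kWalkWeight ω W := by
        obtain ⟨Gs2, hGs2, hcnt2⟩ := CWaux.dwcp_to_tuple hk hW
        have := hlb ⟨Gs2, hGs2, rfl⟩
        rwa [← hWt W Gs2 (fun a => (hcnt2 a).symm)] at this
      constructor
      · exact ⟨W, hW, le_antisymm h1 h2⟩
      · rintro w ⟨W', hW', rfl⟩
        obtain ⟨Gs', hGs', hcnt'⟩ := CWaux.dwcp_to_tuple hk hW'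
        have := hlb ⟨Gs', hGs', rfl⟩
        rwa [← hWt W' Gs' (fun a => (hcnt' a).symm)] at this
  · constructor
    · rintro ⟨W, hW⟩
      obtain ⟨Gs, hGs, _⟩ := CWaux.dwcp_to_tuple hk hW
      exact ⟨Gs, hGs⟩
    · rintro ⟨Gs, hGs⟩
      obtain ⟨W, hW, _⟩ := CWaux.tuple_to_dwcp hconn hk hGs
      exact ⟨W, hW⟩
end

section
/- Let G=(V,A) be a connected digraph with nonnegative integer arc weights, let 0 ≤ b ≤ c and k ≥ 1 be integers, fix a vertex ordering ν=(v_1,...,v_n) of G, and let φ be the (unique, empty) function from E_n×[k] to {0,1,...,c}. Then χ(E_n, φ, [k]) = ∞ if there is no k[b,c]-DWCP solution on G, and otherwise χ(E_n, φ, [k]) equals the minimum weight of a k[b,c]-DWCP solution on G. -/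
/-- The arc bag `E_i`: arcs of `A` with one endpoint among the first `i` vertices of the
ordering `ν` and the other endpoint among the remaining vertices. -/
def Ebag {V : Type} [DecidableEq V] {n : ℕ} (A : Finset (V × V)) (ν : Fin n ≃ V)
    (i : ℕ) : Finset (V × V) :=
  A.filter (fun a =>
    (((ν.symm a.1 : ℕ) < i ∧ i ≤ (ν.symm a.2 : ℕ)) ∨
      ((ν.symm a.2 : ℕ) < i ∧ i ≤ (ν.symm a.1 : ℕ))))

/-- `γ(i) = E_0 ∪ E_1 ∪ ... ∪ E_i`: the arcs of `A` with at least one endpoint among the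
first `i` vertices of the ordering `ν`. -/
def gam {V : Type} [DecidableEq V] {n : ℕ} (A : Finset (V × V)) (ν : Fin n ≃ V)
    (i : ℕ) : Finset (V × V) :=
  A.filter (fun a => (ν.symm a.1 : ℕ) < i ∨ (ν.symm a.2 : ℕ) < i)

/-- The dynamic-programming quantity `χ(E_i, φ, S)`: the minimum, over all tuples
`(A_1, ..., A_k)` of multisets of arcs of `γ(i)` satisfying conditions (1)-(4), of the
total weight `Σ_j Σ_{a ∈ A_j} ω(a)`; it is `∞` (`⊤` in `ℕ∞`) if no such tuple exists. -/
noncomputable def chi {V : Type} [Fintype V] [DecidableEq V] {n : ℕ}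
    (A : Finset (V × V)) (ω : V × V → ℕ) (b c k : ℕ) (ν : Fin n ≃ V)
    (i : ℕ) (φ : V × V → Fin k → ℕ) (S : Finset (Fin k)) : ℕ∞ :=
  sInf {ρ : ℕ∞ | ∃ M : Fin k → V × V → ℕ,
    -- the `M j` are multisets of arcs of γ(i)
    (∀ j a, M j a ≠ 0 → a ∈ gam A ν i) ∧
    -- (1) for every a ∈ E_i and j ∈ [k], A_j contains exactly φ(a,j) copies of a
    (∀ a ∈ Ebag A ν i, ∀ j, M j a = φ a j) ∧
    -- (2) every arc of γ(i) occurs between b and c times in A_1 ∪ ... ∪ A_k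
    (∀ a ∈ gam A ν i, b ≤ (∑ j, M j a) ∧ (∑ j, M j a) ≤ c) ∧
    -- (3) for every h ≤ i and j ∈ S, v_h is balanced in A_j
    (∀ h : Fin n, (h : ℕ) < i → ∀ j ∈ S,
      (∑ u, M j (u, ν h)) = ∑ u, M j (ν h, u)) ∧
    -- (4) A_j is non-empty iff j ∈ S
    (∀ j, (∃ a, M j a ≠ 0) ↔ j ∈ S) ∧
    -- (5) ρ is the total weight
    (ρ = ((∑ j, ∑ a, M j a * ω a : ℕ) : ℕ∞))}

namespace S11
variable {V : Type} [DecidableEq V] {A : Finset (V × V)}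

theorem rot (P Q : List (V × V)) (h : IsClosedWalk A (P ++ Q)) :
    IsClosedWalk A (Q ++ P) := by
  obtain ⟨hmem, hch, hcl⟩ := h
  rcases eq_or_ne P [] with rfl | hP
  · simpa using ⟨hmem, hch, by simpa using hcl⟩
  rcases eq_or_ne Q [] with rfl | hQ
  · simpa using ⟨by simpa using hmem, by simpa using hch, by simpa using hcl⟩
  rw [List.Chain', List.isChain_append] at hch
  obtain ⟨hcP, hcQ, hlink⟩ := hch
  rw [List.getLast?_append_of_ne_nil _ hQ, List.head?_append_of_ne_nil _ hP] at hcl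
  refine ⟨fun a ha => hmem a (by simpa [or_comm] using (List.mem_append.1 ha)), ?_, ?_⟩
  · rw [List.Chain', List.isChain_append]
    refine ⟨hcQ, hcP, ?_⟩
    intro x hx y hy
    rw [List.getLast?_eq_getLast hQ] at hx
    rw [List.head?_eq_head hP] at hy
    rw [List.getLast?_eq_getLast hQ, List.head?_eq_head hP] at hcl
    simp only [Option.mem_def, Option.some_inj] at hx hy
    subst hx; subst hy
    simpa using hcl
  · rw [List.getLast?_append_of_ne_nil _ hP, List.head?_append_of_ne_nil _ hQ]
    rw [List.getLast?_eq_getLast hP, List.head?_eq_head hQ]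
    have := hlink (P.getLast hP) (by simp [List.getLast?_eq_getLast hP])
      (Q.head hQ) (by simp [List.head?_eq_head hQ])
    simpa using this

end S11

namespace S11B
open S11
variable {V : Type} [DecidableEq V] {A : Finset (V × V)}

theorem rot_to {L : List (V × V)} (h : IsClosedWalk A L) {v : V}
    (hv : v ∈ L.map Prod.fst) :
    ∃ L', IsClosedWalk A L' ∧ L'.head?.map Prod.fst = some v ∧
      ∀ a, L'.count a = L.count a := by
  rw [List.mem_map] at hv
  obtain ⟨a0, ha0, hfst⟩ := hv
  obtain ⟨s, t, rfl⟩ := List.append_of_mem ha0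
  refine ⟨(a0 :: t) ++ s, rot s (a0 :: t) h, by simp [hfst], ?_⟩
  intro a; simp [List.count_append, List.count_cons]; ring

theorem merge {L1 L2 : List (V × V)} (h1 : IsClosedWalk A L1) (h2 : IsClosedWalk A L2)
    {v : V} (hv1 : v ∈ L1.map Prod.fst) (hv2 : v ∈ L2.map Prod.fst) :
    ∃ L, IsClosedWalk A L ∧ L ≠ [] ∧ ∀ a, L.count a = L1.count a + L2.count a := by
  obtain ⟨P, hP, hPh, hPc⟩ := rot_to h1 hv1
  obtain ⟨Q, hQ, hQh, hQc⟩ := rot_to h2 hv2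
  have hPne : P ≠ [] := by rintro rfl; simp at hPh
  have hQne : Q ≠ [] := by rintro rfl; simp at hQh
  refine ⟨P ++ Q, ?_, by simp [hPne], fun a => by simp [List.count_append, hPc, hQc]⟩
  obtain ⟨hPm, hPch, hPcl⟩ := hP
  obtain ⟨hQm, hQch, hQcl⟩ := hQ
  refine ⟨fun a ha => (List.mem_append.1 ha).elim (hPm a) (hQm a), ?_, ?_⟩
  · rw [List.Chain', List.isChain_append]
    refine ⟨hPch, hQch, fun x hx y hy => ?_⟩
    -- x = last of P, y = head of Q; x.2 = P.head.fst = v = y.1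
    have hx' : (P.getLast?).map Prod.snd = some x.2 := by
      simp only [Option.mem_def] at hx; rw [hx]; rfl
    rw [hPcl, hPh] at hx'
    have hy' : (Q.head?).map Prod.fst = some y.1 := by
      simp only [Option.mem_def] at hy; rw [hy]; rfl
    rw [hQh] at hy'
    simp only [Option.some_inj] at hx' hy'
    rw [← hx', ← hy']
  · rw [List.getLast?_append_of_ne_nil _ hQne, List.head?_append_of_ne_nil _ hPne,
      hQcl, hQh, hPh]

end S11B

namespace S11C
variable {V : Type} [DecidableEq V] [Fintype V] {A : Finset (V × V)}

theorem chain_snd_eq (L : List (V × V)) (h : List.Chain' (fun p q => p.2 = q.1) L) :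
    L.map Prod.snd = (L.map Prod.fst).tail ++ (L.getLast?.map Prod.snd).toList := by
  induction L with
  | nil => simp
  | cons a T ih =>
    cases T with
    | nil => simp
    | cons b T' =>
      obtain ⟨hab, h2⟩ := List.isChain_cons_cons.1 h
      have := ih h2
      simp only [List.map_cons, List.tail_cons] at this ⊢
      rw [this, List.getLast?_cons_cons, hab]
      simp

theorem closed_count_snd {L : List (V × V)} (h : IsClosedWalk A L) (v : V) :
    (L.map Prod.snd).count v = (L.map Prod.fst).count v := by
  obtain ⟨-, hch, hcl⟩ := h
  rcases eq_or_ne L [] with rfl | hne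
  · simp
  have h1 := chain_snd_eq L hch
  rw [hcl] at h1
  have h2 : L.map Prod.fst = (L.head?.map Prod.fst).toList ++ (L.map Prod.fst).tail := by
    cases L with
    | nil => simp
    | cons a T => simp
  rw [h1, List.count_append]
  conv_rhs => rw [h2, List.count_append]
  ring

theorem closed_mem_fst_iff {L : List (V × V)} (h : IsClosedWalk A L) (v : V) :
    v ∈ L.map Prod.snd ↔ v ∈ L.map Prod.fst := by
  rw [← List.count_pos_iff, ← List.count_pos_iff, closed_count_snd h]

theorem sum_count_in (L : List (V × V)) (v : V) :
    ∑ u, L.count (u, v) = (L.map Prod.snd).count v := by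
  induction L with
  | nil => simp
  | cons a T ih =>
    simp only [List.count_cons, List.map_cons, Finset.sum_add_distrib, ih]
    congr 1
    simp only [beq_iff_eq, Prod.ext_iff]
    rcases eq_or_ne a.2 v with h | h
    · simp [h, Finset.sum_ite_eq]
    · simp [h]

theorem sum_count_out (L : List (V × V)) (v : V) :
    ∑ u, L.count (v, u) = (L.map Prod.fst).count v := by
  induction L with
  | nil => simp
  | cons a T ih =>
    simp only [List.count_cons, List.map_cons, Finset.sum_add_distrib, ih]
    congr 1
    simp only [beq_iff_eq, Prod.ext_iff]
    rcases eq_or_ne a.1 v with h | h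
    · simp [h, Finset.sum_ite_eq]
    · simp [h]

theorem count_weight (ω : V × V → ℕ) (L : List (V × V)) :
    ∑ a : V × V, L.count a * ω a = (L.map ω).sum := by
  induction L with
  | nil => simp
  | cons x T ih =>
    simp only [List.count_cons, List.map_cons, List.sum_cons, add_mul,
      Finset.sum_add_distrib, ih]
    rw [add_comm]
    congr 1
    simp [Finset.sum_ite_eq']

end S11C

namespace S11D
variable {V : Type} [DecidableEq V] [Fintype V] {A : Finset (V × V)}

theorem shorten : ∀ (L : List (V × V)), List.Chain' (fun p q => p.2 = q.1) L →
    ∃ L', L'.Sublist L ∧ List.Chain' (fun p q => p.2 = q.1) L' ∧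
      L'.head?.map Prod.fst = L.head?.map Prod.fst ∧
      L'.getLast?.map Prod.snd = L.getLast?.map Prod.snd ∧
      (L'.map Prod.fst).Nodup := by
  intro L
  induction L with
  | nil => intro _; exact ⟨[], by simp [List.Chain']⟩
  | cons a T ih =>
    intro hch
    obtain ⟨hlink, hchT⟩ := List.isChain_cons.1 hch
    obtain ⟨T', hsub, hchT', hhd, hlst, hnd⟩ := ih hchT
    by_cases hmem : a.1 ∈ T'.map Prod.fst
    · rw [List.mem_map] at hmem
      obtain ⟨q, hq, hqfst⟩ := hmem
      obtain ⟨P, Rest, rfl⟩ := List.append_of_mem hq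
      have hTne : T ≠ [] := by
        intro h; subst h
        exact absurd (List.sublist_nil.1 hsub) (by simp)
      refine ⟨q :: Rest, ?_, ?_, ?_, ?_, ?_⟩
      · exact ((List.sublist_append_right P _).trans hsub).cons a
      · exact hchT'.suffix ⟨P, rfl⟩
      · simp [hqfst]
      · rw [← List.getLast?_append_cons P q Rest, hlst]
        have e2 : (a :: T).getLast? = T.getLast? := by
          have := List.getLast?_append_of_ne_nil [a] (l₂ := T) hTne
          simpa using this
        rw [e2]
      · exact hnd.sublist ((List.sublist_append_right P (q :: Rest)).map Prod.fst)
    · refine ⟨a :: T', hsub.cons₂ a, ?_, by simp, ?_, ?_⟩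
      · refine List.isChain_cons.2 ⟨?_, hchT'⟩
        intro h hh
        cases T with
        | nil =>
          have : T' = [] := List.sublist_nil.1 hsub
          subst this; simp at hh
        | cons t0 T2 =>
          have h1 : T'.head? = some h := hh
          have : (some h).map Prod.fst = some t0.1 := by
            rw [← h1, hhd]; simp
          simp only [Option.map_some, Option.some_inj] at this
          rw [this]
          exact hlink t0 rfl
      · rcases eq_or_ne T' [] with rfl | hT'ne
        · have hT : T = [] := by
            cases T with
            | nil => rfl
            | cons t0 T2 => simp at hhd
          subst hT; rfl
        · have hTne : T ≠ [] := by
            intro h; subst h; exact hT'ne (List.sublist_nil.1 hsub)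
          have e1 : (a :: T').getLast? = T'.getLast? := by
            have := List.getLast?_append_of_ne_nil [a] (l₂ := T') hT'ne
            simpa using this
          have e2 : (a :: T).getLast? = T.getLast? := by
            have := List.getLast?_append_of_ne_nil [a] (l₂ := T) hTne
            simpa using this
          rw [e1, e2]; exact hlst
      · simp only [List.map_cons, List.nodup_cons]
        exact ⟨hmem, hnd⟩

end S11D

namespace S11E
variable {V : Type} [DecidableEq V] [Fintype V] {A : Finset (V × V)}

theorem rtg_path {r : V → V → Prop} {y x : V} (h : Relation.ReflTransGen r y x) :
    y = x ∨ ∃ L : List (V × V), L ≠ [] ∧ (∀ a ∈ L, r a.1 a.2) ∧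
      List.Chain' (fun p q => p.2 = q.1) L ∧
      L.head?.map Prod.fst = some y ∧ L.getLast?.map Prod.snd = some x := by
  induction h with
  | refl => exact Or.inl rfl
  | @tail b c hab hbc ih =>
    right
    rcases ih with rfl | ⟨L, hne, hmem, hch, hhd, hlst⟩
    · exact ⟨[(y, c)], by simp, by simpa using hbc, by simp [List.Chain'], by simp, by simp⟩
    · refine ⟨L ++ [(b, c)], by simp, ?_, ?_, ?_, ?_⟩
      · intro a ha
        rcases List.mem_append.1 ha with h1 | h1
        · exact hmem a h1
        · simp at h1; subst h1; simpa using hbc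
      · rw [List.Chain', List.isChain_append]
        refine ⟨hch, by simp, ?_⟩
        intro p hp q hq
        simp only [List.head?_cons, Option.mem_def, Option.some_inj] at hq
        subst hq
        have : (L.getLast?).map Prod.snd = some p.2 := by
          simp only [Option.mem_def] at hp; rw [hp]; rfl
        rw [hlst] at this
        simpa using this.symm
      · rw [List.head?_append_of_ne_nil _ hne]; exact hhd
      · rw [List.getLast?_append_of_ne_nil _ (by simp : [(b,c)] ≠ [])]; simp

theorem reach_back (m : V × V → ℕ)
    (hbal : ∀ v, ∑ u, m (u, v) = ∑ u, m (v, u))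
    {x y : V} (hxy : m (x, y) ≠ 0) :
    Relation.ReflTransGen
      (fun u v => m (u, v) - (if (u, v) = (x, y) then 1 else 0) ≠ 0) y x := by
  classical
  set m' : V × V → ℕ := fun a => m a - (if a = (x, y) then 1 else 0) with hm'
  set r : V → V → Prop := fun u v => m' (u, v) ≠ 0 with hr
  by_contra hno
  set R : Finset V := Finset.univ.filter (fun v => Relation.ReflTransGen r y v) with hR
  have hyR : y ∈ R := by simp [hR]; exact Relation.ReflTransGen.refl
  have hxR : x ∉ R := by simp [hR]; exact hno
  have hclosed : ∀ v ∈ R, ∀ u, m' (v, u) ≠ 0 → u ∈ R := by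
    intro v hv u hmu
    simp only [hR, Finset.mem_filter, Finset.mem_univ, true_and] at hv ⊢
    exact hv.tail hmu
  have hsplit : ∀ a, m a = m' a + (if a = (x, y) then 1 else 0) := by
    intro a
    by_cases h : a = (x, y)
    · subst h; simp [hm']; omega
    · simp [hm', h]
  -- e-sums
  have hout : ∀ v : V, (∑ u, m (v, u)) = (∑ u, m' (v, u)) + (if v = x then 1 else 0) := by
    intro v
    rw [Finset.sum_congr rfl (fun u _ => hsplit (v, u)), Finset.sum_add_distrib]
    congr 1
    simp only [Prod.mk.injEq]
    rcases eq_or_ne v x with rfl | h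
    · simp
    · simp [h]
  have hin : ∀ v : V, (∑ u, m (u, v)) = (∑ u, m' (u, v)) + (if v = y then 1 else 0) := by
    intro v
    rw [Finset.sum_congr rfl (fun u _ => hsplit (u, v)), Finset.sum_add_distrib]
    congr 1
    simp only [Prod.mk.injEq]
    rcases eq_or_ne v y with rfl | h
    · simp
    · simp [h]
  have key1 : (∑ v ∈ R, ∑ u, m' (v, u)) = (∑ v ∈ R, ∑ u, m' (u, v)) + 1 := by
    have h1 : (∑ v ∈ R, ∑ u, m (v, u)) = (∑ v ∈ R, ∑ u, m' (v, u)) := by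
      rw [Finset.sum_congr rfl (fun v _ => hout v), Finset.sum_add_distrib]
      have : (∑ v ∈ R, if v = x then 1 else 0) = 0 := by
        rw [Finset.sum_ite_eq' R x (fun _ => 1)]
        simp [hxR]
      omega
    have h2 : (∑ v ∈ R, ∑ u, m (u, v)) = (∑ v ∈ R, ∑ u, m' (u, v)) + 1 := by
      rw [Finset.sum_congr rfl (fun v _ => hin v), Finset.sum_add_distrib]
      have : (∑ v ∈ R, if v = y then 1 else 0) = 1 := by
        rw [Finset.sum_ite_eq' R y (fun _ => 1)]
        simp [hyR]
      omega
    have h3 : (∑ v ∈ R, ∑ u, m (v, u)) = (∑ v ∈ R, ∑ u, m (u, v)) :=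
      Finset.sum_congr rfl (fun v _ => (hbal v).symm)
    omega
  have key2 : (∑ v ∈ R, ∑ u, m' (v, u)) ≤ (∑ v ∈ R, ∑ u, m' (u, v)) := by
    have hperv : ∀ v ∈ R, (∑ u, m' (v, u)) = ∑ u ∈ R, m' (v, u) := by
      intro v hv
      rw [← Finset.sum_add_sum_compl R (fun u => m' (v, u))]
      have : (∑ u ∈ Rᶜ, m' (v, u)) = 0 := by
        apply Finset.sum_eq_zero
        intro u hu
        by_contra hne
        exact (Finset.mem_compl.1 hu) (hclosed v hv u hne)
      omega
    calc (∑ v ∈ R, ∑ u, m' (v, u)) = ∑ v ∈ R, ∑ u ∈ R, m' (v, u) :=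
          Finset.sum_congr rfl hperv
      _ = ∑ v ∈ R, ∑ u ∈ R, m' (u, v) := Finset.sum_comm
      _ ≤ ∑ v ∈ R, ∑ u, m' (u, v) :=
          Finset.sum_le_sum (fun v _ =>
            Finset.sum_le_sum_of_subset (Finset.subset_univ R))
  omega

end S11E

namespace S11F
open S11 S11B S11C S11D S11E
variable {V : Type} [DecidableEq V] [Fintype V] {A : Finset (V × V)}

theorem count_le_one_of_nodup {α : Type} [BEq α] [LawfulBEq α] {l : List α}
    (h : l.Nodup) (a : α) : l.count a ≤ 1 := by
  induction l with
  | nil => simp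
  | cons b T ih =>
    rw [List.nodup_cons] at h
    have hT := ih h.2
    rcases eq_or_ne a b with rfl | hne
    · rw [List.count_cons_self, List.count_eq_zero_of_not_mem h.1]
    · rw [List.count_cons_of_ne hne.symm]
      exact hT

/-- Extract a closed walk from a nonzero balanced circulation. -/
theorem exists_cycle (m : V × V → ℕ)
    (hbal : ∀ v, ∑ u, m (u, v) = ∑ u, m (v, u))
    (hsupp : ∀ a, m a ≠ 0 → a ∈ A)
    {a0 : V × V} (ha0 : m a0 ≠ 0) :
    ∃ L : List (V × V), L ≠ [] ∧ IsClosedWalk A L ∧ ∀ a, L.count a ≤ m a := by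
  obtain ⟨x, y⟩ := a0
  set m' : V × V → ℕ := fun a => m a - (if a = (x, y) then 1 else 0) with hm'
  have hreach := reach_back m hbal ha0
  rcases rtg_path hreach with heq | ⟨L, hne, hmem, hch, hhd, hlst⟩
  · -- y = x : single loop arc
    refine ⟨[(x, y)], by simp, ⟨?_, by simp [List.Chain'], by simp [heq]⟩, ?_⟩
    · intro a ha; simp at ha; subst ha; exact hsupp _ ha0
    · intro a
      rcases eq_or_ne a (x, y) with rfl | h
      · have h1 : List.count (x, y) [(x, y)] = 1 := by simp
        omega
      · rw [List.count_eq_zero_of_not_mem (by simp [h])]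
        omega
  · obtain ⟨P, hPsub, hPch, hPhd, hPlst, hPnd⟩ := shorten L hch
    have hPne : P ≠ [] := by
      intro h; subst h
      rw [List.head?_eq_head hne] at hPhd; simp at hPhd
    have hPmem : ∀ a ∈ P, m' a ≠ 0 := fun a ha => hmem a (hPsub.mem ha)
    have hPcount : ∀ a, P.count a ≤ m' a := by
      intro a
      by_cases h : a ∈ P
      · have h1 : P.count a ≤ 1 := count_le_one_of_nodup (hPnd.of_map Prod.fst) a
        have := hPmem a h
        omega
      · simp [List.count_eq_zero_of_not_mem h]
    have hm'le : ∀ a, m' a ≤ m a := by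
      intro a; simp only [hm']; omega
    refine ⟨(x, y) :: P, by simp, ⟨?_, ?_, ?_⟩, ?_⟩
    · intro a ha
      rcases List.mem_cons.1 ha with rfl | h
      · exact hsupp _ ha0
      · exact hsupp a (fun h0 => hPmem a h (by simp only [hm']; omega))
    · refine List.isChain_cons.2 ⟨?_, hPch⟩
      intro z hz
      have h1 : P.head?.map Prod.fst = some y := by rw [hPhd, hhd]
      rw [Option.mem_def] at hz
      rw [hz] at h1
      simp only [Option.map_some, Option.some_inj] at h1
      simpa using h1.symm
    · have e1 : ((x, y) :: P).getLast? = P.getLast? := by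
        have := List.getLast?_append_of_ne_nil [(x,y)] (l₂ := P) hPne
        simpa using this
      rw [e1, hPlst, hlst]
      simp
    · intro a
      have h1 := hPcount a
      have h2 : m' a = m a - (if a = (x, y) then 1 else 0) := by simp [hm']
      have h3 : ((x, y) :: P).count a = P.count a + (if a = (x, y) then 1 else 0) := by
        rcases eq_or_ne a (x, y) with rfl | h
        · rw [List.count_cons_self]; simp
        · rw [List.count_cons_of_ne (Ne.symm h)]; simp [h]
      rcases eq_or_ne a (x, y) with rfl | h
      · have e2 : m' (x, y) = m (x, y) - 1 := by rw [h2]; simp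
        have e3 : ((x, y) :: P).count (x, y) = P.count (x, y) + 1 := by rw [h3]; simp
        rw [e3]
        omega
      · have e2 : m' a = m a := by rw [h2]; simp [h]
        have e3 : ((x, y) :: P).count a = P.count a := by rw [h3]; simp [h]
        rw [e3]
        omega

end S11F

namespace S11G
open S11 S11B S11C S11D S11E S11F
variable {V : Type} [DecidableEq V] [Fintype V] {A : Finset (V × V)}

theorem walk_bal {L : List (V × V)} (h : IsClosedWalk A L) (v : V) :
    ∑ u, L.count (u, v) = ∑ u, L.count (v, u) := by
  rw [sum_count_in, sum_count_out, closed_count_snd h]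

theorem decomp : ∀ (N : ℕ) (m : V × V → ℕ), (∑ a, m a) ≤ N →
    (∀ v, ∑ u, m (u, v) = ∑ u, m (v, u)) → (∀ a, m a ≠ 0 → a ∈ A) →
    ∃ ws : List (List (V × V)), (∀ L ∈ ws, L ≠ [] ∧ IsClosedWalk A L) ∧
      (∀ a, (ws.map (fun L => L.count a)).sum = m a) ∧
      ((∃ a, m a ≠ 0) → ws ≠ []) := by
  intro N
  induction N with
  | zero =>
    intro m hN hbal hsupp
    refine ⟨[], by simp, ?_, ?_⟩
    · intro a
      have : m a ≤ ∑ b, m b := Finset.single_le_sum (fun b _ => Nat.zero_le _) (Finset.mem_univ a)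
      simpa using by omega
    · rintro ⟨a, ha⟩
      have : m a ≤ ∑ b, m b := Finset.single_le_sum (fun b _ => Nat.zero_le _) (Finset.mem_univ a)
      omega
  | succ N ih =>
    intro m hN hbal hsupp
    by_cases hz : ∀ a, m a = 0
    · exact ⟨[], by simp, fun a => by simp [hz a], fun ⟨a, ha⟩ => absurd (hz a) ha⟩
    · push_neg at hz
      obtain ⟨a0, ha0⟩ := hz
      obtain ⟨L, hLne, hLc, hLle⟩ := exists_cycle m hbal hsupp ha0
      set m2 : V × V → ℕ := fun a => m a - L.count a with hm2
      have hdec : ∀ a, m a = L.count a + m2 a := by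
        intro a; have := hLle a; simp only [hm2]; omega
      have hbal2 : ∀ v, ∑ u, m2 (u, v) = ∑ u, m2 (v, u) := by
        intro v
        have h1 : ∑ u, m (u, v) = (∑ u, L.count (u, v)) + ∑ u, m2 (u, v) := by
          rw [← Finset.sum_add_distrib]
          exact Finset.sum_congr rfl (fun u _ => hdec (u, v))
        have h2 : ∑ u, m (v, u) = (∑ u, L.count (v, u)) + ∑ u, m2 (v, u) := by
          rw [← Finset.sum_add_distrib]
          exact Finset.sum_congr rfl (fun u _ => hdec (v, u))
        have h3 := walk_bal hLc v
        have h4 := hbal v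
        omega
      have hsupp2 : ∀ a, m2 a ≠ 0 → a ∈ A := by
        intro a ha
        apply hsupp
        have := hdec a
        omega
      have hsum2 : (∑ a, m2 a) ≤ N := by
        have h1 : (∑ a, m a) = (∑ a, L.count a) + ∑ a, m2 a := by
          rw [← Finset.sum_add_distrib]
          exact Finset.sum_congr rfl (fun a _ => hdec a)
        obtain ⟨b0, hb0⟩ := List.exists_mem_of_ne_nil L hLne
        have h2 : 0 < L.count b0 := List.count_pos_iff.2 hb0
        have h3 : L.count b0 ≤ ∑ a, L.count a :=
          Finset.single_le_sum (f := fun a => L.count a)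
            (fun b _ => Nat.zero_le _) (Finset.mem_univ b0)
        omega
      obtain ⟨ws2, hws2, hcnt2, -⟩ := ih m2 hsum2 hbal2 hsupp2
      refine ⟨L :: ws2, ?_, ?_, by simp⟩
      · intro L' hL'
        rcases List.mem_cons.1 hL' with rfl | h
        · exact ⟨hLne, hLc⟩
        · exact hws2 L' h
      · intro a
        simp only [List.map_cons, List.sum_cons, hcnt2 a]
        have := hdec a
        omega

end S11G

namespace S11H
open S11 S11B S11C S11D S11E S11F S11G
variable {V : Type} [DecidableEq V] [Fintype V] {A : Finset (V × V)}

theorem cross {G : SimpleGraph V} {u w : V} (p : G.Walk u w) (S : Set V)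
    (hu : u ∈ S) (hw : w ∉ S) : ∃ x y, G.Adj x y ∧ x ∈ S ∧ y ∉ S := by
  induction p with
  | nil => exact absurd hu hw
  | @cons u' v' w' h p ih =>
    by_cases hv : v' ∈ S
    · exact ih hv hw
    · exact ⟨u', v', h, hu, hv⟩

theorem merge_step (hconn : (UGraph A).Connected)
    (ws : Multiset (List (V × V)))
    (hws : ∀ L ∈ ws, L ≠ [] ∧ IsClosedWalk A L)
    (hcov : ∀ a ∈ A, (ws.map (fun L => L.count a)).sum ≠ 0)
    (h2 : 2 ≤ Multiset.card ws) :
    ∃ L1 ∈ ws, ∃ L2 ∈ ws.erase L1, ∃ v : V,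
      v ∈ L1.map Prod.fst ∧ v ∈ L2.map Prod.fst := by
  by_contra hno
  push_neg at hno
  obtain ⟨L0, hL0⟩ := Multiset.exists_mem_of_ne_zero
    (by rintro rfl; simp at h2 : ws ≠ 0)
  have herase : ws.erase L0 ≠ 0 := by
    intro h
    have := Multiset.card_erase_of_mem hL0
    rw [h] at this
    simp at this
    omega
  obtain ⟨L1, hL1⟩ := Multiset.exists_mem_of_ne_zero herase
  have hL0p := hws L0 hL0
  have hL1p := hws L1 (Multiset.mem_of_mem_erase hL1)
  have hv0 : (L0.head hL0p.1).1 ∈ L0.map Prod.fst :=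
    List.mem_map_of_mem (f := Prod.fst) (List.head_mem hL0p.1)
  have hv1 : (L1.head hL1p.1).1 ∈ L1.map Prod.fst :=
    List.mem_map_of_mem (f := Prod.fst) (List.head_mem hL1p.1)
  set v0 := (L0.head hL0p.1).1
  set v1 := (L1.head hL1p.1).1
  have hv1n : v1 ∉ L0.map Prod.fst := by
    intro hmem
    exact hno L0 hL0 L1 hL1 v1 hmem hv1
  obtain ⟨p⟩ := hconn.preconnected v0 v1
  obtain ⟨x, y, hadj, hxS, hyS⟩ :=
    cross p {v | v ∈ L0.map Prod.fst} hv0 hv1n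
  rw [UGraph, SimpleGraph.fromRel_adj] at hadj
  obtain ⟨-, harc⟩ := hadj
  -- get the arc and the walk containing it
  have key : ∀ a : V × V, a ∈ A → (a.1 = x ∧ a.2 = y) ∨ (a.1 = y ∧ a.2 = x) → False := by
    intro a haA hends
    have hsum := hcov a haA
    have : ∃ L ∈ ws, L.count a ≠ 0 := by
      by_contra hall
      push_neg at hall
      exact hsum (Multiset.sum_eq_zero (by
        intro c hc
        obtain ⟨L, hLm, rfl⟩ := Multiset.mem_map.1 hc
        exact hall L hLm))
    obtain ⟨Li, hLi, hcnt⟩ := this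
    have haLi : a ∈ Li := by
      by_contra hm
      exact hcnt (List.count_eq_zero_of_not_mem hm)
    have hLip := hws Li hLi
    have hfst : a.1 ∈ Li.map Prod.fst := List.mem_map_of_mem (f := Prod.fst) haLi
    have hsnd : a.2 ∈ Li.map Prod.fst :=
      (closed_mem_fst_iff hLip.2 a.2).1 (List.mem_map_of_mem (f := Prod.snd) haLi)
    have hxLi : x ∈ Li.map Prod.fst := by
      rcases hends with ⟨h1, h2⟩ | ⟨h1, h2⟩
      · rw [← h1]; exact hfst
      · rw [← h2]; exact hsnd
    have hyLi : y ∈ Li.map Prod.fst := by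
      rcases hends with ⟨h1, h2⟩ | ⟨h1, h2⟩
      · rw [← h2]; exact hsnd
      · rw [← h1]; exact hfst
    rcases eq_or_ne Li L0 with rfl | hne
    · exact hyS hyLi
    · exact hno L0 hL0 Li ((Multiset.mem_erase_of_ne hne).2 hLi) x hxS hxLi
  rcases harc with h | h
  · exact key (x, y) h (Or.inl ⟨rfl, rfl⟩)
  · exact key (y, x) h (Or.inr ⟨rfl, rfl⟩)

theorem merge_down (hconn : (UGraph A).Connected) {k : ℕ} (hk : 1 ≤ k) :
    ∀ (n : ℕ) (ws : Multiset (List (V × V))), Multiset.card ws = n →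
    (∀ L ∈ ws, L ≠ [] ∧ IsClosedWalk A L) →
    (∀ a ∈ A, (ws.map (fun L => L.count a)).sum ≠ 0) →
    k ≤ n →
    ∃ ws' : Multiset (List (V × V)), Multiset.card ws' = k ∧
      (∀ L ∈ ws', L ≠ [] ∧ IsClosedWalk A L) ∧
      (∀ a, (ws'.map (fun L => L.count a)).sum
        = (ws.map (fun L => L.count a)).sum) := by
  intro n
  induction n with
  | zero => intro ws hcard hws hcov hkn; omega
  | succ n ih =>
    intro ws hcard hws hcov hkn
    rcases eq_or_lt_of_le hkn with heq | hlt
    · exact ⟨ws, by omega, hws, fun a => rfl⟩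
    · have h2 : 2 ≤ Multiset.card ws := by omega
      obtain ⟨L1, hL1, L2, hL2, v, hv1, hv2⟩ := merge_step hconn ws hws hcov h2
      have hL1p := hws L1 hL1
      have hL2p := hws L2 (Multiset.mem_of_mem_erase hL2)
      obtain ⟨L, hLc, hLne, hLcnt⟩ := S11B.merge hL1p.2 hL2p.2 hv1 hv2
      set rest := (ws.erase L1).erase L2 with hrest
      have hws_eq : ws = L1 ::ₘ L2 ::ₘ rest := by
        rw [hrest, Multiset.cons_erase hL2, Multiset.cons_erase hL1]
      set ws2 := L ::ₘ rest with hws2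
      have hcard2 : Multiset.card ws2 = n := by
        have : Multiset.card ws = 2 + Multiset.card rest := by
          rw [hws_eq]; simp; omega
        simp [hws2]
        omega
      have hsum_eq : ∀ a, (ws2.map (fun L => L.count a)).sum
          = (ws.map (fun L => L.count a)).sum := by
        intro a
        rw [hws_eq]
        simp [hws2, hLcnt a]
        omega
      have hws2p : ∀ L' ∈ ws2, L' ≠ [] ∧ IsClosedWalk A L' := by
        intro L' hL'
        rcases Multiset.mem_cons.1 hL' with rfl | h
        · exact ⟨hLne, hLc⟩
        · exact hws L' (Multiset.mem_of_mem_erase (Multiset.mem_of_mem_erase h))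
      obtain ⟨ws', h1, h2', h3⟩ := ih ws2 hcard2 hws2p
        (fun a ha => by rw [hsum_eq a]; exact hcov a ha) (by omega)
      exact ⟨ws', h1, h2', fun a => by rw [h3 a, hsum_eq a]⟩

end S11H

namespace S11I
open S11 S11B S11C S11D S11E S11F S11G S11H
variable {V : Type} [DecidableEq V] [Fintype V] {A : Finset (V × V)}

theorem map_sum_sum {ι α : Type} [DecidableEq ι] (s : Finset ι)
    (g : ι → Multiset α) (f : α → ℕ) :
    ((∑ j ∈ s, g j).map f).sum = ∑ j ∈ s, ((g j).map f).sum := by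
  induction s using Finset.induction with
  | empty => simp
  | insert _ _ h ih => simp [Finset.sum_insert h, ih]

theorem card_sum' {ι α : Type} [DecidableEq ι] (s : Finset ι) (g : ι → Multiset α) :
    Multiset.card (∑ j ∈ s, g j) = ∑ j ∈ s, Multiset.card (g j) := by
  induction s using Finset.induction with
  | empty => simp
  | insert _ _ h ih => simp [Finset.sum_insert h, ih]

theorem hard (ω : V × V → ℕ) (hconn : (UGraph A).Connected) (b c k : ℕ)
    (hk : 1 ≤ k) (M : Fin k → V × V → ℕ)
    (hsupp : ∀ j a, M j a ≠ 0 → a ∈ A)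
    (hbnd : ∀ a ∈ A, b ≤ (∑ j, M j a) ∧ (∑ j, M j a) ≤ c)
    (hbal : ∀ j v, ∑ u, M j (u, v) = ∑ u, M j (v, u))
    (hne : ∀ j, ∃ a, M j a ≠ 0) :
    ∃ W : Fin k → List (V × V), IsDWCP A b c k W ∧
      kWalkWeight ω W ≤ ∑ j, ∑ a, M j a * ω a := by
  rcases Nat.eq_zero_or_pos b with rfl | hb
  · -- b = 0 : one cycle per part
    have hcyc : ∀ j : Fin k, ∃ L : List (V × V), L ≠ [] ∧ IsClosedWalk A L ∧
        ∀ a, L.count a ≤ M j a := by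
      intro j
      obtain ⟨a0, ha0⟩ := hne j
      exact exists_cycle (M j) (hbal j) (hsupp j) ha0
    choose L hLne hLc hLle using hcyc
    refine ⟨L, ⟨fun i => ⟨hLne i, hLc i⟩, ?_⟩, ?_⟩
    · intro a ha
      refine ⟨Nat.zero_le _, ?_⟩
      calc ∑ i, (L i).count a ≤ ∑ i, M i a :=
            Finset.sum_le_sum (fun i _ => hLle i a)
        _ ≤ c := (hbnd a ha).2
    · unfold kWalkWeight walkWeight
      apply Finset.sum_le_sum
      intro j _
      rw [← count_weight ω (L j)]
      exact Finset.sum_le_sum (fun a _ => Nat.mul_le_mul_right _ (hLle j a))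
  · -- b ≥ 1 : full decomposition and merging
    have hdec : ∀ j : Fin k, ∃ ws : List (List (V × V)),
        (∀ L ∈ ws, L ≠ [] ∧ IsClosedWalk A L) ∧
        (∀ a, (ws.map (fun L => L.count a)).sum = M j a) ∧
        ((∃ a, M j a ≠ 0) → ws ≠ []) :=
      fun j => decomp (∑ a, M j a) (M j) le_rfl (hbal j) (hsupp j)
    choose wsl hwsl hcnt hwsne using hdec
    set ws : Multiset (List (V × V)) := ∑ j, (wsl j : Multiset (List (V × V))) with hws
    have hmem : ∀ L ∈ ws, L ≠ [] ∧ IsClosedWalk A L := by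
      intro L hL
      rw [hws] at hL
      obtain ⟨j, -, hj⟩ := Multiset.mem_sum.1 hL
      exact hwsl j L (by simpa using hj)
    have hsum : ∀ a, (ws.map (fun L => L.count a)).sum = ∑ j, M j a := by
      intro a
      rw [hws, map_sum_sum]
      apply Finset.sum_congr rfl
      intro j _
      rw [← hcnt j a]
      simp
    have hcard : k ≤ Multiset.card ws := by
      rw [hws, card_sum']
      calc k = ∑ _j : Fin k, 1 := by simp
        _ ≤ _ := by
          apply Finset.sum_le_sum
          intro j _
          have := hwsne j (hne j)
          have : (wsl j).length ≠ 0 := by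
            intro h; exact this (List.length_eq_zero_iff.1 h)
          simpa using Nat.one_le_iff_ne_zero.2 this
    have hcov : ∀ a ∈ A, (ws.map (fun L => L.count a)).sum ≠ 0 := by
      intro a ha
      rw [hsum a]
      have := (hbnd a ha).1
      omega
    obtain ⟨ws', hcard', hmem', hsum'⟩ :=
      merge_down hconn hk (Multiset.card ws) ws rfl hmem hcov hcard
    set l := ws'.toList with hl
    have hlen : l.length = k := by rw [hl, Multiset.length_toList, hcard']
    refine ⟨fun i => l.get (Fin.cast hlen.symm i), ?_, ?_⟩
    · constructor
      · intro i
        exact hmem' _ (by rw [← Multiset.mem_toList]; exact List.get_mem l _)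
      · intro a ha
        have hfin : ∑ i : Fin k, (l.get (Fin.cast hlen.symm i)).count a
            = ∑ j, M j a := by
          rw [← hsum a, ← hsum' a]
          have h1 : ∑ i : Fin k, (l.get (Fin.cast hlen.symm i)).count a
              = ∑ i : Fin l.length, (l.get i).count a :=
            (Fintype.sum_equiv (finCongr hlen) _ _ (fun i => rfl)).symm
          rw [h1]
          have h2 : (ws'.map (fun L => L.count a)).sum
              = ((l.map (fun L => L.count a)) : List ℕ).sum := by
            conv_lhs => rw [← Multiset.coe_toList ws']
            rw [Multiset.map_coe, Multiset.sum_coe]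
          rw [h2, ← Fin.sum_univ_fun_getElem l (fun L => L.count a)]
          simp
        rw [hfin]
        exact hbnd a ha
    · unfold kWalkWeight walkWeight
      apply le_of_eq
      have h3 : ∀ i, ((l.get (Fin.cast hlen.symm i)).map ω).sum
          = ∑ a, (l.get (Fin.cast hlen.symm i)).count a * ω a :=
        fun i => (count_weight ω _).symm
      calc ∑ i, ((l.get (Fin.cast hlen.symm i)).map ω).sum
          = ∑ i, ∑ a, (l.get (Fin.cast hlen.symm i)).count a * ω a :=
            Finset.sum_congr rfl (fun i _ => h3 i)
        _ = ∑ a, (∑ i : Fin k, (l.get (Fin.cast hlen.symm i)).count a) * ω a := by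
            rw [Finset.sum_comm]
            exact Finset.sum_congr rfl (fun a _ => by rw [Finset.sum_mul])
        _ = ∑ a, (∑ j, M j a) * ω a := by
            apply Finset.sum_congr rfl
            intro a _
            congr 1
            rw [← hsum a, ← hsum' a]
            have h1 : ∑ i : Fin k, (l.get (Fin.cast hlen.symm i)).count a
                = ∑ i : Fin l.length, (l.get i).count a :=
              (Fintype.sum_equiv (finCongr hlen) _ _ (fun i => rfl)).symm
            rw [h1]
            have h2 : (ws'.map (fun L => L.count a)).sum
                = ((l.map (fun L => L.count a)) : List ℕ).sum := by
              conv_lhs => rw [← Multiset.coe_toList ws']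
              rw [Multiset.map_coe, Multiset.sum_coe]
            rw [h2, ← Fin.sum_univ_fun_getElem l (fun L => L.count a)]
            simp
        _ = ∑ a, ∑ j, M j a * ω a :=
            Finset.sum_congr rfl (fun a _ => Finset.sum_mul _ _ _)
        _ = ∑ j, ∑ a, M j a * ω a := Finset.sum_comm

end S11I

theorem stmt11 {V : Type} [Fintype V] [DecidableEq V] (A : Finset (V × V))
    (ω : V × V → ℕ) (hloop : ∀ v : V, (v, v) ∉ A) (hconn : (UGraph A).Connected)
    (b c k : ℕ) (hbc : b ≤ c) (hk : 1 ≤ k)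
    (n : ℕ) (ν : Fin n ≃ V) :
    chi A ω b c k ν n (fun _ _ => 0) Finset.univ =
      sInf {ρ : ℕ∞ | ∃ W : Fin k → List (V × V),
        IsDWCP A b c k W ∧ ρ = (kWalkWeight ω W : ℕ∞)} := by
  classical
  have hEbag : Ebag A ν n = ∅ := by
    rw [Ebag, Finset.filter_eq_empty_iff]
    intro a ha hcon
    rcases hcon with ⟨h1, h2⟩ | ⟨h1, h2⟩
    · exact absurd (ν.symm a.2).is_lt (by omega)
    · exact absurd (ν.symm a.1).is_lt (by omega)
  have hgam : gam A ν n = A :=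
    Finset.filter_true_of_mem (fun a ha => Or.inl (ν.symm a.1).is_lt)
  apply le_antisymm
  · apply sInf_le_sInf
    rintro ρ ⟨W, hW, rfl⟩
    refine ⟨fun j a => (W j).count a, ?_, ?_, ?_, ?_, ?_, ?_⟩
    · intro j a hcnt
      rw [hgam]
      apply (hW.1 j).2.1 a
      by_contra hm
      exact hcnt (List.count_eq_zero_of_not_mem hm)
    · intro a ha
      rw [hEbag] at ha
      exact absurd ha (Finset.notMem_empty a)
    · intro a ha
      rw [hgam] at ha
      exact hW.2 a ha
    · intro h _ j _
      exact S11G.walk_bal (hW.1 j).2 (ν h)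
    · intro j
      simp only [Finset.mem_univ, iff_true]
      obtain ⟨x, hx⟩ := List.exists_mem_of_ne_nil _ (hW.1 j).1
      refine ⟨x, ?_⟩
      have := List.count_pos_iff.2 hx
      omega
    · unfold kWalkWeight walkWeight
      norm_cast
      exact Finset.sum_congr rfl (fun j _ => (S11C.count_weight ω (W j)).symm)
  · apply le_sInf
    rintro ρ ⟨M, h1, h2, h3, h4, h5, rfl⟩
    have hsupp : ∀ j a, M j a ≠ 0 → a ∈ A := by
      intro j a h
      rw [← hgam]
      exact h1 j a h
    have hbnd : ∀ a ∈ A, b ≤ ∑ j, M j a ∧ ∑ j, M j a ≤ c := by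
      intro a ha
      exact h3 a (by rw [hgam]; exact ha)
    have hbal : ∀ j v, ∑ u, M j (u, v) = ∑ u, M j (v, u) := by
      intro j v
      have := h4 (ν.symm v) (ν.symm v).is_lt j (Finset.mem_univ j)
      rwa [Equiv.apply_symm_apply] at this
    have hne : ∀ j, ∃ a, M j a ≠ 0 := fun j => (h5 j).2 (Finset.mem_univ j)
    obtain ⟨W, hDW, hle⟩ := S11I.hard ω hconn b c k hk M hsupp hbnd hbal hne
    refine le_trans (sInf_le ⟨W, hDW, rfl⟩) ?_
    exact_mod_cast hle
end
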